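/- arXiv:0711.4491 — 4 statements merged into one kernel-verified Lean document; each statement's English description precedes it below -/
import Mathlib

section
/- Let η be a real-valued random variable with E η < 0, and let h : ℝ → ℝ be a non-decreasing function that is concave on some interval [x_0, ∞), satisfies h(x) = o(x) as x → ∞, and h(x) ≥ ln x for all sufficiently large x. If E e^{h(η)} < ∞, then there exists x_1 such that E e^{h(x+η)} ≤ e^{h(x)} for all x > x_1. -/
open MeasureTheory ProbabilityTheory Filter Real Set
open scoped ENNReal
open scoped Topology


private lemma exp_le_quad {u : ℝ} (hu : u ≤ 1/2) : Real.exp u ≤ 1 + u + 2*u^2 := by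
  have h1 : (0:ℝ) < 1 - u := by linarith
  have h3 : (-u) + 1 ≤ Real.exp (-u) := Real.add_one_le_exp (-u)
  have h4 : Real.exp (-u) * Real.exp u = 1 := by
    rw [← Real.exp_add]; simp
  have h2 : Real.exp u * (1 - u) ≤ 1 := by nlinarith [Real.exp_pos u]
  have h5 : (1:ℝ) ≤ (1 + u + 2*u^2) * (1 - u) := by nlinarith [sq_nonneg u]
  exact (mul_le_mul_iff_of_pos_right h1).mp (h2.trans h5)

private lemma concave_chord {x0 : ℝ} {f : ℝ → ℝ} (hf : ConcaveOn ℝ (Set.Ici x0) f)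
    {a b u : ℝ} (hax : x0 ≤ a) (hau : a ≤ u) (hub : u ≤ b) :
    (b - u) * f a + (u - a) * f b ≤ (b - a) * f u := by
  rcases eq_or_lt_of_le (hau.trans hub) with hab | hab
  · have h1 : u = a := le_antisymm (hab ▸ hub) hau
    subst h1; rw [← hab]; simp
  · have hba : 0 < b - a := by linarith
    have hl : 0 ≤ (b - u) / (b - a) := by
      apply div_nonneg _ hba.le; linarith
    have hm : 0 ≤ (u - a) / (b - a) := by
      apply div_nonneg _ hba.le; linarith
    have hs : (b - u) / (b - a) + (u - a) / (b - a) = 1 := by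
      field_simp; ring
    have hbx : x0 ≤ b := hax.trans (hau.trans hub)
    have hcomb := hf.2 (Set.mem_Ici.mpr hax) (Set.mem_Ici.mpr hbx) hl hm hs
    have hpt : ((b - u) / (b - a)) • a + ((u - a) / (b - a)) • b = u := by
      simp only [smul_eq_mul]; field_simp; ring
    rw [hpt] at hcomb
    simp only [smul_eq_mul] at hcomb
    have := mul_le_mul_of_nonneg_left hcomb hba.le
    calc (b - u) * f a + (u - a) * f b
        = (b - a) * ((b - u) / (b - a) * f a + (u - a) / (b - a) * f b) := by
          field_simp
      _ ≤ (b - a) * f u := this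

private lemma concave_slope_le {x0 : ℝ} {f : ℝ → ℝ} (hf : ConcaveOn ℝ (Set.Ici x0) f)
    {a b a' b' : ℝ} (hax : x0 ≤ a) (hab : a < b) (ha : a ≤ a') (hb : b ≤ b')
    (hab' : a' < b') :
    (f b' - f a') / (b' - a') ≤ (f b - f a) / (b - a) := by
  have hba : 0 < b - a := by linarith
  have hba' : 0 < b' - a' := by linarith
  have hab2 : a < b' := lt_of_lt_of_le hab hb
  have hba2 : 0 < b' - a := by linarith
  have c1 := concave_chord hf hax hab.le hb
  have c2 := concave_chord hf hax ha (le_of_lt hab')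
  have step2 : (f b' - f a') / (b' - a') ≤ (f b' - f a) / (b' - a) := by
    rw [div_le_div_iff₀ hba' hba2]
    nlinarith [c2]
  have step1 : (f b' - f a) / (b' - a) ≤ (f b - f a) / (b - a) := by
    rw [div_le_div_iff₀ hba2 hba]
    nlinarith [c1]
  exact step2.trans step1

set_option maxHeartbeats 1000000 in
/-- **Lemma 4.** Let `η` have negative mean and `h : ℝ → ℝ` be non-decreasing, eventually
concave, `h(x) = o(x)`, `h(x) ≥ ln x` eventually, and `E e^{h(η)} < ∞`. Then there is `x₁`
such that `E e^{h(x+η)} ≤ e^{h(x)}` for all `x > x₁`. -/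
theorem exp_moment_shift_decreasing
    {Ω : Type*} [MeasurableSpace Ω] (P : Measure Ω) [IsProbabilityMeasure P]
    (η : Ω → ℝ) (hηmeas : Measurable η)
    (hηint : Integrable η P) (hηmean : ∫ ω, η ω ∂P < 0)
    (h : ℝ → ℝ) (hmono : Monotone h)
    (hconc : ∃ x₀ : ℝ, ConcaveOn ℝ (Set.Ici x₀) h)
    (hlittleo : h =o[atTop] (fun x : ℝ => x))
    (hlog : ∀ᶠ x in atTop, Real.log x ≤ h x)
    (hfin : ∫⁻ ω, ENNReal.ofReal (Real.exp (h (η ω))) ∂P < ∞) :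
    ∃ x₁ : ℝ, ∀ x : ℝ, x₁ < x →
      ∫⁻ ω, ENNReal.ofReal (Real.exp (h (x + η ω))) ∂P
        ≤ ENNReal.ofReal (Real.exp (h x)) := by
  classical
  obtain ⟨x₀, hcon0⟩ := hconc
  have hhm : Measurable h := hmono.measurable
  set m : ℝ := ∫ ω, η ω ∂P with hm_def
  have hm : m < 0 := hηmean
  set c : ℝ := -m/4 with hc_def
  have hc : 0 < c := by rw [hc_def]; linarith
  -- concavity threshold
  set q : ℝ := max x₀ 1 with hq_def
  have hq1 : (1:ℝ) ≤ q := le_max_right _ _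
  have hq0 : (0:ℝ) < q := lt_of_lt_of_le one_pos hq1
  have hcon : ConcaveOn ℝ (Set.Ici q) h :=
    hcon0.subset (Set.Ici_subset_Ici.mpr (le_max_left _ _)) (convex_Ici _)
  -- log threshold
  obtain ⟨L0, hL0⟩ := Filter.eventually_atTop.mp hlog
  set L : ℝ := max L0 q with hL_def
  have hLq : q ≤ L := le_max_right _ _
  have hL1 : (1:ℝ) ≤ L := hq1.trans hLq
  have hLpos : (0:ℝ) < L := lt_of_lt_of_le one_pos hL1
  have hlogL : ∀ u : ℝ, L ≤ u → Real.log u ≤ h u :=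
    fun u hu => hL0 u ((le_max_left _ _).trans hu)
  -- integrability of exp (h (η ·))
  have hexpmeas : Measurable fun ω => Real.exp (h (η ω)) :=
    Real.measurable_exp.comp (hhm.comp hηmeas)
  have hexpint : Integrable (fun ω => Real.exp (h (η ω))) P := by
    refine ⟨hexpmeas.aestronglyMeasurable, ?_⟩
    rw [hasFiniteIntegral_iff_ofReal (Filter.Eventually.of_forall fun ω => (Real.exp_pos _).le)]
    exact hfin
  have hξint : Integrable (fun ω => η ω + c) P := hηint.add (integrable_const c)
  have hξabs : Integrable (fun ω => |η ω + c|) P := hξint.abs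
  -- moments
  set Epos : ℝ := ∫ ω, max (η ω + c) 0 ∂P with hEpos_def
  have hEposint : Integrable (fun ω => max (η ω + c) 0) P := hξint.pos_part
  have hEminint : Integrable (fun ω => min (η ω + c) 0) P := by
    have hrw : (fun ω => min (η ω + c) 0) = fun ω => -(max (-(η ω + c)) 0) := by
      funext ω; rw [← neg_zero, max_neg_neg, neg_neg, neg_zero]
    rw [hrw]; exact (hξint.neg.pos_part).neg
  set Emin : ℝ := ∫ ω, min (η ω + c) 0 ∂P with hEmin_def
  have hEsum : Emin + Epos = m + c := by
    rw [hEmin_def, hEpos_def, ← integral_add hEminint hEposint]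
    have hrw : (fun ω => min (η ω + c) 0 + max (η ω + c) 0) = fun ω => η ω + c := by
      funext ω; simpa using min_add_max (η ω + c) 0
    rw [hrw, integral_add hηint (integrable_const c), integral_const]
    simp [hm_def]
  have hEminnp : Emin ≤ 0 := integral_nonpos (fun ω => min_le_right _ _)
  set Babs : ℝ := ∫ ω, |η ω + c| ∂P with hBabs_def
  have hBabs0 : 0 ≤ Babs := integral_nonneg fun ω => abs_nonneg _
  have hEposB : Epos ≤ Babs :=
    integral_mono hEposint hξabs (fun ω => max_le (le_abs_self _) (abs_nonneg _))
  have hEminB : -Emin ≤ Babs := by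
    rw [hEmin_def, ← integral_neg]
    exact integral_mono hEminint.neg hξabs
      (fun ω => by
        simp only [Pi.neg_apply]
        rcases le_or_gt (η ω + c) 0 with hle | hlt
        · rw [min_eq_left hle]; exact le_of_eq (abs_of_nonpos hle).symm
        · rw [min_eq_right hlt.le]; simp [abs_nonneg])
  set B : ℝ := 6*Babs + 4*c + 1 with hB_def
  have hB0 : (0:ℝ) < B := by rw [hB_def]; linarith
  set ε : ℝ := min (1/4) ((-m)/(8*B)) with hε_def
  have hε0 : (0:ℝ) < ε := lt_min (by norm_num) (div_pos (by linarith) (by linarith))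
  have hε14 : ε ≤ 1/4 := min_le_left _ _
  have hεB : ε * B ≤ -m/8 := by
    have h1 : ε ≤ (-m)/(8*B) := min_le_right _ _
    have h2 : ε * B ≤ ((-m)/(8*B)) * B := mul_le_mul_of_nonneg_right h1 hB0.le
    calc ε * B ≤ ((-m)/(8*B)) * B := h2
    _ = -m/8 := by field_simp
  have hεlog : Real.log ε < 0 := Real.log_neg hε0 (by linarith)
  -- constants
  set c₂ : ℝ := h (q + c) - h q with hc₂_def
  have hc₂0 : 0 ≤ c₂ := sub_nonneg.mpr (hmono (by linarith))
  set C₅ : ℝ := 2 + ε - Real.log ε with hC₅_def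
  have hC₅2 : 2 ≤ C₅ := by rw [hC₅_def]; linarith
  set K₂ : ℝ := Real.exp (C₅ + c₂) with hK₂_def
  have hK₂0 : (0:ℝ) < K₂ := Real.exp_pos _
  -- truncation integrability
  have truncInt : ∀ a : ℝ,
      Integrable (fun ω => if η ω + c ≤ -a then -(η ω + c) else 0) P := by
    intro a
    have hmeas : Measurable fun ω => if η ω + c ≤ -a then -(η ω + c) else 0 :=
      Measurable.ite (measurableSet_le (hηmeas.add_const c) measurable_const)
        (hηmeas.add_const c).neg measurable_const
    refine Integrable.mono' hξabs hmeas.aestronglyMeasurable ?_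
    filter_upwards with ω
    by_cases hcase : η ω + c ≤ -a
    · simp only [if_pos hcase, Real.norm_eq_abs, abs_neg, le_refl]
    · simp only [if_neg hcase, norm_zero]; exact abs_nonneg _
  have truncExpInt : ∀ a : ℝ,
      Integrable (fun ω => if a < η ω then K₂ * Real.exp (h (η ω)) else 0) P := by
    intro a
    have hmeas : Measurable fun ω => if a < η ω then K₂ * Real.exp (h (η ω)) else 0 :=
      Measurable.ite (measurableSet_lt measurable_const hηmeas)
        (hexpmeas.const_mul K₂) measurable_const
    refine Integrable.mono' (hexpint.const_mul K₂) hmeas.aestronglyMeasurable ?_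
    filter_upwards with ω
    by_cases hcase : a < η ω
    · simp only [if_pos hcase, Real.norm_eq_abs]
      rw [abs_of_nonneg (by positivity)]
    · simp only [if_neg hcase, norm_zero]; positivity
  -- choice of A via dominated convergence
  have hm16 : (0:ℝ) < -m/16 := by linarith
  have tail1 : Tendsto
      (fun n : ℕ => ∫ ω, (if η ω + c ≤ -(n:ℝ) then -(η ω + c) else 0) ∂P)
      atTop (𝓝 0) := by
    have key := tendsto_integral_of_dominated_convergence (μ := P)
      (F := fun (n : ℕ) ω => if η ω + c ≤ -(n:ℝ) then -(η ω + c) else 0)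
      (f := fun _ => (0:ℝ)) (fun ω => |η ω + c|) ?_ ?_ ?_ ?_
    · simpa using key
    · intro n
      exact (Measurable.ite (measurableSet_le (hηmeas.add_const c) measurable_const)
        (hηmeas.add_const c).neg measurable_const).aestronglyMeasurable
    · exact hξabs
    · intro n
      filter_upwards with ω
      by_cases hcase : η ω + c ≤ -(n:ℝ)
      · simp only [if_pos hcase, Real.norm_eq_abs, abs_neg, le_refl]
      · simp only [if_neg hcase, norm_zero]; exact abs_nonneg _
    · filter_upwards with ω
      have hcast : Tendsto (fun n : ℕ => (n:ℝ)) atTop atTop :=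
        tendsto_natCast_atTop_atTop
      have hev : ∀ᶠ n : ℕ in atTop, -(η ω + c) < (n:ℝ) :=
        hcast.eventually_gt_atTop _
      refine Tendsto.congr' ?_ (tendsto_const_nhds (x := (0:ℝ)))
      filter_upwards [hev] with n hn
      rw [if_neg (by linarith : ¬ _)]
  obtain ⟨A₀, hA₀⟩ := (tail1.eventually_lt_const hm16).exists
  set A : ℝ := (A₀ : ℝ) + 1 with hA_def
  have hA1 : (1:ℝ) ≤ A := by rw [hA_def]; have := Nat.cast_nonneg (α := ℝ) A₀; linarith
  have hA0 : (0:ℝ) < A := lt_of_lt_of_le one_pos hA1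
  have hδA : ∫ ω, (if η ω + c ≤ -A then -(η ω + c) else 0) ∂P ≤ -m/16 := by
    refine le_trans (integral_mono (truncInt A) (truncInt (A₀:ℝ)) ?_) hA₀.le
    intro ω
    dsimp only
    by_cases hcase : η ω + c ≤ -A
    · rw [if_pos hcase, if_pos (by rw [hA_def] at hcase; linarith)]
    · rw [if_neg hcase]
      by_cases hcase2 : η ω + c ≤ -(A₀:ℝ)
      · rw [if_pos hcase2]; linarith
      · rw [if_neg hcase2]
  -- choice of M via dominated convergence
  have tail2 : Tendsto
      (fun n : ℕ => ∫ ω, (if (n:ℝ) < η ω then K₂ * Real.exp (h (η ω)) else 0) ∂P)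
      atTop (𝓝 0) := by
    have key := tendsto_integral_of_dominated_convergence (μ := P)
      (F := fun (n : ℕ) ω => if (n:ℝ) < η ω then K₂ * Real.exp (h (η ω)) else 0)
      (f := fun _ => (0:ℝ)) (fun ω => K₂ * Real.exp (h (η ω))) ?_ ?_ ?_ ?_
    · simpa using key
    · intro n
      exact (Measurable.ite (measurableSet_lt measurable_const hηmeas)
        (hexpmeas.const_mul K₂) measurable_const).aestronglyMeasurable
    · exact hexpint.const_mul K₂
    · intro n
      filter_upwards with ω
      by_cases hcase : (n:ℝ) < η ω
      · simp only [if_pos hcase, Real.norm_eq_abs]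
        rw [abs_of_nonneg (mul_nonneg hK₂0.le (Real.exp_pos _).le)]
      · simp only [if_neg hcase, norm_zero]
        exact mul_nonneg hK₂0.le (Real.exp_pos _).le
    · filter_upwards with ω
      have hcast : Tendsto (fun n : ℕ => (n:ℝ)) atTop atTop :=
        tendsto_natCast_atTop_atTop
      have hev : ∀ᶠ n : ℕ in atTop, η ω < (n:ℝ) :=
        hcast.eventually_gt_atTop _
      refine Tendsto.congr' ?_ (tendsto_const_nhds (x := (0:ℝ)))
      filter_upwards [hev] with n hn
      rw [if_neg (by linarith : ¬ _)]
  obtain ⟨M₁, hM₁⟩ := (tail2.eventually_lt_const hm16).exists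
  set M : ℝ := max ((M₁:ℝ) + c) (max (q + c) L) with hM_def
  have hMq : q + c ≤ M := le_trans (le_max_left _ _) (le_max_right _ _)
  have hML : L ≤ M := le_trans (le_max_right _ _) (le_max_right _ _)
  have hMM₁ : (M₁:ℝ) + c ≤ M := le_max_left _ _
  have hM0 : (0:ℝ) < M := by linarith
  have hτ : ∫ ω, (if M - c < η ω then K₂ * Real.exp (h (η ω)) else 0) ∂P ≤ -m/16 := by
    refine le_trans (integral_mono (truncExpInt (M - c)) (truncExpInt (M₁:ℝ)) ?_) hM₁.le
    intro ω
    dsimp only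
    by_cases hcase : M - c < η ω
    · rw [if_pos hcase, if_pos (by linarith)]
    · rw [if_neg hcase]
      by_cases hcase2 : (M₁:ℝ) < η ω
      · rw [if_pos hcase2]; exact mul_nonneg hK₂0.le (Real.exp_pos _).le
      · rw [if_neg hcase2]
  -- slope threshold
  set ρ : ℝ := min (min (ε/A) (ε/c)) (min (ε/M) (1/L)) with hρ_def
  have hρ0 : (0:ℝ) < ρ :=
    lt_min (lt_min (div_pos hε0 hA0) (div_pos hε0 hc))
      (lt_min (div_pos hε0 hM0) (div_pos one_pos hLpos))
  have hρA : ρ ≤ ε/A := le_trans (min_le_left _ _) (min_le_left _ _)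
  have hρc : ρ ≤ ε/c := le_trans (min_le_left _ _) (min_le_right _ _)
  have hρM : ρ ≤ ε/M := le_trans (min_le_right _ _) (min_le_left _ _)
  have hρL : ρ ≤ 1/L := le_trans (min_le_right _ _) (min_le_right _ _)
  have hslope_ev : ∀ᶠ w : ℝ in atTop, h w - h q ≤ ρ * (w - q) := by
    have h1 := hlittleo.def (show (0:ℝ) < ρ/2 by positivity)
    have h2 : ∀ᶠ w : ℝ in atTop, ρ*q - h q ≤ ρ/2 * w := by
      have ht : Tendsto (fun w : ℝ => ρ/2 * w) atTop atTop :=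
        Tendsto.const_mul_atTop (by positivity) tendsto_id
      exact ht.eventually_ge_atTop _
    filter_upwards [h1, h2, eventually_ge_atTop (0:ℝ)] with w hw1 hw2 hw3
    simp only [Real.norm_eq_abs] at hw1
    have h5 : h w ≤ ρ/2 * w := by
      have h6 := (le_abs_self (h w)).trans hw1
      rwa [abs_of_nonneg hw3] at h6
    linarith only [hw2, h5]
  obtain ⟨W₀, hW₀⟩ := Filter.eventually_atTop.mp hslope_ev
  -- the dominating function G
  obtain ⟨G, hGdef⟩ : ∃ G : Ω → ℝ, ∀ ω, G ω =
      (if -A < η ω + c then (1 - 2*ε) * min (η ω + c) 0 else 0)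
      + (1 + 4*ε) * (max (η ω + c) 0 + c)
      + (if M - c < η ω then K₂ * Real.exp (h (η ω)) else 0) :=
    ⟨_, fun ω => rfl⟩
  have hg1int : Integrable
      (fun ω => if -A < η ω + c then (1 - 2*ε) * min (η ω + c) 0 else 0) P := by
    have hmeas : Measurable fun ω =>
        if -A < η ω + c then (1 - 2*ε) * min (η ω + c) 0 else 0 :=
      Measurable.ite (measurableSet_lt measurable_const (hηmeas.add_const c))
        (((hηmeas.add_const c).min measurable_const).const_mul _) measurable_const
    refine Integrable.mono' hξabs hmeas.aestronglyMeasurable ?_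
    filter_upwards with ω
    by_cases hcase : -A < η ω + c
    · rw [if_pos hcase, Real.norm_eq_abs, abs_mul]
      have e1 : |1 - 2*ε| ≤ 1 := by rw [abs_of_nonneg (by linarith)]; linarith
      have e2 : |min (η ω + c) 0| ≤ |η ω + c| := by
        rcases le_or_gt (η ω + c) 0 with hle | hlt
        · rw [min_eq_left hle]
        · rw [min_eq_right hlt.le]; simp [abs_nonneg]
      calc |1 - 2*ε| * |min (η ω + c) 0| ≤ 1 * |η ω + c| :=
            mul_le_mul e1 e2 (abs_nonneg _) one_pos.le
      _ = |η ω + c| := one_mul _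
    · rw [if_neg hcase]; simp only [norm_zero]; exact abs_nonneg _
  have hg2int : Integrable (fun ω => (1 + 4*ε) * (max (η ω + c) 0 + c)) P :=
    (hEposint.add (integrable_const c)).const_mul _
  have hg3int : Integrable
      (fun ω => if M - c < η ω then K₂ * Real.exp (h (η ω)) else 0) P :=
    truncExpInt (M - c)
  have hGint : Integrable G P := by
    have : G = fun ω =>
        (if -A < η ω + c then (1 - 2*ε) * min (η ω + c) 0 else 0)
        + (1 + 4*ε) * (max (η ω + c) 0 + c)
        + (if M - c < η ω then K₂ * Real.exp (h (η ω)) else 0) := funext hGdef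
    rw [this]; exact (hg1int.add hg2int).add hg3int
  -- the integral of G is at most m/4 < 0
  have hGval : ∫ ω, G ω ∂P ≤ m/4 := by
    have hsplit : ∫ ω, G ω ∂P =
        (∫ ω, (if -A < η ω + c then (1 - 2*ε) * min (η ω + c) 0 else 0) ∂P)
        + (∫ ω, (1 + 4*ε) * (max (η ω + c) 0 + c) ∂P)
        + (∫ ω, (if M - c < η ω then K₂ * Real.exp (h (η ω)) else 0) ∂P) := by
      rw [show (fun ω => G ω) = fun ω =>
        (if -A < η ω + c then (1 - 2*ε) * min (η ω + c) 0 else 0)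
        + (1 + 4*ε) * (max (η ω + c) 0 + c)
        + (if M - c < η ω then K₂ * Real.exp (h (η ω)) else 0) from funext hGdef]
      have e3 := integral_add (hg1int.add hg2int) hg3int
      have e4 := integral_add hg1int hg2int
      simp only [Pi.add_apply] at e3
      rw [e3, e4]
    set δterm : ℝ := ∫ ω, (if η ω + c ≤ -A then -(η ω + c) else 0) ∂P with hδ_def
    have hδ0 : 0 ≤ δterm := by
      rw [hδ_def]
      apply integral_nonneg
      intro ω
      show (0:ℝ) ≤ if η ω + c ≤ -A then -(η ω + c) else 0
      by_cases hcase : η ω + c ≤ -A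
      · rw [if_pos hcase]; linarith
      · rw [if_neg hcase]
    have hI1 : ∫ ω, (if -A < η ω + c then (1 - 2*ε) * min (η ω + c) 0 else 0) ∂P
        = (1 - 2*ε) * (Emin + δterm) := by
      rw [hEmin_def, hδ_def, ← integral_add hEminint (truncInt A), ← integral_const_mul]
      congr 1
      funext ω
      by_cases hcase : η ω + c ≤ -A
      · rw [if_neg (by linarith), if_pos hcase,
          min_eq_left (by linarith : η ω + c ≤ 0)]
        ring
      · push_neg at hcase
        rw [if_pos hcase, if_neg (not_le.mpr hcase)]
        ring
    have hI2 : ∫ ω, (1 + 4*ε) * (max (η ω + c) 0 + c) ∂P = (1 + 4*ε) * (Epos + c) := by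
      rw [integral_const_mul, integral_add hEposint (integrable_const c), integral_const]
      simp [hEpos_def]
    rw [hsplit, hI1, hI2]
    have q1 : ε * (-Emin) ≤ ε * Babs := mul_le_mul_of_nonneg_left hEminB hε0.le
    have q2 : 0 ≤ ε * δterm := mul_nonneg hε0.le hδ0
    have q3 : ε * Epos ≤ ε * Babs := mul_le_mul_of_nonneg_left hEposB hε0.le
    have p1 : (1 - 2*ε) * (Emin + δterm) ≤ Emin + 2*(ε*Babs) + δterm := by
      linarith only [q1, q2]
    have p2 : (1 + 4*ε) * (Epos + c) ≤ Epos + c + 4*(ε*Babs) + 4*(ε*c) := by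
      linarith only [q3]
    have p3 : 2*(ε*Babs) + 4*(ε*Babs) + 4*(ε*c) ≤ ε * B := by
      rw [hB_def]; linarith only [hε0.le]
    clear_value δterm Emin Epos Babs B ε
    linarith only [p1, p2, p3, hδA, hτ, hEsum, hεB, hc_def]
  clear_value m c q L Epos Emin Babs B ε c₂ C₅ K₂ A M ρ
  -- MAIN: the per-x estimate
  refine ⟨max W₀ (max (q + A) (max L (max c 1))) + c, fun x hx => ?_⟩
  set y : ℝ := x - c with hy_def
  have hyc : y + c = x := by rw [hy_def]; ring
  have hyW₀ : W₀ ≤ y := by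
    have := le_max_left W₀ (max (q + A) (max L (max c 1)))
    rw [hy_def]; linarith
  have hyqA : q + A ≤ y := by
    have := le_trans (le_max_left (q+A) (max L (max c 1))) (le_max_right W₀ _)
    rw [hy_def]; linarith
  have hyL : L ≤ y := by
    have := le_trans (le_trans (le_max_left L (max c 1)) (le_max_right (q+A) _))
      (le_max_right W₀ _)
    rw [hy_def]; linarith
  have hycy : c ≤ y := by
    have := le_trans (le_trans (le_trans (le_max_left c 1) (le_max_right L _))
      (le_max_right (q+A) _)) (le_max_right W₀ _)
    rw [hy_def]; linarith
  have hy1 : (1:ℝ) ≤ y := by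
    have := le_trans (le_trans (le_trans (le_max_right c 1) (le_max_right L _))
      (le_max_right (q+A) _)) (le_max_right W₀ _)
    rw [hy_def]; linarith
  have hyq : q ≤ y := by linarith
  have hy0 : (0:ℝ) < y := lt_of_lt_of_le one_pos hy1
  -- slope s on [y, y+c]
  set s : ℝ := (h (y + c) - h y) / c with hs_def
  have hscval : s * c = h (y + c) - h y := div_mul_cancel₀ _ (ne_of_gt hc)
  clear_value y
  have hs0 : 0 ≤ s := div_nonneg (sub_nonneg.mpr (hmono (by linarith))) hc.le
  clear_value s
  have hsρ : s ≤ ρ := by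
    have hsl := concave_slope_le hcon (a := q) (b := y + c) (a' := y) (b' := y + c)
      le_rfl (by linarith) hyq le_rfl (by linarith)
    rw [show y + c - y = c from by ring] at hsl
    rw [← hs_def] at hsl
    have h2 : h (y + c) - h q ≤ ρ * (y + c - q) := hW₀ (y + c) (by linarith)
    have h3 : (h (y + c) - h q) / (y + c - q) ≤ ρ := by
      rw [div_le_iff₀ (by linarith : (0:ℝ) < y + c - q)]
      linarith
    exact hsl.trans h3
  have hsA : s * A ≤ ε := by
    have : s ≤ ε / A := hsρ.trans hρA
    calc s * A ≤ (ε/A) * A := mul_le_mul_of_nonneg_right this hA0.le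
    _ = ε := by field_simp
  have hscε : s * c ≤ ε := by
    have : s ≤ ε / c := hsρ.trans hρc
    calc s * c ≤ (ε/c) * c := mul_le_mul_of_nonneg_right this hc.le
    _ = ε := by field_simp
  have hsM : s * M ≤ ε := by
    have : s ≤ ε / M := hsρ.trans hρM
    calc s * M ≤ (ε/M) * M := mul_le_mul_of_nonneg_right this hM0.le
    _ = ε := by field_simp
  have hsL : s * L ≤ 1 := by
    have : s ≤ 1 / L := hsρ.trans hρL
    calc s * L ≤ (1/L) * L := mul_le_mul_of_nonneg_right this hLpos.le
    _ = 1 := by field_simp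
  -- chord inequalities at y
  have P2 : ∀ u : ℝ, y + c ≤ u → h u ≤ h y + s * (u - y) := by
    intro u hu
    rcases eq_or_lt_of_le hu with heq | hlt
    · rw [← heq]
      have e : s * (y + c - y) = s * c := by ring
      linarith [hscval, e]
    · have hsl := concave_slope_le hcon (a := y) (b := y + c) (a' := y + c) (b' := u)
        hyq (by linarith) (by linarith) hlt.le hlt
      rw [show y + c - y = c from by ring] at hsl
      rw [← hs_def] at hsl
      have h2 : h u - h (y + c) ≤ s * (u - (y + c)) :=
        (div_le_iff₀ (by linarith : (0:ℝ) < u - (y + c))).mp hsl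
      have e : s * (u - y) = s * (u - (y + c)) + s * c := by ring
      linarith [hscval]
  have P1 : ∀ u : ℝ, q ≤ u → u ≤ y → h u ≤ h y + s * (u - y) := by
    intro u hqu huy
    rcases eq_or_lt_of_le huy with heq | hlt
    · rw [heq]; simp
    · have hsl := concave_slope_le hcon (a := u) (b := y) (a' := y) (b' := y + c)
        hqu hlt huy (by linarith) (by linarith)
      rw [show y + c - y = c from by ring] at hsl
      rw [← hs_def] at hsl
      have h2 : s * (y - u) ≤ h y - h u :=
        (le_div_iff₀ (by linarith : (0:ℝ) < y - u)).mp hsl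
      have e : s * (u - y) = -(s * (y - u)) := by ring
      linarith
  -- positivity of s and lower bound
  have hslow : Real.exp (-(h y + 1)) ≤ s := by
    set U : ℝ := Real.exp (h y + 1) with hU_def
    have hUpos : 0 < U := Real.exp_pos _
    clear_value U
    have hyexp : y ≤ Real.exp (h y) := by
      calc y = Real.exp (Real.log y) := (Real.exp_log hy0).symm
      _ ≤ Real.exp (h y) := Real.exp_le_exp.mpr (hlogL y hyL)
    have he2 : (2:ℝ) ≤ Real.exp 1 := by
      have := Real.exp_one_gt_d9
      linarith
    have hU2 : U = Real.exp (h y) * Real.exp 1 := by rw [hU_def, ← Real.exp_add]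
    have hyU : y + c ≤ U := by
      have h7 : y * 2 ≤ y * Real.exp 1 := mul_le_mul_of_nonneg_left he2 hy0.le
      have h8 : y * Real.exp 1 ≤ Real.exp (h y) * Real.exp 1 :=
        mul_le_mul_of_nonneg_right hyexp (Real.exp_pos 1).le
      rw [hU2]
      linarith only [h7, h8, hycy]
    have hLU : L ≤ U := by linarith only [hyL, hc.le, hyU]
    have hP2U := P2 U hyU
    have hlogU : Real.log U ≤ h U := hlogL U hLU
    have hlogUval : Real.log U = h y + 1 := by rw [hU_def, Real.log_exp]
    have h1 : 1 ≤ s * U := by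
      have e1 : s * (U - y) = s * U - s * y := by ring
      have e2 : 0 ≤ s * y := mul_nonneg hs0 hy0.le
      linarith only [hP2U, hlogU, hlogUval, e1, e2]
    have hUinv : Real.exp (-(h y + 1)) = U⁻¹ := by rw [hU_def, ← Real.exp_neg]
    rw [hUinv]
    have h2 : U⁻¹ * U = 1 := inv_mul_cancel₀ (ne_of_gt hUpos)
    exact (mul_le_mul_iff_of_pos_right hUpos).mp (by rw [h2]; exact h1)
  have hspos : 0 < s := lt_of_lt_of_le (Real.exp_pos _) hslow
  have hlogs : -(h y + 1) ≤ Real.log s := by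
    calc -(h y + 1) = Real.log (Real.exp (-(h y + 1))) := (Real.log_exp _).symm
    _ ≤ Real.log s := Real.log_le_log (Real.exp_pos _) hslow
  -- key lemma
  have KL : s * y - h y ≤ 2 + Real.log s := by
    by_cases hsy : s * y ≤ 1
    · linarith only [hsy, hlogs]
    · push_neg at hsy
      have h3 : s * s⁻¹ = 1 := mul_inv_cancel₀ (ne_of_gt hspos)
      have hu₁y : s⁻¹ ≤ y := by
        have h2 : s * s⁻¹ < s * y := by rw [h3]; exact hsy
        exact (lt_of_mul_lt_mul_left h2 hs0).le
      have hu₁L : L ≤ s⁻¹ := by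
        have h4 : L ≤ 1 / s := (le_div_iff₀ hspos).mpr (by linarith only [hsL])
        rwa [one_div] at h4
      have hP1u := P1 s⁻¹ (hLq.trans hu₁L) hu₁y
      have hlogu : Real.log s⁻¹ ≤ h s⁻¹ := hlogL _ hu₁L
      have hlu : Real.log s⁻¹ = -Real.log s := Real.log_inv s
      have he : s * (s⁻¹ - y) = 1 - s*y := by rw [mul_sub, h3]
      linarith only [hP1u, hlogu, hlu, he]
  -- pointwise master inequality
  have master : ∀ ω : Ω,
      Real.exp (h (y + c + η ω)) ≤ Real.exp (h y) * (1 + s * G ω) := by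
    intro ω
    set t : ℝ := η ω with ht_def
    clear_value t
    rw [hGdef ω, ← ht_def]
    rw [show y + c + t = y + (t + c) from by ring]
    have hG2nn : 0 ≤ (1 + 4*ε) * (max (t + c) 0 + c) := by
      apply mul_nonneg (by linarith)
      have := le_max_right (t + c) 0
      linarith
    have hG3nn : 0 ≤ (if M - c < t then K₂ * Real.exp (h t) else 0) := by
      split_ifs
      · positivity
      · exact le_refl 0
    by_cases h1 : t + c ≤ -A
    · -- region 1 : far negative
      have hmle : h (y + (t + c)) ≤ h y := hmono (by linarith)
      have hg1 : (if -A < t + c then (1 - 2*ε) * min (t + c) 0 else 0) = 0 :=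
        if_neg (by linarith)
      rw [hg1]
      have hnn : 0 ≤ s * (0 + (1 + 4*ε) * (max (t + c) 0 + c)
          + (if M - c < t then K₂ * Real.exp (h t) else 0)) := by
        apply mul_nonneg hs0; linarith
      calc Real.exp (h (y + (t + c))) ≤ Real.exp (h y) := Real.exp_le_exp.mpr hmle
      _ = Real.exp (h y) * 1 := (mul_one _).symm
      _ ≤ _ := by
          apply mul_le_mul_of_nonneg_left _ (Real.exp_pos (h y)).le
          linarith
    · push_neg at h1
      by_cases h2 : t + c ≤ 0
      · -- region 2 : moderate negative
        have hq_le : q ≤ y + (t + c) := by linarith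
        have hP := P1 (y + (t + c)) hq_le (by linarith)
        rw [show y + (t + c) - y = t + c from by ring] at hP
        have hw : 0 ≤ s * (-(t + c)) := mul_nonneg hs0 (by linarith)
        have hw2 : s * (-(t + c)) ≤ ε := by
          have : s * (-(t+c)) ≤ s * A := mul_le_mul_of_nonneg_left (by linarith) hs0
          linarith
        have he0 : s*(-(t+c)) = -(s*(t+c)) := by ring
        have hquad : Real.exp (s * (t + c)) ≤ 1 + s*(t+c) + 2*(s*(t+c))^2 :=
          exp_le_quad (by linarith only [hw, he0])
        have hsq : 2*(s*(t+c))^2 ≤ 2*ε*(s*(-(t+c))) := by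
          have h9 := mul_le_mul_of_nonneg_right hw2 hw
          have he1 : (s*(t+c))^2 = (s*(-(t+c))) * (s*(-(t+c))) := by ring
          linarith only [h9, he1]
        have hg1 : (if -A < t + c then (1 - 2*ε) * min (t + c) 0 else 0)
            = (1 - 2*ε) * (t + c) := by
          rw [if_pos h1, min_eq_left h2]
        rw [hg1]
        calc Real.exp (h (y + (t + c)))
            ≤ Real.exp (h y + s * (t + c)) := Real.exp_le_exp.mpr hP
        _ = Real.exp (h y) * Real.exp (s * (t + c)) := Real.exp_add _ _
        _ ≤ Real.exp (h y) * (1 + s*(t+c) + 2*(s*(t+c))^2) :=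
            mul_le_mul_of_nonneg_left hquad (Real.exp_pos _).le
        _ ≤ _ := by
            apply mul_le_mul_of_nonneg_left _ (Real.exp_pos (h y)).le
            linarith only [hsq, mul_nonneg hs0 hG2nn, mul_nonneg hs0 hG3nn]
      · push_neg at h2
        by_cases h4 : s * (t + c) ≤ ε
        · -- region 3 : moderate positive
          have hub : h (y + (t + c)) ≤ h y + s * ((t + c) + c) := by
            by_cases h3 : t + c ≤ c
            · have hm1 : h (y + (t + c)) ≤ h (y + c) := hmono (by linarith)
              have hstc : 0 ≤ s * (t + c) := mul_nonneg hs0 h2.le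
              have e : s * ((t+c) + c) = s * (t+c) + s * c := by ring
              linarith [hscval]
            · push_neg at h3
              have hP := P2 (y + (t + c)) (by linarith)
              rw [show y + (t + c) - y = t + c from by ring] at hP
              have hsc' : 0 ≤ s * c := mul_nonneg hs0 hc.le
              have e : s * ((t+c) + c) = s * (t+c) + s * c := by ring
              linarith
          have hsmall : s * ((t + c) + c) ≤ 1/2 := by
            have e : s * ((t+c) + c) = s * (t+c) + s * c := by ring
            linarith
          have hquad : Real.exp (s * ((t+c)+c)) ≤ 1 + s*((t+c)+c) + 2*(s*((t+c)+c))^2 :=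
            exp_le_quad hsmall
          have hnn : 0 ≤ s * ((t+c)+c) := by
            apply mul_nonneg hs0; linarith
          have hsq : 2*(s*((t+c)+c))^2 ≤ 4*ε*(s*((t+c)+c)) := by
            have hle : s*((t+c)+c) ≤ 2*ε := by
              have e : s * ((t+c) + c) = s * (t+c) + s * c := by ring
              linarith only [e, h4, hscε]
            have h9 := mul_le_mul_of_nonneg_right hle hnn
            have he1 : (s*((t+c)+c))^2 = (s*((t+c)+c)) * (s*((t+c)+c)) := by ring
            linarith only [h9, he1]
          have hg1 : (if -A < t + c then (1 - 2*ε) * min (t + c) 0 else 0) = 0 := by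
            rw [if_pos h1, min_eq_right h2.le, mul_zero]
          have hmax : max (t + c) 0 = t + c := max_eq_left h2.le
          rw [hg1, hmax]
          calc Real.exp (h (y + (t + c)))
              ≤ Real.exp (h y + s * ((t + c) + c)) := Real.exp_le_exp.mpr hub
          _ = Real.exp (h y) * Real.exp (s * ((t+c)+c)) := Real.exp_add _ _
          _ ≤ Real.exp (h y) * (1 + s*((t+c)+c) + 2*(s*((t+c)+c))^2) :=
              mul_le_mul_of_nonneg_left hquad (Real.exp_pos _).le
          _ ≤ _ := by
              apply mul_le_mul_of_nonneg_left _ (Real.exp_pos (h y)).le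
              linarith only [hsq, mul_nonneg hs0 hG3nn]
        · -- region 5 : large positive
          push_neg at h4
          have hξpos : 0 < t + c := h2
          have hξM : M < t + c := by
            by_contra hcon2
            push_neg at hcon2
            have h9 : s * (t + c) ≤ s * M := mul_le_mul_of_nonneg_left hcon2 hs0
            linarith only [h9, hsM, h4]
          have htq : q ≤ t := by linarith
          have hkey : h (y + (t + c)) ≤ h y + Real.log s + h (t + c) + C₅ := by
            by_cases h5 : t + c ≤ y + c
            · -- chord case
              set a : ℝ := ε / s with ha_def
              have haM : M ≤ a := by
                rw [ha_def, le_div_iff₀ hspos]; linarith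
              have haL : L ≤ a := hML.trans haM
              have haq : q ≤ a := hLq.trans haL
              have hsa : s * a = ε := by
                rw [ha_def]; field_simp
              have haξ : a ≤ t + c := by
                rw [ha_def, div_le_iff₀ hspos]; linarith
              clear_value a
              have hloga : Real.log a ≤ h a := hlogL a haL
              have hlogaval : Real.log a = Real.log ε - Real.log s := by
                rw [ha_def, Real.log_div (ne_of_gt hε0) (ne_of_gt hspos)]
              have hEa : s * a - h a ≤ Real.log s + C₅ := by
                rw [hsa, hC₅_def]; linarith
              have hEz : s * (y + c) - h (y + c) ≤ Real.log s + C₅ := by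
                have e : h (y + c) = h y + s * c := by linarith [hscval]
                rw [e]
                have e2 : s * (y + c) - (h y + s * c) = s * y - h y := by ring
                rw [e2]; linarith [KL]
              rcases eq_or_lt_of_le h5 with he5 | hlt5
              · rw [he5]
                have := P2 (y + (t+c)) (by linarith)
                rw [show y + (t + c) - y = t + c from by ring] at this
                rw [← he5] at hEz ⊢
                have e3 : s * (t + c) - h (t + c) ≤ Real.log s + C₅ := hEz
                linarith
              · have hch := concave_chord hcon (a := a) (b := y + c) (u := t + c)
                  haq haξ h5
                have hza : 0 < (y + c) - a := by linarith
                have hw1 : (0:ℝ) ≤ (y + c) - (t + c) := by linarith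
                have hw2 : (0:ℝ) ≤ (t + c) - a := by linarith
                have hEξ : s * (t + c) - h (t + c) ≤ Real.log s + C₅ := by
                  have hbig : ((y+c) - a) * (s*(t+c) - h (t+c))
                      ≤ ((y+c) - a) * (Real.log s + C₅) := by
                    linarith only [hch, mul_le_mul_of_nonneg_left hEa hw1,
                      mul_le_mul_of_nonneg_left hEz hw2]
                  exact (mul_le_mul_iff_of_pos_left hza).mp hbig
                have hP := P2 (y + (t+c)) (by linarith)
                rw [show y + (t + c) - y = t + c from by ring] at hP
                linarith
            · -- far case
              push_neg at h5
              have hsl := concave_slope_le hcon (a := y) (b := y + c)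
                (a' := t + c) (b' := (t + c) + y)
                hyq (by linarith) (by linarith) (by linarith) (by linarith)
              rw [show (t + c) + y - (t + c) = y from by ring,
                show y + c - y = c from by ring] at hsl
              rw [← hs_def] at hsl
              have h6 : h ((t + c) + y) - h (t + c) ≤ s * y :=
                (div_le_iff₀ hy0).mp hsl
              have he : y + (t + c) = (t + c) + y := by ring
              rw [he]
              linarith only [h6, KL, hC₅2]
          have hP5 : h (t + c) ≤ h t + c₂ := by
            have hsl := concave_slope_le hcon (a := q) (b := q + c)
              (a' := t) (b' := t + c)
              le_rfl (by linarith) htq (by linarith) (by linarith)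
            rw [show t + c - t = c from by ring, show q + c - q = c from by ring] at hsl
            have := (div_le_div_iff_of_pos_right hc).mp hsl
            rw [hc₂_def]; linarith
          have hg1 : (if -A < t + c then (1 - 2*ε) * min (t + c) 0 else 0) = 0 := by
            rw [if_pos (by linarith), min_eq_right h2.le, mul_zero]
          have hg3 : (if M - c < t then K₂ * Real.exp (h t) else 0)
              = K₂ * Real.exp (h t) := if_pos (by linarith)
          rw [hg1, hg3]
          calc Real.exp (h (y + (t + c)))
              ≤ Real.exp (h y + Real.log s + (h t + c₂) + C₅) := by
                apply Real.exp_le_exp.mpr; linarith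
          _ = Real.exp (h y) * (s * (K₂ * Real.exp (h t))) := by
              rw [show h y + Real.log s + (h t + c₂) + C₅
                  = (h y) + ((Real.log s) + ((h t) + (C₅ + c₂))) from by ring]
              rw [Real.exp_add, Real.exp_add, Real.exp_add, Real.exp_log hspos,
                ← hK₂_def]
              ring
          _ ≤ _ := by
              apply mul_le_mul_of_nonneg_left _ (Real.exp_pos (h y)).le
              have hnn2 : 0 ≤ s * ((1 + 4*ε) * (max (t + c) 0 + c)) :=
                mul_nonneg hs0 hG2nn
              linarith only [hnn2]
  -- positivity of the dominating integrand
  have hPos : ∀ ω : Ω, 0 < 1 + s * G ω := by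
    intro ω
    have h1 : 0 < Real.exp (h (y + c + η ω)) := Real.exp_pos _
    have h3 : 0 < Real.exp (h y) * (1 + s * G ω) := lt_of_lt_of_le h1 (master ω)
    by_contra hneg
    push_neg at hneg
    have h4 : Real.exp (h y) * (1 + s * G ω) ≤ Real.exp (h y) * 0 :=
      mul_le_mul_of_nonneg_left hneg (Real.exp_pos _).le
    rw [mul_zero] at h4
    linarith only [h3, h4]
  -- integrability of the dominating integrand
  have hIint : Integrable (fun ω => Real.exp (h y) * (1 + s * G ω)) P :=
    (((integrable_const (1:ℝ)).add (hGint.const_mul s)).const_mul _)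
  -- final computation
  rw [← hyc]
  calc ∫⁻ ω, ENNReal.ofReal (Real.exp (h (y + c + η ω))) ∂P
      ≤ ∫⁻ ω, ENNReal.ofReal (Real.exp (h y) * (1 + s * G ω)) ∂P :=
        lintegral_mono fun ω => ENNReal.ofReal_le_ofReal (master ω)
  _ = ENNReal.ofReal (∫ ω, Real.exp (h y) * (1 + s * G ω) ∂P) :=
      (ofReal_integral_eq_lintegral_ofReal hIint
        (Filter.Eventually.of_forall fun ω =>
          mul_nonneg (Real.exp_pos _).le (hPos ω).le)).symm
  _ ≤ ENNReal.ofReal (Real.exp (h y)) := by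
      apply ENNReal.ofReal_le_ofReal
      rw [integral_const_mul]
      have hint2 : ∫ ω, (1 + s * G ω) ∂P = 1 + s * ∫ ω, G ω ∂P := by
        rw [integral_add (integrable_const 1) (hGint.const_mul s), integral_const,
          integral_const_mul]
        simp
      rw [hint2]
      have h4 : ∫ ω, G ω ∂P ≤ 0 := by linarith only [hGval, hm]
      have h2 : s * ∫ ω, G ω ∂P ≤ 0 := mul_nonpos_iff.mpr (Or.inl ⟨hs0, h4⟩)
      have h3 : 1 + s * ∫ ω, G ω ∂P ≤ 1 := by linarith only [h2]
      calc Real.exp (h y) * (1 + s * ∫ ω, G ω ∂P)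
          ≤ Real.exp (h y) * 1 := mul_le_mul_of_nonneg_left h3 (Real.exp_pos _).le
      _ = Real.exp (h y) := mul_one _
  _ ≤ ENNReal.ofReal (Real.exp (h (y + c))) :=
      ENNReal.ofReal_le_ofReal (Real.exp_le_exp.mpr (hmono (by linarith)))
end

section
/- Let χ ≥ 0 be any random variable. Then there exists a differentiable concave function g : [0,∞) → [0,∞) with g(0) = 0, g'(x) ≤ 1 for all x, g(x) → ∞ as x → ∞, and E e^{g(χ)} < ∞. -/
open MeasureTheory ProbabilityTheory Filter Real Set
open scoped ENNReal

noncomputable def clampR (x : ℝ) : ℝ := max 0 (min 1 x)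

lemma clampR_nonneg (x : ℝ) : 0 ≤ clampR x := le_max_left _ _
lemma clampR_le_one (x : ℝ) : clampR x ≤ 1 := max_le zero_le_one (min_le_left _ _)
lemma clampR_mono : Monotone clampR := fun a b hab =>
  max_le_max le_rfl (min_le_min le_rfl hab)
lemma clampR_continuous : Continuous clampR :=
  continuous_const.max (continuous_const.min continuous_id)
lemma clampR_eq_one {x : ℝ} (hx : 1 ≤ x) : clampR x = 1 := by
  simp [clampR, min_eq_left hx]
lemma clampR_eq_zero {x : ℝ} (hx : x ≤ 0) : clampR x = 0 := by
  have : min 1 x ≤ 0 := le_trans (min_le_right _ _) hx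
  simp [clampR, max_eq_left this]

lemma aux_g (d m : ℕ → ℕ) (hd2 : ∀ k, 2 ≤ d k) (hdmono : Monotone d)
    (hm0 : m 0 = 0) (hmsucc : ∀ k, m (k + 1) = m k + d k) :
    ∃ g : ℝ → ℝ, ConcaveOn ℝ (Set.Ici (0 : ℝ)) g ∧
      (∀ x ∈ Set.Ici (0 : ℝ), 0 ≤ g x) ∧
      g 0 = 0 ∧
      DifferentiableOn ℝ g (Set.Ici (0 : ℝ)) ∧
      (∀ x ∈ Set.Ici (0 : ℝ), derivWithin g (Set.Ici (0 : ℝ)) x ≤ 1) ∧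
      Tendsto g atTop atTop ∧ Monotone g ∧
      (∀ k : ℕ, ∀ x : ℝ, x ≤ (m (k + 1) : ℝ) → g x ≤ (k : ℝ) + 1) := by
  -- basic facts about m
  have hmmono : Monotone m := monotone_nat_of_le_succ fun k => by
    rw [hmsucc]; exact Nat.le_add_right _ _
  have hm2 : ∀ k, 2 * k ≤ m k := by
    intro k; induction k with
    | zero => simp
    | succ k ih =>
      rw [hmsucc]
      have := hd2 k
      omega
  -- the slope-denominator function
  set F : ℕ → ℝ → ℝ := fun K t =>
    (d 0 : ℝ) + ∑ j ∈ Finset.range K, ((d (j + 1) : ℝ) - (d j : ℝ)) *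
      clampR (t - ((m (j + 1) : ℝ) - 1)) with hF
  set h : ℝ → ℝ := fun t => F ⌈t⌉₊ t with hhdef
  -- stability of F
  have hstab : ∀ K K' : ℕ, K ≤ K' → ∀ t : ℝ, t ≤ (m (K + 1) : ℝ) - 1 →
      F K' t = F K t := by
    intro K K' hKK' t ht
    simp only [hF]
    congr 1
    refine (Finset.sum_subset (Finset.range_subset_range.2 hKK') ?_).symm
    intro j hj hj'
    simp only [Finset.mem_range, not_lt] at hj hj'
    have h1 : (m (K + 1) : ℝ) ≤ (m (j + 1) : ℝ) := by
      exact_mod_cast hmmono (by omega)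
    have : t - ((m (j + 1) : ℝ) - 1) ≤ 0 := by linarith
    rw [clampR_eq_zero this, mul_zero]
  have hceil : ∀ K : ℕ, ∀ t : ℝ, t ≤ (K : ℝ) → t ≤ (m (K + 1) : ℝ) - 1 := by
    intro K t ht
    have : (2 * (K + 1) : ℕ) ≤ m (K + 1) := hm2 (K + 1)
    have : (2 * (K + 1) : ℝ) ≤ (m (K + 1) : ℝ) := by exact_mod_cast this
    linarith
  have hEq : ∀ K : ℕ, ∀ t : ℝ, t ≤ (m (K + 1) : ℝ) - 1 → h t = F K t := by
    intro K t ht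
    have h2 : t ≤ (m (⌈t⌉₊ + 1) : ℝ) - 1 := hceil _ _ (Nat.le_ceil t)
    have e1 : F (max K ⌈t⌉₊) t = F ⌈t⌉₊ t := hstab _ _ (le_max_right _ _) t h2
    have e2 : F (max K ⌈t⌉₊) t = F K t := hstab _ _ (le_max_left _ _) t ht
    simp only [hhdef]
    rw [← e1, e2]
  have hEq' : ∀ K : ℕ, ∀ t : ℝ, t ≤ (K : ℝ) → h t = F K t := fun K t ht =>
    hEq K t (hceil K t ht)
  -- continuity of h
  have hFcont : ∀ K, Continuous (F K) := by
    intro K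
    simp only [hF]
    exact continuous_const.add (continuous_finset_sum _ fun j _ =>
      continuous_const.mul (clampR_continuous.comp (continuous_id.sub continuous_const)))
  have hcont : Continuous h := by
    rw [continuous_iff_continuousAt]
    intro t
    have ht : t < ((⌈t⌉₊ + 1 : ℕ) : ℝ) := by
      have := Nat.le_ceil t; push_cast; linarith
    refine ((hFcont (⌈t⌉₊ + 1)).continuousAt).congr ?_
    filter_upwards [Iio_mem_nhds ht] with s hs
    exact (hEq' (⌈t⌉₊ + 1) s (le_of_lt hs)).symm
  -- coefficients nonneg
  have hcoef : ∀ j, (0 : ℝ) ≤ (d (j + 1) : ℝ) - (d j : ℝ) := by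
    intro j
    have : d j ≤ d (j + 1) := hdmono (Nat.le_succ j)
    have : (d j : ℝ) ≤ (d (j + 1) : ℝ) := by exact_mod_cast this
    linarith
  -- monotonicity of h
  have hhmono : Monotone h := by
    intro s t hst
    have hK : ∀ r : ℝ, r ≤ (max ⌈s⌉₊ ⌈t⌉₊ : ℕ) → True := fun _ _ => trivial
    set K := max ⌈s⌉₊ ⌈t⌉₊ with hKdef
    have hs' : s ≤ (K : ℝ) := le_trans (Nat.le_ceil s) (by exact_mod_cast le_max_left _ _)
    have ht' : t ≤ (K : ℝ) := le_trans (Nat.le_ceil t) (by exact_mod_cast le_max_right _ _)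
    rw [hEq' K s hs', hEq' K t ht']
    simp only [hF]
    refine add_le_add le_rfl (Finset.sum_le_sum fun j _ => ?_)
    exact mul_le_mul_of_nonneg_left (clampR_mono (by linarith)) (hcoef j)
  -- telescoping
  have htel : ∀ k : ℕ, (d 0 : ℝ) + ∑ j ∈ Finset.range k, ((d (j + 1) : ℝ) - (d j : ℝ))
      = (d k : ℝ) := by
    intro k
    rw [Finset.sum_range_sub (fun j => (d j : ℝ))]
    ring
  -- lower bound for h
  have hlow : ∀ k : ℕ, ∀ t : ℝ, (m k : ℝ) ≤ t → (d k : ℝ) ≤ h t := by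
    intro k t ht
    set K := max k ⌈t⌉₊ with hKdef
    have ht' : t ≤ (K : ℝ) := le_trans (Nat.le_ceil t) (by exact_mod_cast le_max_right _ _)
    rw [hEq' K t ht']
    simp only [hF]
    rw [← htel k]
    refine add_le_add le_rfl ?_
    calc ∑ j ∈ Finset.range k, ((d (j + 1) : ℝ) - (d j : ℝ))
        = ∑ j ∈ Finset.range k, ((d (j + 1) : ℝ) - (d j : ℝ)) *
            clampR (t - ((m (j + 1) : ℝ) - 1)) := by
          refine Finset.sum_congr rfl fun j hj => ?_
          simp only [Finset.mem_range] at hj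
          have : (m (j + 1) : ℝ) ≤ (m k : ℝ) := by exact_mod_cast hmmono (by omega)
          rw [clampR_eq_one (by linarith), mul_one]
      _ ≤ ∑ j ∈ Finset.range K, ((d (j + 1) : ℝ) - (d j : ℝ)) *
            clampR (t - ((m (j + 1) : ℝ) - 1)) := by
          refine Finset.sum_le_sum_of_subset_of_nonneg
            (Finset.range_subset_range.2 (le_max_left _ _)) fun j _ _ =>
            mul_nonneg (hcoef j) (clampR_nonneg _)
  -- upper bound for h
  have hupp : ∀ k : ℕ, ∀ t : ℝ, t ≤ (m (k + 1) : ℝ) - 1 → h t ≤ (d k : ℝ) := by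
    intro k t ht
    rw [hEq k t ht]
    simp only [hF]
    rw [← htel k]
    refine add_le_add le_rfl (Finset.sum_le_sum fun j _ => ?_)
    calc ((d (j + 1) : ℝ) - (d j : ℝ)) * clampR (t - ((m (j + 1) : ℝ) - 1))
        ≤ ((d (j + 1) : ℝ) - (d j : ℝ)) * 1 :=
          mul_le_mul_of_nonneg_left (clampR_le_one _) (hcoef j)
      _ = _ := mul_one _
  have hhpos : ∀ t, (0 : ℝ) < h t := by
    intro t
    have h0 : (d 0 : ℝ) ≤ h t := by
      simp only [hhdef, hF]
      have : 0 ≤ ∑ j ∈ Finset.range ⌈t⌉₊, ((d (j + 1) : ℝ) - (d j : ℝ)) *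
          clampR (t - ((m (j + 1) : ℝ) - 1)) :=
        Finset.sum_nonneg fun j _ => mul_nonneg (hcoef j) (clampR_nonneg _)
      linarith
    have : (2 : ℝ) ≤ (d 0 : ℝ) := by exact_mod_cast hd2 0
    linarith
  have hh1 : ∀ t, (1 : ℝ) ≤ h t := by
    intro t
    have h0 : (d 0 : ℝ) ≤ h t := by
      simp only [hhdef, hF]
      have : 0 ≤ ∑ j ∈ Finset.range ⌈t⌉₊, ((d (j + 1) : ℝ) - (d j : ℝ)) *
          clampR (t - ((m (j + 1) : ℝ) - 1)) :=
        Finset.sum_nonneg fun j _ => mul_nonneg (hcoef j) (clampR_nonneg _)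
      linarith
    have : (2 : ℝ) ≤ (d 0 : ℝ) := by exact_mod_cast hd2 0
    linarith
  -- the slope function u and g
  set u : ℝ → ℝ := fun t => (h t)⁻¹ with hudef
  have hucont : Continuous u := hcont.inv₀ fun t => ne_of_gt (hhpos t)
  have hupos : ∀ t, 0 < u t := fun t => inv_pos.2 (hhpos t)
  have hule : ∀ t, u t ≤ 1 := fun t => inv_le_one_of_one_le₀ (hh1 t)
  have huanti : Antitone u := fun s t hst =>
    inv_anti₀ (hhpos s) (hhmono hst)
  set g : ℝ → ℝ := fun x => ∫ t in (0 : ℝ)..x, u t with hgdef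
  have hgderiv : ∀ x, HasDerivAt g (u x) x := fun x =>
    (hucont.integral_hasStrictDerivAt 0 x).hasDerivAt
  have hgdiff : Differentiable ℝ g := fun x => (hgderiv x).differentiableAt
  have hderiv : deriv g = u := funext fun x => (hgderiv x).deriv
  have hui : ∀ a b : ℝ, IntervalIntegrable u volume a b := fun a b =>
    hucont.intervalIntegrable a b
  have hgsub : ∀ a b : ℝ, g b - g a = ∫ t in a..b, u t := by
    intro a b
    simp only [hgdef]
    rw [intervalIntegral.integral_interval_sub_left (hui 0 b) (hui 0 a)]
  have hgmono : Monotone g := by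
    intro a b hab
    have := hgsub a b
    have hpos : 0 ≤ ∫ t in a..b, u t :=
      intervalIntegral.integral_nonneg hab fun t _ => (hupos t).le
    linarith
  have hg0 : g 0 = 0 := intervalIntegral.integral_same
  -- increment bounds
  have hincr_up : ∀ a b C : ℝ, a ≤ b → (∀ t ∈ Set.Icc a b, u t ≤ C) →
      g b - g a ≤ (b - a) * C := by
    intro a b C hab hC
    rw [hgsub a b]
    calc (∫ t in a..b, u t) ≤ ∫ _ in a..b, C :=
          intervalIntegral.integral_mono_on hab (hui a b) intervalIntegrable_const hC
      _ = (b - a) * C := by rw [intervalIntegral.integral_const]; simp [smul_eq_mul]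
  have hincr_low : ∀ a b C : ℝ, a ≤ b → (∀ t ∈ Set.Icc a b, C ≤ u t) →
      (b - a) * C ≤ g b - g a := by
    intro a b C hab hC
    rw [hgsub a b]
    calc (b - a) * C = ∫ _ in a..b, C := by rw [intervalIntegral.integral_const]; simp [smul_eq_mul]
      _ ≤ ∫ t in a..b, u t :=
          intervalIntegral.integral_mono_on hab intervalIntegrable_const (hui a b) hC
  have hdpos : ∀ k, (0 : ℝ) < (d k : ℝ) := fun k => by
    have := hd2 k; positivity
  have hdpos' : ∀ k, (0 : ℝ) < (d k : ℝ) := hdpos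
  have hmcast : ∀ k, (m (k + 1) : ℝ) - (m k : ℝ) = (d k : ℝ) := by
    intro k
    have := hmsucc k
    push_cast [this]
    ring
  -- upper bound on g at the knots
  have hgm_up : ∀ k : ℕ, g (m k) ≤ (k : ℝ) := by
    intro k
    induction k with
    | zero => simp [hm0, hg0]
    | succ k ih =>
      have hab : ((m k : ℝ)) ≤ (m (k + 1) : ℝ) := by
        have := hmcast k; have := hdpos k; linarith
      have hC : ∀ t ∈ Set.Icc ((m k : ℝ)) ((m (k + 1) : ℝ)), u t ≤ (d k : ℝ)⁻¹ := by
        intro t ht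
        exact inv_anti₀ (hdpos k) (hlow k t ht.1)
      have := hincr_up _ _ _ hab hC
      rw [hmcast k, mul_inv_cancel₀ (ne_of_gt (hdpos k))] at this
      push_cast
      linarith
  have hgup : ∀ k : ℕ, ∀ x : ℝ, x ≤ (m (k + 1) : ℝ) → g x ≤ (k : ℝ) + 1 := by
    intro k x hx
    have := hgm_up (k + 1)
    push_cast at this
    exact le_trans (hgmono hx) this
  -- lower bound on g at the knots
  have hgm_low : ∀ k : ℕ, (k : ℝ) / 2 ≤ g (m k) := by
    intro k
    induction k with
    | zero => simp [hm0, hg0]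
    | succ k ih =>
      have hd2' : (2 : ℝ) ≤ (d k : ℝ) := by exact_mod_cast hd2 k
      have hab : ((m k : ℝ)) ≤ (m (k + 1) : ℝ) - 1 := by
        have := hmcast k; linarith
      have hC : ∀ t ∈ Set.Icc ((m k : ℝ)) ((m (k + 1) : ℝ) - 1), (d k : ℝ)⁻¹ ≤ u t := by
        intro t ht
        exact inv_anti₀ (hhpos t) (hupp k t ht.2)
      have hlow2 := hincr_low _ _ _ hab hC
      have hba : ((m (k + 1) : ℝ) - 1 - (m k : ℝ)) = (d k : ℝ) - 1 := by
        have := hmcast k; linarith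
      rw [hba] at hlow2
      have hfrac : (1 : ℝ) / 2 ≤ ((d k : ℝ) - 1) * (d k : ℝ)⁻¹ := by
        have h1 : ((d k : ℝ)) / 2 ≤ (d k : ℝ) - 1 := by linarith
        have h2 : ((d k : ℝ) / 2) * (d k : ℝ)⁻¹ = 1 / 2 := by
          field_simp
        calc (1 : ℝ) / 2 = ((d k : ℝ) / 2) * (d k : ℝ)⁻¹ := h2.symm
          _ ≤ ((d k : ℝ) - 1) * (d k : ℝ)⁻¹ :=
            mul_le_mul_of_nonneg_right h1 (inv_nonneg.2 (hdpos k).le)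
      have hmono2 : g ((m (k + 1) : ℝ) - 1) ≤ g (m (k + 1)) := hgmono (by linarith)
      push_cast
      linarith
  -- tendsto atTop
  have htend : Tendsto g atTop atTop := by
    rw [tendsto_atTop]
    intro b
    obtain ⟨k, hk⟩ := exists_nat_ge (2 * b)
    rw [eventually_atTop]
    refine ⟨(m k : ℝ), fun x hx => ?_⟩
    have h1 : b ≤ (k : ℝ) / 2 := by linarith
    exact le_trans h1 (le_trans (hgm_low k) (hgmono hx))
  -- assemble
  refine ⟨g, ?_, ?_, hg0, ?_, ?_, htend, hgmono, hgup⟩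
  · exact AntitoneOn.concaveOn_of_deriv (convex_Ici 0)
      hgdiff.continuous.continuousOn hgdiff.differentiableOn
      (by rw [hderiv]; exact huanti.antitoneOn _)
  · intro x hx
    rw [← hg0]
    exact hgmono hx
  · exact hgdiff.differentiableOn
  · intro x hx
    rw [(hgdiff x).derivWithin ((uniqueDiffOn_Ici 0) x hx), hderiv]
    exact hule x

/-- **Lemma 5.** For any random variable `χ ≥ 0` there is a differentiable concave function
`g : [0,∞) → [0,∞)` with `g(0) = 0`, `g' ≤ 1`, `g(x) → ∞` and `E e^{g(χ)} < ∞`. -/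
theorem exists_concave_diff_finite_exp_moment
    {Ω : Type*} [MeasurableSpace Ω] (P : Measure Ω) [IsProbabilityMeasure P]
    (χ : Ω → ℝ) (hχmeas : Measurable χ) (hχnonneg : ∀ ω, 0 ≤ χ ω) :
    ∃ g : ℝ → ℝ, ConcaveOn ℝ (Set.Ici (0 : ℝ)) g ∧
      (∀ x ∈ Set.Ici (0 : ℝ), 0 ≤ g x) ∧
      g 0 = 0 ∧
      DifferentiableOn ℝ g (Set.Ici (0 : ℝ)) ∧
      (∀ x ∈ Set.Ici (0 : ℝ), derivWithin g (Set.Ici (0 : ℝ)) x ≤ 1) ∧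
      Tendsto g atTop atTop ∧
      (∫⁻ ω, ENNReal.ofReal (Real.exp (g (χ ω))) ∂P < ∞) := by
  -- the tail probabilities tend to zero
  have hSmeas : ∀ n : ℕ, MeasurableSet {ω | (n : ℝ) ≤ χ ω} :=
    fun n => hχmeas measurableSet_Ici
  have hSanti : Antitone fun n : ℕ => {ω | (n : ℝ) ≤ χ ω} := by
    intro a b hab ω hω
    simp only [mem_setOf_eq] at hω ⊢
    exact le_trans (by exact_mod_cast hab) hω
  have hSempty : ⋂ n : ℕ, {ω | (n : ℝ) ≤ χ ω} = ∅ := by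
    ext ω
    simp only [mem_iInter, mem_setOf_eq, mem_empty_iff_false, iff_false, not_forall]
    obtain ⟨n, hn⟩ := exists_nat_gt (χ ω)
    exact ⟨n, not_le.2 hn⟩
  have htail0 : Tendsto (fun n : ℕ => P {ω | (n : ℝ) ≤ χ ω}) atTop (nhds 0) := by
    have := tendsto_measure_iInter_atTop (μ := P)
      (fun n => (hSmeas n).nullMeasurableSet) hSanti ⟨0, measure_ne_top P _⟩
    rwa [hSempty, measure_empty] at this
  have htail : ∀ k : ℕ, ∃ N : ℕ,
      P {ω | (N : ℝ) ≤ χ ω} ≤ ENNReal.ofReal (Real.exp (-(3 : ℝ) * (k + 1))) := by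
    intro k
    have hpos : (0 : ℝ≥0∞) < ENNReal.ofReal (Real.exp (-(3 : ℝ) * (k + 1))) :=
      ENNReal.ofReal_pos.2 (Real.exp_pos _)
    obtain ⟨N, hN⟩ := (htail0.eventually_lt_const hpos).exists
    exact ⟨N, hN.le⟩
  choose N hN using htail
  -- the block lengths d and knots m
  set d : ℕ → ℕ := fun k =>
    Nat.rec (max 2 (N 0)) (fun k dk => max dk (max 2 (N (k + 1)))) k with hd
  have hdsucc : ∀ k, d (k + 1) = max (d k) (max 2 (N (k + 1))) := fun k => rfl
  have hd2 : ∀ k, 2 ≤ d k := by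
    intro k
    induction k with
    | zero => exact le_max_left _ _
    | succ k ih => rw [hdsucc]; exact le_trans (le_max_left 2 _) (le_max_right _ _)
  have hdmono : Monotone d := monotone_nat_of_le_succ fun k => by
    rw [hdsucc]; exact le_max_left _ _
  have hdN : ∀ k, N k ≤ d k := by
    intro k
    cases k with
    | zero => exact le_max_right _ _
    | succ k => rw [hdsucc]; exact le_trans (le_max_right 2 _) (le_max_right _ _)
  set m : ℕ → ℕ := fun k => ∑ j ∈ Finset.range k, d j with hm
  have hm0 : m 0 = 0 := by simp [hm]
  have hmsucc : ∀ k, m (k + 1) = m k + d k := fun k => Finset.sum_range_succ _ _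
  have hmmono : Monotone m := monotone_nat_of_le_succ fun k => by
    rw [hmsucc]; exact Nat.le_add_right _ _
  have hm2 : ∀ k, 2 * k ≤ m k := by
    intro k
    induction k with
    | zero => simp
    | succ k ih => rw [hmsucc]; have := hd2 k; omega
  have hmtail : ∀ k, P {ω | (m k : ℝ) ≤ χ ω} ≤ ENNReal.ofReal (Real.exp (-(3 : ℝ) * k)) := by
    intro k
    cases k with
    | zero =>
      simp only [Nat.cast_zero, mul_zero, Real.exp_zero, ENNReal.ofReal_one]
      exact prob_le_one
    | succ k =>
      have h1 : N k ≤ m (k + 1) := le_trans (hdN k) (by rw [hmsucc]; omega)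
      refine le_trans (measure_mono ?_) (le_trans (hN k) (le_of_eq ?_))
      · intro ω hω
        simp only [mem_setOf_eq] at hω ⊢
        exact le_trans (by exact_mod_cast h1) hω
      · congr 1
        push_cast
        ring
  obtain ⟨g, hconc, hgnonneg, hg0, hgdiffOn, hgder, hgtend, hgmono, hgup⟩ :=
    aux_g d m hd2 hdmono hm0 hmsucc
  refine ⟨g, hconc, hgnonneg, hg0, hgdiffOn, hgder, hgtend, ?_⟩
  -- partition of Ω into blocks
  set A : ℕ → Set Ω := fun k => χ ⁻¹' Set.Ico (m k : ℝ) (m (k + 1) : ℝ) with hA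
  have hAmeas : ∀ k, MeasurableSet (A k) := fun k => hχmeas measurableSet_Ico
  have hAdisj : Pairwise (Function.onFun Disjoint A) := by
    have key : ∀ k l, k < l → Disjoint (A k) (A l) := by
      intro k l hkl
      rw [Set.disjoint_left]
      intro ω h1 h2
      simp only [hA, mem_preimage, mem_Ico] at h1 h2
      have : (m (k + 1) : ℝ) ≤ (m l : ℝ) := by exact_mod_cast hmmono hkl
      linarith [h1.2, h2.1]
    intro k l hkl
    rcases Ne.lt_or_gt hkl with h | h
    · exact key _ _ h
    · exact (key _ _ h).symm
  have hAcover : (⋃ k, A k) = univ := by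
    ext ω
    simp only [mem_iUnion, mem_univ, iff_true, hA, mem_preimage, mem_Ico]
    have hex : ∃ n, χ ω < (m (n + 1) : ℝ) := by
      obtain ⟨n, hn⟩ := exists_nat_gt (χ ω)
      refine ⟨n, lt_of_lt_of_le hn ?_⟩
      have h1 : n ≤ m (n + 1) := le_trans (by omega) (hm2 (n + 1))
      exact_mod_cast h1
    refine ⟨Nat.find hex, ?_, Nat.find_spec hex⟩
    cases hk : Nat.find hex with
    | zero =>
      rw [hm0]
      exact_mod_cast hχnonneg ω
    | succ j =>
      have := Nat.find_min hex (show j < Nat.find hex by omega)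
      exact not_lt.1 this
  -- the integral estimate
  calc ∫⁻ ω, ENNReal.ofReal (Real.exp (g (χ ω))) ∂P
      = ∫⁻ ω in ⋃ k, A k, ENNReal.ofReal (Real.exp (g (χ ω))) ∂P := by
        rw [hAcover, setLIntegral_univ]
    _ = ∑' k, ∫⁻ ω in A k, ENNReal.ofReal (Real.exp (g (χ ω))) ∂P :=
        lintegral_iUnion hAmeas hAdisj _
    _ ≤ ∑' k : ℕ, ENNReal.ofReal (Real.exp ((k : ℝ) + 1)) *
          ENNReal.ofReal (Real.exp (-(3 : ℝ) * k)) := by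
        refine ENNReal.tsum_le_tsum fun k => ?_
        calc ∫⁻ ω in A k, ENNReal.ofReal (Real.exp (g (χ ω))) ∂P
            ≤ ∫⁻ _ω in A k, ENNReal.ofReal (Real.exp ((k : ℝ) + 1)) ∂P := by
              refine setLIntegral_mono measurable_const fun ω hω => ?_
              simp only [hA, mem_preimage, mem_Ico] at hω
              exact ENNReal.ofReal_le_ofReal
                (Real.exp_le_exp.2 (hgup k (χ ω) hω.2.le))
          _ = ENNReal.ofReal (Real.exp ((k : ℝ) + 1)) * P (A k) :=
              setLIntegral_const _ _
          _ ≤ ENNReal.ofReal (Real.exp ((k : ℝ) + 1)) *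
                ENNReal.ofReal (Real.exp (-(3 : ℝ) * k)) := by
              refine mul_le_mul_right (le_trans (measure_mono ?_) (hmtail k)) _
              intro ω hω
              simp only [hA, mem_preimage, mem_Ico, mem_setOf_eq] at hω ⊢
              exact hω.1
    _ = ∑' k : ℕ, ENNReal.ofReal (Real.exp 1) *
          ENNReal.ofReal (Real.exp (-(2 : ℝ))) ^ k := by
        refine tsum_congr fun k => ?_
        rw [← ENNReal.ofReal_pow (Real.exp_nonneg _), ← Real.exp_nat_mul,
          ← ENNReal.ofReal_mul (Real.exp_nonneg _), ← Real.exp_add,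
          ← ENNReal.ofReal_mul (Real.exp_nonneg _), ← Real.exp_add]
        congr 1
        push_cast
        ring
    _ = ENNReal.ofReal (Real.exp 1) *
          ∑' k : ℕ, ENNReal.ofReal (Real.exp (-(2 : ℝ))) ^ k := ENNReal.tsum_mul_left
    _ < ∞ := by
        refine ENNReal.mul_lt_top ENNReal.ofReal_lt_top ?_
        rw [ENNReal.tsum_geometric]
        refine ENNReal.inv_lt_top.2 ?_
        rw [tsub_pos_iff_lt]
        exact ENNReal.ofReal_lt_one.2 (Real.exp_lt_one_iff.2 (by norm_num))
end

section
/- Let ξ ≥ 0 be a heavy-tailed random variable with distribution F, E ξ < ∞, and let τ be a counting random variable with E τ < ∞ such that, for some c > E ξ, P(cτ > x) = o(\bar F(x)) as x → ∞ and the distribution of cτ is heavy-tailed. Then there exists an increasing concave function f : [0,∞) → ℝ such that E[ξ e^{f(ξ)}] = ∞ and E[τ e^{f(cτ)}] < ∞. -/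
open MeasureTheory ProbabilityTheory Filter Real Set
open scoped ENNReal
open scoped Interval

namespace SepAux

lemma indicator_kernel_measurable (t : ℝ) (g : ℝ → ℝ≥0∞) (hg : Measurable g) :
    Measurable (Function.uncurry (fun (x u : ℝ) =>
      Set.indicator (Ioo t x) g u)) := by
  have : Function.uncurry (fun (x u : ℝ) => Set.indicator (Ioo t x) g u)
      = Set.indicator {p : ℝ × ℝ | t < p.2 ∧ p.2 < p.1} (fun p => g p.2) := by
    funext p
    rcases p with ⟨x, u⟩
    simp only [Function.uncurry, Set.indicator, mem_Ioo, mem_setOf_eq]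
  rw [this]
  apply Measurable.indicator (hg.comp measurable_snd)
  exact MeasurableSet.inter (measurableSet_lt measurable_const measurable_snd)
    (measurableSet_lt measurable_snd measurable_fst)

/-- layer-cake light: swap lemma for kernels `(x,u) ↦ 1_{t<u<x} g u`. -/
lemma swap_kernel (m : Measure ℝ) [IsFiniteMeasure m] (t : ℝ) (g : ℝ → ℝ≥0∞)
    (hg : Measurable g) :
    ∫⁻ x in Ioi t, (∫⁻ u in Ioi t, Set.indicator (Ioo t x) g u ∂volume) ∂m
      = ∫⁻ u in Ioi t, g u * m (Ioi u) ∂volume := by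
  have hswap := MeasureTheory.lintegral_lintegral_swap (μ := m.restrict (Ioi t))
      (ν := volume.restrict (Ioi t))
      (f := fun (x u : ℝ) => Set.indicator (Ioo t x) g u)
      ((indicator_kernel_measurable t g hg).aemeasurable)
  rw [hswap]
  refine setLIntegral_congr_fun measurableSet_Ioi ?_
  intro u hu
  beta_reduce
  have : (fun x => Set.indicator (Ioo t x) g u) = fun x => Set.indicator (Ioi u) (fun _ => g u) x := by
    funext x
    by_cases hx : u < x
    · rw [Set.indicator_of_mem (by exact ⟨hu, hx⟩ : u ∈ Ioo t x),
        Set.indicator_of_mem (by exact hx : x ∈ Ioi u)]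
    · rw [Set.indicator_of_notMem (by simp [mem_Ioo, hx] : u ∉ Ioo t x),
        Set.indicator_of_notMem (by simpa [mem_Ioi] using hx)]
  rw [this, lintegral_indicator measurableSet_Ioi]
  rw [setLIntegral_const]
  rw [Measure.restrict_apply measurableSet_Ioi]
  have : Ioi u ∩ Ioi t = Ioi u := by
    apply Set.inter_eq_self_of_subset_left
    exact Ioi_subset_Ioi (le_of_lt hu)
  rw [this]

/-- Tail formula: `∫_{x>t} x dm = t·m(Ioi t) + ∫_{u>t} m(Ioi u) du` for `t ≥ 0`. -/
lemma tail_formula (m : Measure ℝ) [IsFiniteMeasure m] {t : ℝ} (ht : 0 ≤ t) :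
    ∫⁻ x in Ioi t, ENNReal.ofReal x ∂m
      = ENNReal.ofReal t * m (Ioi t) + ∫⁻ u in Ioi t, m (Ioi u) ∂volume := by
  have key : ∫⁻ x in Ioi t, ENNReal.ofReal x ∂m
      = ∫⁻ x in Ioi t, (ENNReal.ofReal t
          + ∫⁻ u in Ioi t, Set.indicator (Ioo t x) (fun _ => (1:ℝ≥0∞)) u ∂volume) ∂m := by
    refine setLIntegral_congr_fun measurableSet_Ioi ?_
    intro x hx
    beta_reduce
    have hx' : t < x := hx
    have h1 : ∫⁻ u in Ioi t, Set.indicator (Ioo t x) (fun _ => (1:ℝ≥0∞)) u ∂volume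
        = ENNReal.ofReal (x - t) := by
      rw [lintegral_indicator measurableSet_Ioo, setLIntegral_one,
        Measure.restrict_apply measurableSet_Ioo]
      have : Ioo t x ∩ Ioi t = Ioo t x := by
        apply Set.inter_eq_self_of_subset_left
        exact fun y hy => hy.1
      rw [this, Real.volume_Ioo]
    rw [h1, ← ENNReal.ofReal_add ht (by linarith)]
    congr 1; ring
  rw [key, lintegral_add_left (by fun_prop)]
  congr 1
  · rw [setLIntegral_const]
  · simpa using swap_kernel m t (fun _ => (1:ℝ≥0∞)) measurable_const

/-- FTC for `exp (σ·)`. -/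
lemma exp_integral (σ : ℝ) (x : ℝ) :
    ∫ u in (0:ℝ)..x, σ * Real.exp (σ * u) = Real.exp (σ * x) - 1 := by
  have h : ∀ u ∈ uIcc (0:ℝ) x, HasDerivAt (fun v => Real.exp (σ * v)) (σ * Real.exp (σ * u)) u := by
    intro u _
    have h1 : HasDerivAt (fun v : ℝ => σ * v) σ u := by
      simpa using (hasDerivAt_id u).const_mul σ
    have := (Real.hasDerivAt_exp (σ * u)).comp u h1
    simpa [mul_comm, Function.comp_def] using this
  have := intervalIntegral.integral_eq_sub_of_hasDerivAt h
    (Continuous.intervalIntegrable (by continuity) _ _)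
  simpa using this

/-- From heaviness of `m` at rate `σ`, the weighted tail integral diverges beyond any `r`. -/
lemma heavy_tail_lintegral (m : Measure ℝ) [IsFiniteMeasure m] (hm0 : m (Iio 0) = 0)
    {σ : ℝ} (hσ : 0 < σ)
    (hheavy : ∫⁻ x, ENNReal.ofReal (Real.exp (σ * x)) ∂m = ∞) (r : ℝ) :
    ∫⁻ u in Ioi r, ENNReal.ofReal (Real.exp (σ * u)) * m (Ioi u) ∂volume = ∞ := by
  -- step 1: the case over `Ioi 0`
  have base : ∫⁻ u in Ioi 0, ENNReal.ofReal (Real.exp (σ * u)) * m (Ioi u) ∂volume = ∞ := by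
    have hae : ∀ᵐ x ∂m, 0 ≤ x := by
      rw [ae_iff]
      have : {x : ℝ | ¬ 0 ≤ x} = Iio 0 := by ext x; simp [mem_Iio, not_le]
      rw [this]; exact hm0
    have pointwise : ∀ x : ℝ, 0 ≤ x →
        ENNReal.ofReal (Real.exp (σ * x))
          = 1 + ∫⁻ u in Ioi 0, Set.indicator (Ioo 0 x)
              (fun u => ENNReal.ofReal (σ * Real.exp (σ * u))) u ∂volume := by
      intro x hx
      have h1 : ∫⁻ u in Ioi 0, Set.indicator (Ioo 0 x)
            (fun u => ENNReal.ofReal (σ * Real.exp (σ * u))) u ∂volume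
          = ∫⁻ u in Ioo 0 x, ENNReal.ofReal (σ * Real.exp (σ * u)) ∂volume := by
        rw [lintegral_indicator measurableSet_Ioo]
        rw [Measure.restrict_restrict measurableSet_Ioo]
        congr 1
        rw [Set.inter_eq_self_of_subset_left (fun y hy => hy.1)]
      have h2 : ∫⁻ u in Ioo 0 x, ENNReal.ofReal (σ * Real.exp (σ * u)) ∂volume
          = ENNReal.ofReal (Real.exp (σ * x) - 1) := by
        rw [show (volume.restrict (Ioo 0 x)) = volume.restrict (Ioc 0 x) from
          Measure.restrict_congr_set Ioo_ae_eq_Ioc]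
        rw [← MeasureTheory.ofReal_integral_eq_lintegral_ofReal]
        · rw [← intervalIntegral.integral_of_le hx, exp_integral]
        · exact Continuous.integrableOn_Ioc (by continuity)
        · exact ae_of_all _ (fun u => by positivity)
      rw [h1, h2, ← ENNReal.ofReal_one, ← ENNReal.ofReal_add (by norm_num) (by
          have := Real.exp_le_exp.mpr (mul_le_mul_of_nonneg_left hx (le_of_lt hσ))
          have h3 : (1:ℝ) ≤ Real.exp (σ * x) := by
            calc (1:ℝ) = Real.exp 0 := by simp
            _ ≤ Real.exp (σ * x) := Real.exp_le_exp.mpr (by positivity)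
          linarith)]
      congr 1; ring
    have heq : ∫⁻ x, ENNReal.ofReal (Real.exp (σ * x)) ∂m
        = ∫⁻ x, (1 + ∫⁻ u in Ioi 0, Set.indicator (Ioo 0 x)
            (fun u => ENNReal.ofReal (σ * Real.exp (σ * u))) u ∂volume) ∂m := by
      apply lintegral_congr_ae
      filter_upwards [hae] with x hx using pointwise x hx
    rw [heq, lintegral_add_left measurable_const] at hheavy
    simp only [lintegral_const, one_mul] at hheavy
    have hfin : m univ ≠ ∞ := measure_ne_top m univ
    have h3 : ∫⁻ x, (∫⁻ u in Ioi 0, Set.indicator (Ioo 0 x)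
        (fun u => ENNReal.ofReal (σ * Real.exp (σ * u))) u ∂volume) ∂m = ∞ := by
      rcases ENNReal.add_eq_top.mp hheavy with h | h
      · exact absurd h hfin
      · exact h
    -- restrict the outer integral to `Ioi 0`
    have h4 : ∫⁻ x in Ioi 0, (∫⁻ u in Ioi 0, Set.indicator (Ioo 0 x)
        (fun u => ENNReal.ofReal (σ * Real.exp (σ * u))) u ∂volume) ∂m = ∞ := by
      rw [← h3]
      apply le_antisymm (setLIntegral_le_lintegral _ _)
      have : ∫⁻ x, (∫⁻ u in Ioi 0, Set.indicator (Ioo 0 x)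
          (fun u => ENNReal.ofReal (σ * Real.exp (σ * u))) u ∂volume) ∂m
          = ∫⁻ x in Iic 0 ∪ Ioi 0, (∫⁻ u in Ioi 0, Set.indicator (Ioo 0 x)
          (fun u => ENNReal.ofReal (σ * Real.exp (σ * u))) u ∂volume) ∂m := by
        rw [Iic_union_Ioi, Measure.restrict_univ]
      rw [this]
      refine le_trans (lintegral_union_le _ _ _) ?_
      have hzero : ∫⁻ x in Iic 0, (∫⁻ u in Ioi 0, Set.indicator (Ioo 0 x)
          (fun u => ENNReal.ofReal (σ * Real.exp (σ * u))) u ∂volume) ∂m = 0 := by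
        have : ∫⁻ x in Iic (0:ℝ), (∫⁻ u in Ioi 0, Set.indicator (Ioo 0 x)
            (fun u => ENNReal.ofReal (σ * Real.exp (σ * u))) u ∂volume) ∂m
            = ∫⁻ _ in Iic (0:ℝ), (0:ℝ≥0∞) ∂m := by
          refine setLIntegral_congr_fun measurableSet_Iic ?_
          intro x hx
          beta_reduce
          have hempty : Ioo (0:ℝ) x = ∅ := Ioo_eq_empty (by exact not_lt.mpr hx)
          simp [hempty]
        rw [this, lintegral_zero]
      rw [hzero, zero_add]
    have hgmeas : Measurable (fun u => ENNReal.ofReal (σ * Real.exp (σ * u))) :=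
      ENNReal.measurable_ofReal.comp ((measurable_const.mul
        (Real.continuous_exp.measurable.comp (measurable_const.mul measurable_id))))
    rw [swap_kernel m 0 (fun u => ENNReal.ofReal (σ * Real.exp (σ * u))) hgmeas] at h4
    have h5 : ∫⁻ u in Ioi 0, ENNReal.ofReal (σ * Real.exp (σ * u)) * m (Ioi u) ∂volume
        = ENNReal.ofReal σ * ∫⁻ u in Ioi 0, ENNReal.ofReal (Real.exp (σ * u)) * m (Ioi u) ∂volume := by
      have hmeas2 : Measurable (fun u => ENNReal.ofReal (Real.exp (σ * u)) * m (Ioi u)) := by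
        apply Measurable.mul
        · exact ENNReal.measurable_ofReal.comp
            (Real.continuous_exp.measurable.comp (measurable_const.mul measurable_id))
        · exact Antitone.measurable (fun u v huv => measure_mono (Ioi_subset_Ioi huv))
      rw [← lintegral_const_mul _ hmeas2]
      congr 1
      funext u
      rw [ENNReal.ofReal_mul (le_of_lt hσ), mul_assoc]
    rw [h5] at h4
    have := ENNReal.mul_eq_top.mp h4
    rcases this with ⟨_, h⟩ | ⟨h, _⟩
    · exact h
    · exact absurd h ENNReal.ofReal_ne_top
  -- step 2: from `Ioi 0` to `Ioi r`
  rcases le_or_gt r 0 with hr | hr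
  · rw [eq_top_iff, ← base]
    exact lintegral_mono_set (Ioi_subset_Ioi hr)
  · have hsplit : Ioc 0 r ∪ Ioi r = Ioi (0:ℝ) := Ioc_union_Ioi_eq_Ioi (le_of_lt hr)
    have hunion : ∫⁻ u in Ioi (0:ℝ), ENNReal.ofReal (Real.exp (σ * u)) * m (Ioi u) ∂volume
        = ∫⁻ u in Ioc 0 r, ENNReal.ofReal (Real.exp (σ * u)) * m (Ioi u) ∂volume
          + ∫⁻ u in Ioi r, ENNReal.ofReal (Real.exp (σ * u)) * m (Ioi u) ∂volume := by
      rw [← hsplit, lintegral_union measurableSet_Ioi Ioc_disjoint_Ioi_same]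
    have hfin : ∫⁻ u in Ioc 0 r, ENNReal.ofReal (Real.exp (σ * u)) * m (Ioi u) ∂volume ≠ ∞ := by
      have hb : ∫⁻ u in Ioc 0 r, ENNReal.ofReal (Real.exp (σ * u)) * m (Ioi u) ∂volume
          ≤ ∫⁻ _ in Ioc 0 r, ENNReal.ofReal (Real.exp (σ * r)) * m univ ∂volume := by
        apply setLIntegral_mono measurable_const
        intro u hu
        exact mul_le_mul' (ENNReal.ofReal_le_ofReal (Real.exp_le_exp.mpr
          (mul_le_mul_of_nonneg_left hu.2 (le_of_lt hσ)))) (measure_mono (subset_univ _))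
      refine ne_top_of_le_ne_top ?_ hb
      rw [setLIntegral_const]
      exact ENNReal.mul_ne_top (ENNReal.mul_ne_top ENNReal.ofReal_ne_top (measure_ne_top m _))
        (by rw [Real.volume_Ioc]; exact ENNReal.ofReal_ne_top)
    rw [base] at hunion
    rcases ENNReal.add_eq_top.mp hunion.symm with h' | h'
    · exact absurd h' hfin
    · exact h'

/-- Bounded measurable functions are integrable on finite-measure sets. -/
lemma integrableOn_of_bounded'' {f : ℝ → ℝ} {s : Set ℝ} (hs : MeasurableSet s)
    (hvol : volume s < ∞) (hm : Measurable f) {C : ℝ} (hb : ∀ x ∈ s, |f x| ≤ C) :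
    IntegrableOn f s volume := by
  have hC : Integrable (fun _ : ℝ => C) (volume.restrict s) := by
    apply integrable_const_iff.mpr
    right
    exact isFiniteMeasure_restrict.mpr hvol.ne
  refine Integrable.mono' hC hm.aestronglyMeasurable ?_
  rw [ae_restrict_iff' hs]
  exact ae_of_all _ (fun x hx => by simpa [Real.norm_eq_abs] using hb x hx)

/-- If the lintegral over `Ioi r` is infinite, some `Ioc r b` piece is large. -/
lemma exists_Ioc_big {g : ℝ → ℝ≥0∞} (hg : Measurable g) (r : ℝ)
    (h : ∫⁻ u in Ioi r, g u ∂volume = ∞) :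
    ∃ b, r < b ∧ ENNReal.ofReal 2 ≤ ∫⁻ u in Ioc r b, g u ∂volume := by
  set ν := volume.withDensity g with hν
  have happ : ∀ t : Set ℝ, MeasurableSet t → ν t = ∫⁻ u in t, g u ∂volume :=
    fun t ht => withDensity_apply g ht
  have hunion : (⋃ n : ℕ, Ioc r (r + n + 1)) = Ioi r := by
    ext x
    simp only [mem_iUnion, mem_Ioc, mem_Ioi]
    constructor
    · rintro ⟨n, h1, _⟩; exact h1
    · intro hx
      obtain ⟨n, hn⟩ := exists_nat_ge (x - r)
      exact ⟨n, hx, by linarith⟩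
  have hdir : Directed (fun x1 x2 : Set ℝ => x1 ⊆ x2) (fun n : ℕ => Ioc r (r + n + 1)) := by
    intro a b
    refine ⟨max a b, Ioc_subset_Ioc_right (by push_cast; simp [le_max_left]), 
      Ioc_subset_Ioc_right (by push_cast; simp [le_max_right])⟩
  have hsup : ν (Ioi r) = ⨆ n : ℕ, ν (Ioc r (r + n + 1)) := by
    rw [← hunion]
    exact hdir.measure_iUnion
  have htop : (⨆ n : ℕ, ν (Ioc r (r + n + 1))) = ∞ := by
    rw [← hsup, happ _ measurableSet_Ioi, h]
  have : ENNReal.ofReal 2 < ⨆ n : ℕ, ν (Ioc r (r + n + 1)) := by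
    rw [htop]; exact ENNReal.ofReal_lt_top
  obtain ⟨n, hn⟩ := lt_iSup_iff.mp this
  refine ⟨r + n + 1, by linarith [Nat.cast_nonneg (α := ℝ) n], ?_⟩
  rw [← happ _ measurableSet_Ioc]
  exact le_of_lt hn

/-- Existence of a finite right endpoint where the primitive equals 1. -/
lemma exists_integral_one {g : ℝ → ℝ} (hg : Measurable g) (hnn : ∀ x, 0 ≤ g x) (r : ℝ)
    (hbd : ∀ b : ℝ, ∃ C : ℝ, 0 ≤ C ∧ ∀ x ∈ Ioc r b, g x ≤ C)
    {M : ℝ} (hM : r < M) (hbig : (2:ℝ) ≤ ∫ x in Ioc r M, g x) :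
    ∃ b, r < b ∧ b ≤ M ∧ (∫ x in Ioc r b, g x) = 1 := by
  obtain ⟨C, hC0, hC⟩ := hbd M
  have hint : ∀ x y, r ≤ x → x ≤ y → y ≤ M → IntegrableOn g (Ioc x y) volume := by
    intro x y hx hxy hyM
    apply integrableOn_of_bounded'' measurableSet_Ioc
      (by rw [Real.volume_Ioc]; exact ENNReal.ofReal_lt_top) hg
      (C := C)
    intro z hz
    rw [abs_of_nonneg (hnn z)]
    exact hC z ⟨lt_of_le_of_lt hx hz.1, le_trans hz.2 hyM⟩
  set F : ℝ → ℝ := fun x => ∫ u in Ioc r x, g u with hF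
  have hFmono : ∀ x y, r ≤ x → x ≤ y → y ≤ M → F y - F x = ∫ u in Ioc x y, g u := by
    intro x y hx hxy hyM
    have hsplit : Ioc r x ∪ Ioc x y = Ioc r y := Ioc_union_Ioc_eq_Ioc hx hxy
    have : F y = F x + ∫ u in Ioc x y, g u := by
      rw [hF]
      simp only
      rw [← hsplit, setIntegral_union (Ioc_disjoint_Ioc_of_le le_rfl) measurableSet_Ioc
        (hint r x le_rfl hx (le_trans hxy hyM)) (hint x y hx hxy hyM)]
    linarith
  have hFcont : ContinuousOn F (Icc r M) := by
    apply LipschitzOnWith.continuousOn (K := C.toNNReal)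
    apply LipschitzOnWith.of_dist_le_mul
    intro x hx y hy
    wlog hxy : y ≤ x generalizing x y
    · rw [dist_comm, dist_comm x y]
      exact this y hy x hx (le_of_not_ge hxy)
    have hdiff := hFmono y x hy.1 hxy hx.2
    have hb1 : F x - F y ≤ C * (x - y) := by
      rw [hdiff]
      calc ∫ u in Ioc y x, g u ≤ ∫ _ in Ioc y x, C := by
            apply setIntegral_mono_on (hint y x hy.1 hxy hx.2)
              (integrableOn_const (by rw [Real.volume_Ioc]; exact ENNReal.ofReal_ne_top))
              measurableSet_Ioc
            intro z hz
            exact hC z ⟨lt_of_le_of_lt hy.1 hz.1, le_trans hz.2 hx.2⟩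
        _ = C * (x - y) := by
            rw [setIntegral_const, measureReal_def, Real.volume_Ioc, ENNReal.toReal_ofReal (by linarith), smul_eq_mul, mul_comm]
    have hb2 : 0 ≤ F x - F y := by
      rw [hdiff]
      exact integral_nonneg (fun u => hnn u)
    rw [Real.dist_eq, Real.dist_eq, abs_of_nonneg hb2, abs_of_nonneg (by linarith : (0:ℝ) ≤ x - y)]
    calc F x - F y ≤ C * (x - y) := hb1
      _ = (C.toNNReal : ℝ) * (x - y) := by rw [Real.coe_toNNReal C hC0]
  have hF0 : F r = 0 := by
    rw [hF]; simp
  have h1 : (1:ℝ) ∈ Icc (F r) (F M) := by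
    constructor
    · rw [hF0]; norm_num
    · exact le_trans (by norm_num) hbig
  obtain ⟨b, hb, hFb⟩ := intermediate_value_Icc (le_of_lt hM) hFcont h1
  refine ⟨b, ?_, hb.2, hFb⟩
  rcases eq_or_lt_of_le hb.1 with h | h
  · exfalso
    rw [← h] at hFb
    rw [hF0] at hFb
    norm_num at hFb
  · exact h


open Classical in
noncomputable def grow (w : ℝ → ℝ) (r v σ : ℝ) : ℝ :=
  if h : ∃ b, r < b ∧ (∫ t in Ioc r b, σ * Real.exp (v + σ * (t - r)) * w t) = 1
  then h.choose else r + 1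

section Construction

variable (w : ℝ → ℝ) (B : ℝ) (R : ℕ → ℝ)

noncomputable def nextSt (n : ℕ) (st : ℝ × ℝ × ℝ) : ℝ × ℝ × ℝ :=
  let p := st.1; let v := st.2.1; let σp := st.2.2
  let r := max (p + 1) (R n + 1)
  let η := min (σp/2) (min ((1/2)^n / ((r - p) * (B+1) * Real.exp (v+1))) (1/(r-p)))
  let vr := v + η * (r - p)
  let σ := η / 2
  let b := grow w r vr σ
  (b, vr + σ * (b - r), σ)

noncomputable def St : ℕ → ℝ × ℝ × ℝ
  | 0 => (0, 0, 2)
  | n+1 => nextSt w B R n (St n)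

noncomputable def pos (n : ℕ) : ℝ := (St w B R n).1
noncomputable def val (n : ℕ) : ℝ := (St w B R n).2.1
noncomputable def sp (n : ℕ) : ℝ := (St w B R n).2.2
noncomputable def rr (n : ℕ) : ℝ := max (pos w B R n + 1) (R n + 1)
noncomputable def eta (n : ℕ) : ℝ :=
  min (sp w B R n / 2) (min ((1/2)^n / ((rr w B R n - pos w B R n) * (B+1) *
    Real.exp (val w B R n + 1))) (1/(rr w B R n - pos w B R n)))
noncomputable def vr (n : ℕ) : ℝ := val w B R n + eta w B R n * (rr w B R n - pos w B R n)
noncomputable def sig (n : ℕ) : ℝ := eta w B R n / 2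
noncomputable def bb (n : ℕ) : ℝ := grow w (rr w B R n) (vr w B R n) (sig w B R n)

lemma pos_succ (n : ℕ) : pos w B R (n+1) = bb w B R n := rfl
lemma val_succ (n : ℕ) :
    val w B R (n+1) = vr w B R n + sig w B R n * (bb w B R n - rr w B R n) := rfl
lemma sp_succ (n : ℕ) : sp w B R (n+1) = sig w B R n := rfl
lemma pos_zero : pos w B R 0 = 0 := rfl
lemma val_zero : val w B R 0 = 0 := rfl
lemma sp_zero : sp w B R 0 = 2 := rfl

variable (hB : 0 ≤ B)
variable (hgrow : ∀ (r v σ : ℝ), 1 ≤ r → 0 < σ → σ ≤ 1 →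
  r < grow w r v σ ∧ (∫ t in Ioc r (grow w r v σ), σ * Real.exp (v + σ * (t - r)) * w t) = 1)

include hB hgrow

lemma rr_gap (n : ℕ) : pos w B R n + 1 ≤ rr w B R n := le_max_left _ _

lemma basic_inv : ∀ n : ℕ, 0 ≤ pos w B R n ∧ 0 < sp w B R n ∧ sp w B R n ≤ 2 := by
  intro n
  induction n with
  | zero => refine ⟨le_refl 0, by norm_num [sp_zero], by norm_num [sp_zero]⟩
  | succ n ih =>
    obtain ⟨hp, hs0, hs2⟩ := ih
    have hgap : (1:ℝ) ≤ rr w B R n - pos w B R n := by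
      have := rr_gap w B R hB hgrow n; linarith
    have hgap0 : (0:ℝ) < rr w B R n - pos w B R n := by linarith
    have heta0 : 0 < eta w B R n := by
      apply lt_min (by linarith)
      apply lt_min
      · positivity
      · positivity
    have heta1 : eta w B R n ≤ 1 := by
      have h1 : eta w B R n ≤ 1/(rr w B R n - pos w B R n) :=
        le_trans (min_le_right _ _) (min_le_right _ _)
      have h2 : 1/(rr w B R n - pos w B R n) ≤ 1 := by
        rw [div_le_one hgap0]; linarith
      linarith
    have hsig0 : 0 < sig w B R n := by unfold sig; linarith
    have hsig1 : sig w B R n ≤ 1 := by unfold sig; linarith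
    have hr1 : (1:ℝ) ≤ rr w B R n := by linarith
    have hb := hgrow (rr w B R n) (vr w B R n) (sig w B R n) hr1 hsig0 hsig1
    refine ⟨?_, ?_, ?_⟩
    · rw [pos_succ]
      have := hb.1
      unfold bb
      linarith
    · rw [sp_succ]; exact hsig0
    · rw [sp_succ]; linarith

lemma eta_pos (n : ℕ) : 0 < eta w B R n := by
  obtain ⟨hp, hs0, hs2⟩ := basic_inv w B R hB hgrow n
  have hgap : (1:ℝ) ≤ rr w B R n - pos w B R n := by
    have := rr_gap w B R hB hgrow n; linarith
  apply lt_min (by linarith)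
  apply lt_min
  · positivity
  · positivity

lemma eta_le_one (n : ℕ) : eta w B R n ≤ 1 := by
  have hgap : (1:ℝ) ≤ rr w B R n - pos w B R n := by
    have h1 := rr_gap w B R hB hgrow n
    have := (basic_inv w B R hB hgrow n).1; linarith
  have h1 : eta w B R n ≤ 1/(rr w B R n - pos w B R n) :=
    le_trans (min_le_right _ _) (min_le_right _ _)
  have h2 : 1/(rr w B R n - pos w B R n) ≤ 1 := by
    rw [div_le_one (by linarith)]; linarith
  linarith

lemma sig_pos (n : ℕ) : 0 < sig w B R n := by
  have := eta_pos w B R hB hgrow n; unfold sig; linarith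

lemma sig_le_one (n : ℕ) : sig w B R n ≤ 1 := by
  have := eta_le_one w B R hB hgrow n
  have := eta_pos w B R hB hgrow n
  unfold sig; linarith

lemma rr_one_le (n : ℕ) : 1 ≤ rr w B R n := by
  have := (basic_inv w B R hB hgrow n).1
  have := rr_gap w B R hB hgrow n
  linarith

lemma pos_lt_rr (n : ℕ) : pos w B R n < rr w B R n := by
  have := rr_gap w B R hB hgrow n; linarith

lemma rr_lt_pos_succ (n : ℕ) : rr w B R n < pos w B R (n+1) := by
  rw [pos_succ]
  exact (hgrow _ _ _ (rr_one_le w B R hB hgrow n) (sig_pos w B R hB hgrow n)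
    (sig_le_one w B R hB hgrow n)).1

lemma growth_integral (n : ℕ) :
    (∫ t in Ioc (rr w B R n) (pos w B R (n+1)),
      sig w B R n * Real.exp (vr w B R n + sig w B R n * (t - rr w B R n)) * w t) = 1 := by
  rw [pos_succ]
  exact (hgrow _ _ _ (rr_one_le w B R hB hgrow n) (sig_pos w B R hB hgrow n)
    (sig_le_one w B R hB hgrow n)).2

lemma eta_le_sp (n : ℕ) : eta w B R n ≤ sp w B R n / 2 := min_le_left _ _

lemma sp_ge_pos_n (n : ℕ) : R n + 1 ≤ rr w B R n := le_max_right _ _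

omit hB hgrow

/-- Knot positions. -/
noncomputable def Pt (k : ℕ) : ℝ := if k % 2 = 0 then pos w B R (k/2) else rr w B R (k/2)
/-- Slopes on `[Pt k, Pt (k+1))`. -/
noncomputable def Sl (k : ℕ) : ℝ := if k % 2 = 0 then eta w B R (k/2) else sig w B R (k/2)

lemma Pt_even (n : ℕ) : Pt w B R (2*n) = pos w B R n := by
  unfold Pt
  simp [Nat.mul_div_cancel_left, Nat.mul_mod_right]
lemma Pt_odd (n : ℕ) : Pt w B R (2*n+1) = rr w B R n := by
  unfold Pt
  have h1 : (2*n+1) % 2 = 1 := by omega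
  have h2 : (2*n+1) / 2 = n := by omega
  simp [h1, h2]
lemma Sl_even (n : ℕ) : Sl w B R (2*n) = eta w B R n := by
  unfold Sl
  simp [Nat.mul_div_cancel_left, Nat.mul_mod_right]
lemma Sl_odd (n : ℕ) : Sl w B R (2*n+1) = sig w B R n := by
  unfold Sl
  have h1 : (2*n+1) % 2 = 1 := by omega
  have h2 : (2*n+1) / 2 = n := by omega
  simp [h1, h2]

lemma Pt_zero : Pt w B R 0 = 0 := by
  have := Pt_even w B R (n := 0)
  simpa [pos_zero] using this

include hB hgrow

lemma Pt_lt_succ (k : ℕ) : Pt w B R k < Pt w B R (k+1) := by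
  rcases Nat.even_or_odd k with ⟨n, hn⟩ | ⟨n, hn⟩
  · subst hn
    have h1 : Pt w B R (n+n) = pos w B R n := by rw [show n+n = 2*n by ring, Pt_even]
    have h2 : Pt w B R (n+n+1) = rr w B R n := by rw [show n+n+1 = 2*n+1 by ring, Pt_odd]
    rw [h1, h2]
    exact pos_lt_rr w B R hB hgrow n
  · subst hn
    have h1 : Pt w B R (2*n+1) = rr w B R n := Pt_odd w B R n
    have h2 : Pt w B R (2*n+1+1) = pos w B R (n+1) := by
      rw [show 2*n+1+1 = 2*(n+1) by ring, Pt_even]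
    rw [h1, h2]
    exact rr_lt_pos_succ w B R hB hgrow n

lemma Pt_strictMono : StrictMono (Pt w B R) :=
  strictMono_nat_of_lt_succ (Pt_lt_succ w B R hB hgrow)

lemma pos_ge_n (n : ℕ) : (n : ℝ) ≤ pos w B R n := by
  induction n with
  | zero => rw [pos_zero]; norm_num
  | succ n ih =>
    have h1 := rr_gap w B R hB hgrow n
    have h2 := rr_lt_pos_succ w B R hB hgrow n
    push_cast
    linarith

lemma Pt_ge (k : ℕ) : ((k/2 : ℕ) : ℝ) ≤ Pt w B R k := by
  rcases Nat.even_or_odd k with ⟨n, hn⟩ | ⟨n, hn⟩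
  · subst hn
    rw [show n+n = 2*n by ring, Pt_even]
    have h2 : (2*n)/2 = n := by omega
    rw [h2]
    exact pos_ge_n w B R hB hgrow n
  · subst hn
    rw [Pt_odd]
    have h2 : (2*n+1)/2 = n := by omega
    rw [h2]
    have := rr_gap w B R hB hgrow n
    have := pos_ge_n w B R hB hgrow n
    linarith

/-- Index of the piece containing `t`. -/
noncomputable def KK (t : ℝ) : ℕ := Nat.findGreatest (fun k => Pt w B R k ≤ t) (2*(⌈t⌉₊+1))

lemma KK_spec {k : ℕ} {t : ℝ} (h1 : Pt w B R k ≤ t) (h2 : t < Pt w B R (k+1)) :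
    KK w B R t = k := by
  have ht0 : 0 ≤ t := le_trans (by rw [← Pt_zero w B R]; exact (Pt_strictMono w B R hB hgrow).monotone (Nat.zero_le k)) h1
  have hbound : ∀ j, Pt w B R j ≤ t → j ≤ 2*(⌈t⌉₊+1) := by
    intro j hj
    have h3 : ((j/2 : ℕ) : ℝ) ≤ t := le_trans (Pt_ge w B R hB hgrow j) hj
    have h4 : (j/2 : ℕ) ≤ ⌈t⌉₊ := by
      by_contra h
      push_neg at h
      have : (⌈t⌉₊ : ℝ) < ((j/2 : ℕ) : ℝ) := by exact_mod_cast h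
      have := Nat.le_ceil t
      linarith
    omega
  unfold KK
  rw [Nat.findGreatest_eq_iff]
  refine ⟨hbound k h1, fun _ => h1, ?_⟩
  intro j hkj hjb hPj
  have : Pt w B R (k+1) ≤ Pt w B R j := (Pt_strictMono w B R hB hgrow).monotone hkj
  linarith

/-- The slope function. -/
noncomputable def sl (t : ℝ) : ℝ := Sl w B R (KK w B R t)

lemma sl_eq {k : ℕ} {t : ℝ} (h1 : Pt w B R k ≤ t) (h2 : t < Pt w B R (k+1)) :
    sl w B R t = Sl w B R k := by
  unfold sl
  rw [KK_spec w B R hB hgrow h1 h2]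

lemma exists_piece {t : ℝ} (ht : 0 ≤ t) : ∃ k, Pt w B R k ≤ t ∧ t < Pt w B R (k+1) := by
  have hub : ∃ j, t < Pt w B R j := by
    refine ⟨2*(⌈t⌉₊+1), ?_⟩
    have h1 := Pt_ge w B R hB hgrow (2*(⌈t⌉₊+1))
    have h2 : ((2*(⌈t⌉₊+1))/2 : ℕ) = ⌈t⌉₊+1 := by omega
    rw [h2] at h1
    have h3 := Nat.le_ceil t
    push_cast at h1
    linarith
  classical
  obtain ⟨j, hj⟩ := hub
  induction j with
  | zero =>
    exfalso
    rw [Pt_zero] at hj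
    linarith
  | succ j ih =>
    by_cases h : Pt w B R j ≤ t
    · exact ⟨j, h, hj⟩
    · exact ih (lt_of_not_ge h)

lemma Sl_pos (k : ℕ) : 0 < Sl w B R k := by
  rcases Nat.even_or_odd k with ⟨n, hn⟩ | ⟨n, hn⟩
  · subst hn; rw [show n+n=2*n by ring, Sl_even]; exact eta_pos w B R hB hgrow n
  · subst hn; rw [Sl_odd]; exact sig_pos w B R hB hgrow n

lemma Sl_le_one (k : ℕ) : Sl w B R k ≤ 1 := by
  rcases Nat.even_or_odd k with ⟨n, hn⟩ | ⟨n, hn⟩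
  · subst hn; rw [show n+n=2*n by ring, Sl_even]; exact eta_le_one w B R hB hgrow n
  · subst hn; rw [Sl_odd]; exact sig_le_one w B R hB hgrow n

lemma Sl_antitone : Antitone (Sl w B R) := by
  apply antitone_nat_of_succ_le
  intro k
  rcases Nat.even_or_odd k with ⟨n, hn⟩ | ⟨n, hn⟩
  · subst hn
    rw [show n+n=2*n by ring, Sl_even, show 2*n+1 = 2*n+1 from rfl, Sl_odd]
    have := eta_pos w B R hB hgrow n
    unfold sig
    linarith
  · subst hn
    rw [Sl_odd, show 2*n+1+1 = 2*(n+1) by ring, Sl_even]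
    have h1 := eta_le_sp w B R hB hgrow (n+1)
    rw [sp_succ] at h1
    have := sig_pos w B R hB hgrow n
    unfold sig at *
    linarith

omit hB hgrow in
lemma KK_mono : ∀ {t u : ℝ}, t ≤ u → KK w B R t ≤ KK w B R u := by
  intro t u htu
  unfold KK
  apply Nat.findGreatest_mono
  · intro k hk
    exact le_trans hk htu
  · have : ⌈t⌉₊ ≤ ⌈u⌉₊ := Nat.ceil_le_ceil htu
    omega

lemma sl_antitone : Antitone (sl w B R) := by
  intro t u htu
  exact Sl_antitone w B R hB hgrow (KK_mono w B R htu)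

lemma sl_pos (t : ℝ) : 0 < sl w B R t := Sl_pos w B R hB hgrow _
lemma sl_le_one (t : ℝ) : sl w B R t ≤ 1 := Sl_le_one w B R hB hgrow _

lemma sl_intervalIntegrable (a b : ℝ) : IntervalIntegrable (sl w B R) volume a b :=
  AntitoneOn.intervalIntegrable ((sl_antitone w B R hB hgrow).antitoneOn _)

/-- The concave function. -/
noncomputable def ff (x : ℝ) : ℝ := ∫ t in (0:ℝ)..x, sl w B R t

lemma ff_zero : ff w B R 0 = 0 := by unfold ff; simp

lemma ff_sub {x y : ℝ} : ff w B R y - ff w B R x = ∫ t in x..y, sl w B R t := by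
  unfold ff
  rw [← intervalIntegral.integral_add_adjacent_intervals
    (sl_intervalIntegrable w B R hB hgrow 0 x) (sl_intervalIntegrable w B R hB hgrow x y)]
  ring

lemma ff_sub_le {x y : ℝ} (hxy : x ≤ y) :
    ff w B R y - ff w B R x ≤ sl w B R x * (y - x) := by
  rw [ff_sub w B R hB hgrow]
  calc ∫ t in x..y, sl w B R t ≤ ∫ _ in x..y, sl w B R x := by
        apply intervalIntegral.integral_mono_on hxy (sl_intervalIntegrable w B R hB hgrow x y)
          intervalIntegrable_const
        intro t ht
        exact sl_antitone w B R hB hgrow ht.1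
    _ = sl w B R x * (y - x) := by
        rw [intervalIntegral.integral_const, smul_eq_mul, mul_comm]

lemma ff_sub_ge {x y : ℝ} (hxy : x ≤ y) :
    sl w B R y * (y - x) ≤ ff w B R y - ff w B R x := by
  rw [ff_sub w B R hB hgrow]
  calc sl w B R y * (y - x) = ∫ _ in x..y, sl w B R y := by
        rw [intervalIntegral.integral_const, smul_eq_mul, mul_comm]
    _ ≤ ∫ t in x..y, sl w B R t := by
        apply intervalIntegral.integral_mono_on hxy intervalIntegrable_const
          (sl_intervalIntegrable w B R hB hgrow x y)
        intro t ht
        exact sl_antitone w B R hB hgrow ht.2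

lemma ff_strictMonoOn : StrictMonoOn (ff w B R) (Ici (0:ℝ)) := by
  intro x hx y hy hxy
  have h := ff_sub_ge w B R hB hgrow (le_of_lt hxy)
  have h2 := sl_pos w B R hB hgrow y
  nlinarith

lemma ff_mono : Monotone (ff w B R) := by
  intro x y hxy
  have h := ff_sub_ge w B R hB hgrow hxy
  have h2 := sl_pos w B R hB hgrow y
  nlinarith

lemma ff_concave : ConcaveOn ℝ (Ici (0:ℝ)) (ff w B R) := by
  apply concaveOn_of_slope_anti_adjacent (convex_Ici 0)
  intro x y z _ _ hxy hyz
  have h1 : ff w B R y - ff w B R x ≥ sl w B R y * (y - x) :=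
    ff_sub_ge w B R hB hgrow (le_of_lt hxy)
  have h2 : ff w B R z - ff w B R y ≤ sl w B R y * (z - y) :=
    ff_sub_le w B R hB hgrow (le_of_lt hyz)
  rw [div_le_div_iff₀ (by linarith) (by linarith)]
  nlinarith

lemma ff_linear_piece {k : ℕ} {x y : ℝ} (hx : Pt w B R k ≤ x) (hxy : x ≤ y)
    (hy : y ≤ Pt w B R (k+1)) :
    ff w B R y - ff w B R x = Sl w B R k * (y - x) := by
  rw [ff_sub w B R hB hgrow]
  have : ∀ᵐ t ∂volume, t ∈ Ι x y → sl w B R t = Sl w B R k := by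
    have hsub : Ι x y ⊆ Ico (Pt w B R k) (Pt w B R (k+1)) ∪ {Pt w B R (k+1)} := by
      intro t ht
      rw [uIoc_of_le hxy] at ht
      rcases eq_or_lt_of_le (le_trans ht.2 hy) with h | h
      · right; exact h
      · left; exact ⟨le_trans hx (le_of_lt ht.1), h⟩
    have hnull : volume ({Pt w B R (k+1)} : Set ℝ) = 0 := volume_singleton
    filter_upwards [measure_eq_zero_iff_ae_notMem.mp hnull] with t ht hmem
    rcases hsub hmem with h | h
    · exact sl_eq w B R hB hgrow h.1 h.2
    · exact absurd h ht
  rw [intervalIntegral.integral_congr_ae this, intervalIntegral.integral_const, smul_eq_mul,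
    mul_comm]

include hB hgrow

lemma ff_knot_even (n : ℕ) : ff w B R (Pt w B R (2*n)) = val w B R n := by
  induction n with
  | zero =>
    have h0 : (2*0 : ℕ) = 0 := by ring
    rw [h0, Pt_zero, ff_zero w B R hB hgrow, val_zero]
  | succ n ih =>
    have e1 : (2*n+1+1 : ℕ) = 2*(n+1) := by ring
    have h1 : ff w B R (Pt w B R (2*n+1)) - ff w B R (Pt w B R (2*n))
        = Sl w B R (2*n) * (Pt w B R (2*n+1) - Pt w B R (2*n)) :=
      ff_linear_piece w B R hB hgrow le_rfl
        (le_of_lt (Pt_lt_succ w B R hB hgrow (2*n))) le_rfl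
    have h2 : ff w B R (Pt w B R (2*n+1+1)) - ff w B R (Pt w B R (2*n+1))
        = Sl w B R (2*n+1) * (Pt w B R (2*n+1+1) - Pt w B R (2*n+1)) :=
      ff_linear_piece w B R hB hgrow (k := 2*n+1) le_rfl
        (le_of_lt (Pt_lt_succ w B R hB hgrow (2*n+1))) le_rfl
    rw [Pt_even, Pt_odd, Sl_even] at h1
    rw [e1, Pt_even, Pt_odd, Sl_odd] at h2
    rw [Pt_even] at ih
    rw [Pt_even, val_succ]
    have hpb : pos w B R (n+1) = bb w B R n := pos_succ w B R n
    rw [hpb] at h2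
    rw [hpb]
    unfold vr
    linarith

lemma ff_knot_odd (n : ℕ) : ff w B R (Pt w B R (2*n+1)) = vr w B R n := by
  have h1 : ff w B R (Pt w B R (2*n+1)) - ff w B R (Pt w B R (2*n))
      = Sl w B R (2*n) * (Pt w B R (2*n+1) - Pt w B R (2*n)) :=
    ff_linear_piece w B R hB hgrow le_rfl
      (le_of_lt (Pt_lt_succ w B R hB hgrow (2*n))) le_rfl
  have h2 := ff_knot_even w B R hB hgrow n
  rw [Pt_even, Pt_odd, Sl_even] at h1
  rw [Pt_even] at h2
  rw [Pt_odd]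
  unfold vr
  linarith

lemma ff_lipschitz : LipschitzWith 1 (ff w B R) := by
  apply LipschitzWith.of_dist_le_mul
  intro x y
  wlog hxy : y ≤ x generalizing x y
  · rw [dist_comm, dist_comm x y]
    exact this y x (le_of_not_ge hxy)
  have h1 := ff_sub_ge w B R hB hgrow hxy
  have h2 := ff_sub_le w B R hB hgrow hxy
  have h3 := sl_pos w B R hB hgrow x
  have h4 := sl_le_one w B R hB hgrow y
  have h5 : sl w B R y * (x - y) ≤ 1 * (x - y) := by nlinarith
  rw [Real.dist_eq, Real.dist_eq, abs_of_nonneg (by nlinarith : (0:ℝ) ≤ ff w B R x - ff w B R y),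
    abs_of_nonneg (by linarith : (0:ℝ) ≤ x - y)]
  push_cast
  nlinarith

lemma ff_continuous : Continuous (ff w B R) :=
  (ff_lipschitz w B R hB hgrow).continuous

lemma slff_measurable : Measurable (fun t => sl w B R t * Real.exp (ff w B R t)) :=
  ((sl_antitone w B R hB hgrow).measurable).mul
    ((Real.continuous_exp.comp (ff_continuous w B R hB hgrow)).measurable)

lemma slff_intervalIntegrable (a b : ℝ) :
    IntervalIntegrable (fun t => sl w B R t * Real.exp (ff w B R t)) volume a b := by
  rw [intervalIntegrable_iff, uIoc]
  apply integrableOn_of_bounded'' measurableSet_Ioc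
    (by rw [Real.volume_Ioc]; exact ENNReal.ofReal_lt_top)
    (slff_measurable w B R hB hgrow) (C := Real.exp (ff w B R (max a b)))
  intro t ht
  have h1 := sl_pos w B R hB hgrow t
  have h2 := sl_le_one w B R hB hgrow t
  have h3 : Real.exp (ff w B R t) ≤ Real.exp (ff w B R (max a b)) :=
    Real.exp_le_exp.mpr (ff_mono w B R hB hgrow ht.2)
  rw [abs_of_nonneg (by positivity)]
  nlinarith [Real.exp_pos (ff w B R t)]

lemma ff_piece_exp_integral {k : ℕ} {a x : ℝ} (ha : Pt w B R k ≤ a) (hax : a ≤ x)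
    (hx : x ≤ Pt w B R (k+1)) :
    ∫ t in a..x, sl w B R t * Real.exp (ff w B R t)
      = Real.exp (ff w B R x) - Real.exp (ff w B R a) := by
  set c := Sl w B R k with hc
  have hlin : ∀ t, a ≤ t → t ≤ Pt w B R (k+1) → ff w B R t = ff w B R a + c * (t - a) := by
    intro t h1 h2
    have := ff_linear_piece w B R hB hgrow ha h1 h2
    linarith
  have hcong : ∀ᵐ t ∂volume, t ∈ Ι a x →
      sl w B R t * Real.exp (ff w B R t) = c * Real.exp (ff w B R a + c * (t - a)) := by
    have hnull : volume ({Pt w B R (k+1)} : Set ℝ) = 0 := volume_singleton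
    filter_upwards [measure_eq_zero_iff_ae_notMem.mp hnull] with t ht hmem
    rw [uIoc_of_le hax] at hmem
    have h2 : t < Pt w B R (k+1) := lt_of_le_of_ne (le_trans hmem.2 hx) (by
      intro h; exact ht (by rw [h]; rfl))
    have h3 : sl w B R t = c := sl_eq w B R hB hgrow (le_trans ha (le_of_lt hmem.1)) h2
    rw [h3, hlin t (le_of_lt hmem.1) (le_of_lt h2)]
  rw [intervalIntegral.integral_congr_ae hcong]
  have hderiv : ∀ t ∈ uIcc a x, HasDerivAt (fun u => Real.exp (ff w B R a + c * (u - a)))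
      (c * Real.exp (ff w B R a + c * (t - a))) t := by
    intro t _
    have h1 : HasDerivAt (fun u : ℝ => ff w B R a + c * (u - a)) c t := by
      simpa using (((hasDerivAt_id t).sub_const a).const_mul c).const_add (ff w B R a)
    have := (Real.hasDerivAt_exp (ff w B R a + c * (t - a))).comp t h1
    simpa [mul_comm, Function.comp_def] using this
  rw [intervalIntegral.integral_eq_sub_of_hasDerivAt hderiv
    (Continuous.intervalIntegrable (by continuity) _ _)]
  rw [← hlin x hax hx]
  simp

lemma ff_exp_knot : ∀ k, ∫ t in (0:ℝ)..(Pt w B R k), sl w B R t * Real.exp (ff w B R t)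
    = Real.exp (ff w B R (Pt w B R k)) - 1 := by
  intro k
  induction k with
  | zero =>
    rw [Pt_zero, ff_zero w B R hB hgrow]
    simp
  | succ k ih =>
    rw [← intervalIntegral.integral_add_adjacent_intervals
      (slff_intervalIntegrable w B R hB hgrow 0 (Pt w B R k))
      (slff_intervalIntegrable w B R hB hgrow (Pt w B R k) (Pt w B R (k+1))), ih,
      ff_piece_exp_integral w B R hB hgrow le_rfl
        (le_of_lt (Pt_lt_succ w B R hB hgrow k)) le_rfl]
    ring

lemma ff_exp_integral {x : ℝ} (hx : 0 ≤ x) :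
    ∫ t in (0:ℝ)..x, sl w B R t * Real.exp (ff w B R t) = Real.exp (ff w B R x) - 1 := by
  obtain ⟨k, h1, h2⟩ := exists_piece w B R hB hgrow hx
  rw [← intervalIntegral.integral_add_adjacent_intervals
    (slff_intervalIntegrable w B R hB hgrow 0 (Pt w B R k))
    (slff_intervalIntegrable w B R hB hgrow (Pt w B R k) x),
    ff_exp_knot w B R hB hgrow k,
    ff_piece_exp_integral w B R hB hgrow le_rfl h1 (le_of_lt h2)]
  ring

lemma ff_nonneg {x : ℝ} (hx : 0 ≤ x) : 0 ≤ ff w B R x := by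
  have := ff_mono w B R hB hgrow hx
  rw [ff_zero w B R hB hgrow] at this
  exact this

lemma main_identity (m : Measure ℝ) [IsFiniteMeasure m] (hm0 : m (Iio 0) = 0) :
    ∫⁻ x, ENNReal.ofReal (x * Real.exp (ff w B R x)) ∂m
      = (∫⁻ x, ENNReal.ofReal x ∂m)
        + ∫⁻ t in Ioi 0, ENNReal.ofReal (sl w B R t * Real.exp (ff w B R t))
            * (∫⁻ y in Ioi t, ENNReal.ofReal y ∂m) ∂volume := by
  set g : ℝ → ℝ≥0∞ := fun t => ENNReal.ofReal (sl w B R t * Real.exp (ff w B R t)) with hgdef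
  have hg : Measurable g := ENNReal.measurable_ofReal.comp (slff_measurable w B R hB hgrow)
  have hae : ∀ᵐ x ∂m, 0 ≤ x := by
    rw [ae_iff]
    have : {x : ℝ | ¬ 0 ≤ x} = Iio 0 := by ext x; simp [mem_Iio, not_le]
    rw [this]; exact hm0
  -- pointwise identity
  have pointwise : ∀ x : ℝ, 0 ≤ x →
      ENNReal.ofReal (x * Real.exp (ff w B R x))
        = ENNReal.ofReal x + ENNReal.ofReal x *
            ∫⁻ t in Ioi 0, (Ioo 0 x).indicator g t ∂volume := by
    intro x hx
    have h1 : ∫⁻ t in Ioi 0, (Ioo 0 x).indicator g t ∂volume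
        = ∫⁻ t in Ioo 0 x, g t ∂volume := by
      rw [lintegral_indicator measurableSet_Ioo, Measure.restrict_restrict measurableSet_Ioo]
      congr 1
      rw [Set.inter_eq_self_of_subset_left (fun y hy => hy.1)]
    have h2 : ∫⁻ t in Ioo 0 x, g t ∂volume = ENNReal.ofReal (Real.exp (ff w B R x) - 1) := by
      rw [show (volume.restrict (Ioo 0 x)) = volume.restrict (Ioc 0 x) from
        Measure.restrict_congr_set Ioo_ae_eq_Ioc]
      rw [hgdef]
      rw [← MeasureTheory.ofReal_integral_eq_lintegral_ofReal]
      · rw [← intervalIntegral.integral_of_le hx, ff_exp_integral w B R hB hgrow hx]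
      · have := (slff_intervalIntegrable w B R hB hgrow 0 x)
        rw [intervalIntegrable_iff, uIoc_of_le hx] at this
        exact this
      · refine ae_of_all _ (fun t => ?_)
        have := sl_pos w B R hB hgrow t
        positivity
    rw [h1, h2]
    have hexp1 : (1:ℝ) ≤ Real.exp (ff w B R x) := by
      rw [show (1:ℝ) = Real.exp 0 by simp]
      exact Real.exp_le_exp.mpr (ff_nonneg w B R hB hgrow hx)
    rw [← ENNReal.ofReal_mul hx, ← ENNReal.ofReal_add hx (by nlinarith)]
    congr 1
    ring
  have heq : ∫⁻ x, ENNReal.ofReal (x * Real.exp (ff w B R x)) ∂m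
      = ∫⁻ x, (ENNReal.ofReal x + ENNReal.ofReal x *
          ∫⁻ t in Ioi 0, (Ioo 0 x).indicator g t ∂volume) ∂m := by
    apply lintegral_congr_ae
    filter_upwards [hae] with x hx using pointwise x hx
  rw [heq, lintegral_add_left (by fun_prop)]
  congr 1
  -- second term: restrict to `Ioi 0`, swap, and compute
  have hIic : ∫⁻ x in Iic 0, (ENNReal.ofReal x *
      ∫⁻ t in Ioi 0, (Ioo 0 x).indicator g t ∂volume) ∂m = 0 := by
    have : ∫⁻ x in Iic (0:ℝ), (ENNReal.ofReal x *
        ∫⁻ t in Ioi 0, (Ioo 0 x).indicator g t ∂volume) ∂m = ∫⁻ _ in Iic (0:ℝ), 0 ∂m := by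
      refine setLIntegral_congr_fun measurableSet_Iic ?_
      intro x hx
      beta_reduce
      have hempty : Ioo (0:ℝ) x = ∅ := Ioo_eq_empty (by exact not_lt.mpr hx)
      simp [hempty]
    rw [this, lintegral_zero]
  have hsplit : ∫⁻ x, (ENNReal.ofReal x *
      ∫⁻ t in Ioi 0, (Ioo 0 x).indicator g t ∂volume) ∂m
      = ∫⁻ x in Ioi 0, (ENNReal.ofReal x *
        ∫⁻ t in Ioi 0, (Ioo 0 x).indicator g t ∂volume) ∂m := by
    have hu : ∫⁻ x, (ENNReal.ofReal x * ∫⁻ t in Ioi 0, (Ioo 0 x).indicator g t ∂volume) ∂m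
        = ∫⁻ x in Iic 0 ∪ Ioi 0, (ENNReal.ofReal x *
          ∫⁻ t in Ioi 0, (Ioo 0 x).indicator g t ∂volume) ∂m := by
      rw [Iic_union_Ioi, Measure.restrict_univ]
    rw [hu, lintegral_union measurableSet_Ioi (Iic_disjoint_Ioi le_rfl), hIic, zero_add]
  rw [hsplit]
  -- push the constant inside and swap
  have hker : Measurable (Function.uncurry (fun (x t : ℝ) =>
      ENNReal.ofReal x * (Ioo 0 x).indicator g t)) := by
    have h1 : Function.uncurry (fun (x t : ℝ) => ENNReal.ofReal x * (Ioo 0 x).indicator g t)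
        = fun p : ℝ × ℝ => ENNReal.ofReal p.1 *
            (Function.uncurry (fun (x u : ℝ) => (Ioo 0 x).indicator g u)) p := by
      funext p; rcases p with ⟨x, t⟩; rfl
    rw [h1]
    exact (ENNReal.measurable_ofReal.comp measurable_fst).mul
      (indicator_kernel_measurable 0 g hg)
  have hpush : ∫⁻ x in Ioi 0, (ENNReal.ofReal x *
      ∫⁻ t in Ioi 0, (Ioo 0 x).indicator g t ∂volume) ∂m
      = ∫⁻ x in Ioi 0, (∫⁻ t in Ioi 0,
          ENNReal.ofReal x * (Ioo 0 x).indicator g t ∂volume) ∂m := by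
    refine setLIntegral_congr_fun measurableSet_Ioi ?_
    intro x _
    beta_reduce
    rw [lintegral_const_mul _ (hg.indicator measurableSet_Ioo)]
  rw [hpush]
  rw [MeasureTheory.lintegral_lintegral_swap hker.aemeasurable]
  refine setLIntegral_congr_fun measurableSet_Ioi ?_
  intro t ht
  beta_reduce
  have hrw : ∀ x : ℝ, ENNReal.ofReal x * (Ioo 0 x).indicator g t
      = g t * (Ioi t).indicator (fun y => ENNReal.ofReal y) x := by
    intro x
    by_cases hx : t < x
    · have h1 : t ∈ Ioo 0 x := ⟨ht, hx⟩
      have h2 : x ∈ Ioi t := hx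
      rw [Set.indicator_of_mem h1 g, Set.indicator_of_mem h2 (fun y => ENNReal.ofReal y),
        mul_comm]
    · have h1 : t ∉ Ioo 0 x := by simp [mem_Ioo, hx]
      have h2 : x ∉ Ioi t := by simpa [mem_Ioi] using hx
      rw [Set.indicator_of_notMem h1 g,
        Set.indicator_of_notMem h2 (fun y => ENNReal.ofReal y)]
      simp
  calc ∫⁻ x in Ioi 0, ENNReal.ofReal x * (Ioo 0 x).indicator g t ∂m
      = ∫⁻ x in Ioi 0, g t * (Ioi t).indicator (fun y => ENNReal.ofReal y) x ∂m := by
        refine setLIntegral_congr_fun measurableSet_Ioi (fun x _ => hrw x)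
    _ = g t * ∫⁻ x in Ioi 0, (Ioi t).indicator (fun y => ENNReal.ofReal y) x ∂m := by
        rw [lintegral_const_mul _ (ENNReal.measurable_ofReal.indicator measurableSet_Ioi)]
    _ = g t * ∫⁻ y in Ioi t, ENNReal.ofReal y ∂m := by
        congr 1
        rw [lintegral_indicator measurableSet_Ioi, Measure.restrict_restrict measurableSet_Ioi]
        congr 1
        rw [Set.inter_eq_self_of_subset_left (Ioi_subset_Ioi (le_of_lt ht))]

lemma pos_mono : Monotone (pos w B R) := by
  apply monotone_nat_of_le_succ
  intro n
  have h1 := pos_lt_rr w B R hB hgrow n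
  have h2 := rr_lt_pos_succ w B R hB hgrow n
  linarith

omit hB hgrow in
lemma wm_antitone (m : Measure ℝ) :
    Antitone (fun t => ∫⁻ y in Ioi t, ENNReal.ofReal y ∂m) :=
  fun t u htu => lintegral_mono_set (Ioi_subset_Ioi htu)

/-- The growth pieces each contribute exactly 1. -/
lemma growth_piece_lintegral (m : Measure ℝ) [IsFiniteMeasure m]
    (hw : ∀ t, ENNReal.ofReal (w t) = ∫⁻ y in Ioi t, ENNReal.ofReal y ∂m)
    (hw0 : ∀ t, 0 ≤ w t) (hwB : ∀ t, w t ≤ B) (hwmeas : Measurable w) (n : ℕ) :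
    ∫⁻ t in Ioc (rr w B R n) (pos w B R (n+1)),
      ENNReal.ofReal (sl w B R t * Real.exp (ff w B R t))
        * (∫⁻ y in Ioi t, ENNReal.ofReal y ∂m) ∂volume = 1 := by
  have hrb := rr_lt_pos_succ w B R hB hgrow n
  have hcong : ∀ᵐ t ∂volume, t ∈ Ioc (rr w B R n) (pos w B R (n+1)) →
      ENNReal.ofReal (sl w B R t * Real.exp (ff w B R t))
        * (∫⁻ y in Ioi t, ENNReal.ofReal y ∂m)
      = ENNReal.ofReal (sig w B R n
          * Real.exp (vr w B R n + sig w B R n * (t - rr w B R n)) * w t) := by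
    have hnull : volume ({pos w B R (n+1)} : Set ℝ) = 0 := volume_singleton
    filter_upwards [measure_eq_zero_iff_ae_notMem.mp hnull] with t ht hmem
    have ht2 : t < pos w B R (n+1) := lt_of_le_of_ne hmem.2 (fun h => ht (by rw [h]; rfl))
    have hPt1 : Pt w B R (2*n+1) = rr w B R n := Pt_odd w B R n
    have hPt2 : Pt w B R (2*n+1+1) = pos w B R (n+1) := by
      rw [show 2*n+1+1 = 2*(n+1) by ring, Pt_even]
    have hsl : sl w B R t = sig w B R n := by
      have h := sl_eq w B R hB hgrow (k := 2*n+1) (t := t)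
        (by rw [hPt1]; exact le_of_lt hmem.1) (by rw [hPt2]; exact ht2)
      rw [h, Sl_odd]
    have hff : ff w B R t = vr w B R n + sig w B R n * (t - rr w B R n) := by
      have hlin := ff_linear_piece w B R hB hgrow (k := 2*n+1)
        (x := rr w B R n) (y := t) (le_of_eq hPt1) (le_of_lt hmem.1)
        (by rw [hPt2]; exact hmem.2)
      have hknot : ff w B R (rr w B R n) = vr w B R n := by
        rw [← hPt1, ff_knot_odd w B R hB hgrow]
      rw [Sl_odd] at hlin
      linarith
    have hsig := sig_pos w B R hB hgrow n
    rw [hsl, hff, ← hw t, ← ENNReal.ofReal_mul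
      (mul_nonneg (le_of_lt hsig) (le_of_lt (Real.exp_pos _)))]
  rw [setLIntegral_congr_fun_ae measurableSet_Ioc hcong]
  have hint : IntegrableOn (fun t => sig w B R n
      * Real.exp (vr w B R n + sig w B R n * (t - rr w B R n)) * w t)
      (Ioc (rr w B R n) (pos w B R (n+1))) volume := by
    apply integrableOn_of_bounded'' measurableSet_Ioc
      (by rw [Real.volume_Ioc]; exact ENNReal.ofReal_lt_top)
      (by
        apply Measurable.mul
        apply Measurable.mul measurable_const
        · exact (Real.continuous_exp.measurable).comp
            ((measurable_const.add ((measurable_id.sub_const _).const_mul _)).comp measurable_id)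
        · exact hwmeas)
      (C := sig w B R n * Real.exp (vr w B R n + sig w B R n
        * (pos w B R (n+1) - rr w B R n)) * B)
    intro t ht
    have h1 := sig_pos w B R hB hgrow n
    have h2 := hw0 t
    have h3 := hwB t
    have h4 : Real.exp (vr w B R n + sig w B R n * (t - rr w B R n))
        ≤ Real.exp (vr w B R n + sig w B R n * (pos w B R (n+1) - rr w B R n)) := by
      apply Real.exp_le_exp.mpr
      have := ht.2
      nlinarith
    have h5 : (0:ℝ) < Real.exp (vr w B R n + sig w B R n * (t - rr w B R n)) := Real.exp_pos _
    rw [abs_of_nonneg (mul_nonneg (mul_nonneg h1.le h5.le) h2)]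
    have e1 : sig w B R n * Real.exp (vr w B R n + sig w B R n * (t - rr w B R n)) * w t
        ≤ sig w B R n * Real.exp (vr w B R n + sig w B R n * (t - rr w B R n)) * B :=
      mul_le_mul_of_nonneg_left h3 (mul_nonneg h1.le h5.le)
    have e2 : sig w B R n * Real.exp (vr w B R n + sig w B R n * (t - rr w B R n)) * B
        ≤ sig w B R n * Real.exp (vr w B R n + sig w B R n
          * (pos w B R (n+1) - rr w B R n)) * B := by
      apply mul_le_mul_of_nonneg_right _ hB
      exact mul_le_mul_of_nonneg_left h4 h1.le
    linarith
  rw [← MeasureTheory.ofReal_integral_eq_lintegral_ofReal hint (ae_of_all _ (fun t =>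
    mul_nonneg (mul_nonneg (sig_pos w B R hB hgrow n).le (Real.exp_pos _).le) (hw0 t)))]
  rw [growth_integral w B R hB hgrow n]
  simp

/-- The travel pieces cost at most `(1/2)^n` against any measure with `W ≤ B`. -/
lemma travel_piece_bound (m : Measure ℝ)
    (hWB : ∀ t, (∫⁻ y in Ioi t, ENNReal.ofReal y ∂m) ≤ ENNReal.ofReal B) (n : ℕ) :
    ∫⁻ t in Ioc (pos w B R n) (rr w B R n),
      ENNReal.ofReal (sl w B R t * Real.exp (ff w B R t))
        * (∫⁻ y in Ioi t, ENNReal.ofReal y ∂m) ∂volume ≤ ENNReal.ofReal ((1/2)^n) := by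
  have hgap := pos_lt_rr w B R hB hgrow n
  have hgap1 := rr_gap w B R hB hgrow n
  have heta0 := eta_pos w B R hB hgrow n
  have hbound : ∀ t ∈ Ioc (pos w B R n) (rr w B R n),
      ENNReal.ofReal (sl w B R t * Real.exp (ff w B R t))
        * (∫⁻ y in Ioi t, ENNReal.ofReal y ∂m)
      ≤ ENNReal.ofReal (eta w B R n * Real.exp (vr w B R n)) * ENNReal.ofReal B := by
    intro t ht
    have hPt1 : Pt w B R (2*n) = pos w B R n := Pt_even w B R n
    have hPt2 : Pt w B R (2*n+1) = rr w B R n := Pt_odd w B R n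
    have hsl : sl w B R t ≤ eta w B R n := by
      have h1 : sl w B R (Pt w B R (2*n)) = Sl w B R (2*n) :=
        sl_eq w B R hB hgrow le_rfl (Pt_lt_succ w B R hB hgrow (2*n))
      have h2 : sl w B R t ≤ sl w B R (Pt w B R (2*n)) := by
        apply sl_antitone w B R hB hgrow
        rw [hPt1]; exact le_of_lt ht.1
      rw [h1, Sl_even] at h2
      exact h2
    have hff : ff w B R t ≤ vr w B R n := by
      have h1 : ff w B R t ≤ ff w B R (rr w B R n) := ff_mono w B R hB hgrow ht.2
      have h2 : ff w B R (rr w B R n) = vr w B R n := by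
        rw [← Pt_odd w B R n, ff_knot_odd w B R hB hgrow]
      linarith
    refine mul_le_mul' (ENNReal.ofReal_le_ofReal ?_) (hWB t)
    have h3 := sl_pos w B R hB hgrow t
    have h4 : Real.exp (ff w B R t) ≤ Real.exp (vr w B R n) := Real.exp_le_exp.mpr hff
    nlinarith [Real.exp_pos (ff w B R t)]
  calc ∫⁻ t in Ioc (pos w B R n) (rr w B R n),
        ENNReal.ofReal (sl w B R t * Real.exp (ff w B R t))
          * (∫⁻ y in Ioi t, ENNReal.ofReal y ∂m) ∂volume
      ≤ ∫⁻ _ in Ioc (pos w B R n) (rr w B R n),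
          ENNReal.ofReal (eta w B R n * Real.exp (vr w B R n)) * ENNReal.ofReal B ∂volume := by
        exact setLIntegral_mono measurable_const hbound
    _ = ENNReal.ofReal (eta w B R n * Real.exp (vr w B R n)) * ENNReal.ofReal B
          * ENNReal.ofReal (rr w B R n - pos w B R n) := by
        rw [setLIntegral_const, Real.volume_Ioc]
    _ ≤ ENNReal.ofReal ((1/2)^n) := by
        rw [← ENNReal.ofReal_mul (by positivity), ← ENNReal.ofReal_mul (by positivity)]
        apply ENNReal.ofReal_le_ofReal
        -- real arithmetic
        have h1 : eta w B R n ≤ (1/2)^n / ((rr w B R n - pos w B R n) * (B+1)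
            * Real.exp (val w B R n + 1)) := le_trans (min_le_right _ _) (min_le_left _ _)
        have hmr : eta w B R n ≤ 1/(rr w B R n - pos w B R n) :=
          le_trans (min_le_right _ _) (min_le_right _ _)
        have h2 : eta w B R n * (rr w B R n - pos w B R n) ≤ 1 := by
          calc eta w B R n * (rr w B R n - pos w B R n)
              ≤ (1/(rr w B R n - pos w B R n)) * (rr w B R n - pos w B R n) :=
                mul_le_mul_of_nonneg_right hmr (by linarith)
            _ = 1 := by rw [one_div, inv_mul_cancel₀ (by linarith)]
        have h3 : Real.exp (vr w B R n) ≤ Real.exp (val w B R n + 1) := by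
          apply Real.exp_le_exp.mpr
          unfold vr
          linarith
        have h4 : (0:ℝ) < Real.exp (val w B R n + 1) := Real.exp_pos _
        have h5 : eta w B R n * ((rr w B R n - pos w B R n) * (B+1)
            * Real.exp (val w B R n + 1)) ≤ (1/2)^n := by
          have hpos : (0:ℝ) < (rr w B R n - pos w B R n) * (B+1)
              * Real.exp (val w B R n + 1) :=
            mul_pos (mul_pos (by linarith) (by linarith)) h4
          calc eta w B R n * ((rr w B R n - pos w B R n) * (B+1) * Real.exp (val w B R n + 1))
              ≤ ((1/2)^n / ((rr w B R n - pos w B R n) * (B+1) * Real.exp (val w B R n + 1)))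
                * ((rr w B R n - pos w B R n) * (B+1) * Real.exp (val w B R n + 1)) := by
                apply mul_le_mul_of_nonneg_right h1 (le_of_lt hpos)
            _ = (1/2)^n := by rw [div_mul_cancel₀ _ (ne_of_gt hpos)]
        have e2 : B * Real.exp (vr w B R n) ≤ (B+1) * Real.exp (val w B R n + 1) := by
          nlinarith [Real.exp_pos (vr w B R n), mul_le_mul_of_nonneg_left h3 hB]
        calc eta w B R n * Real.exp (vr w B R n) * B * (rr w B R n - pos w B R n)
            = (eta w B R n * (rr w B R n - pos w B R n)) * (B * Real.exp (vr w B R n)) := by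
              ring
          _ ≤ (eta w B R n * (rr w B R n - pos w B R n))
              * ((B+1) * Real.exp (val w B R n + 1)) := by
              apply mul_le_mul_of_nonneg_left e2
              exact mul_nonneg heta0.le (by linarith)
          _ = eta w B R n * ((rr w B R n - pos w B R n) * (B+1)
              * Real.exp (val w B R n + 1)) := by ring
          _ ≤ (1/2)^n := h5

lemma growth_disjoint : Pairwise (Function.onFun Disjoint
    (fun n => Ioc (rr w B R n) (pos w B R (n+1)))) := by
  have key : ∀ m n, m < n → Disjoint (Ioc (rr w B R m) (pos w B R (m+1)))
      (Ioc (rr w B R n) (pos w B R (n+1))) := by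
    intro m n hmn
    rw [Set.disjoint_left]
    intro t htm htn
    have h1 : pos w B R (m+1) ≤ pos w B R n := pos_mono w B R hB hgrow hmn
    have h2 := pos_lt_rr w B R hB hgrow n
    have := htm.2
    have := htn.1
    linarith
  intro m n hmn
  rcases lt_or_gt_of_ne hmn with h | h
  · exact key m n h
  · exact (key n m h).symm

lemma growth_subset_Ioi (n : ℕ) : Ioc (rr w B R n) (pos w B R (n+1)) ⊆ Ioi 0 := by
  intro t ht
  have := rr_one_le w B R hB hgrow n
  have := ht.1
  simp only [mem_Ioi]
  linarith

lemma divergence_lintegral (m : Measure ℝ) [IsFiniteMeasure m]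
    (hw : ∀ t, ENNReal.ofReal (w t) = ∫⁻ y in Ioi t, ENNReal.ofReal y ∂m)
    (hw0 : ∀ t, 0 ≤ w t) (hwB : ∀ t, w t ≤ B) (hwmeas : Measurable w) :
    ∫⁻ t in Ioi 0, ENNReal.ofReal (sl w B R t * Real.exp (ff w B R t))
      * (∫⁻ y in Ioi t, ENNReal.ofReal y ∂m) ∂volume = ∞ := by
  rw [eq_top_iff]
  calc (⊤ : ℝ≥0∞) = ∑' (n : ℕ), (1:ℝ≥0∞) := by
        rw [ENNReal.tsum_const_eq_top_of_ne_zero one_ne_zero]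
    _ = ∑' (n : ℕ), ∫⁻ t in Ioc (rr w B R n) (pos w B R (n+1)),
          ENNReal.ofReal (sl w B R t * Real.exp (ff w B R t))
            * (∫⁻ y in Ioi t, ENNReal.ofReal y ∂m) ∂volume := by
        congr 1
        funext n
        rw [growth_piece_lintegral w B R hB hgrow m hw hw0 hwB hwmeas n]
    _ = ∫⁻ t in ⋃ n, Ioc (rr w B R n) (pos w B R (n+1)),
          ENNReal.ofReal (sl w B R t * Real.exp (ff w B R t))
            * (∫⁻ y in Ioi t, ENNReal.ofReal y ∂m) ∂volume := by
        rw [lintegral_iUnion (fun n => measurableSet_Ioc) (growth_disjoint w B R hB hgrow)]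
    _ ≤ ∫⁻ t in Ioi 0, ENNReal.ofReal (sl w B R t * Real.exp (ff w B R t))
          * (∫⁻ y in Ioi t, ENNReal.ofReal y ∂m) ∂volume := by
        apply lintegral_mono_set
        exact iUnion_subset (growth_subset_Ioi w B R hB hgrow)

lemma cover_Ioi : Ioi (0:ℝ) ⊆ ⋃ k, Ioc (Pt w B R k) (Pt w B R (k+1)) := by
  intro t ht
  obtain ⟨k, h1, h2⟩ := exists_piece w B R hB hgrow (le_of_lt ht)
  rcases eq_or_lt_of_le h1 with heq | hlt
  · match k, heq with
    | 0, heq =>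
      exfalso
      rw [Pt_zero] at heq
      rw [← heq] at ht
      exact lt_irrefl _ (mem_Ioi.mp ht)
    | (j+1), heq =>
      apply mem_iUnion.mpr ⟨j, ?_⟩
      constructor
      · rw [← heq]; exact Pt_lt_succ w B R hB hgrow j
      · rw [← heq]
  · exact mem_iUnion.mpr ⟨k, hlt, le_of_lt h2⟩

end Construction

/-- Abstract form of the main theorem, for pushforward measures on `ℝ`. -/
theorem abstract_main (μ κ : Measure ℝ) [IsFiniteMeasure μ] [IsFiniteMeasure κ]
    (hμ0 : μ (Iio 0) = 0) (hκ0 : κ (Iio 0) = 0)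
    (hμint : ∫⁻ x, ENNReal.ofReal x ∂μ ≠ ∞)
    (hκint : ∫⁻ x, ENNReal.ofReal x ∂κ ≠ ∞)
    (hμheavy : ∀ σ > (0:ℝ), ∫⁻ x, ENNReal.ofReal (Real.exp (σ * x)) ∂μ = ∞)
    (hoo : ∀ ε > (0:ℝ), ∃ Rp : ℝ, ∀ x ≥ Rp, κ (Ioi x) ≤ ENNReal.ofReal ε * μ (Ioi x)) :
    ∃ f : ℝ → ℝ, StrictMonoOn f (Ici (0:ℝ)) ∧ ConcaveOn ℝ (Ici (0:ℝ)) f ∧ Continuous f ∧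
      (∫⁻ x, ENNReal.ofReal (x * Real.exp (f x)) ∂μ = ∞) ∧
      (∫⁻ x, ENNReal.ofReal (x * Real.exp (f x)) ∂κ < ∞) := by
  classical
  set w : ℝ → ℝ := fun t => (∫⁻ y in Ioi t, ENNReal.ofReal y ∂μ).toReal with hwdef
  set B : ℝ := (∫⁻ x, ENNReal.ofReal x ∂μ).toReal + (∫⁻ x, ENNReal.ofReal x ∂κ).toReal
    with hBdef
  set R : ℕ → ℝ := fun n => (hoo ((1/2)^n) (by positivity)).choose with hRdef
  have hRspec : ∀ (n : ℕ) (x : ℝ), R n ≤ x →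
      κ (Ioi x) ≤ ENNReal.ofReal ((1/2)^n) * μ (Ioi x) := by
    intro n x hx
    exact (hoo ((1/2)^n) (by positivity)).choose_spec x hx
  have hWfin : ∀ t, (∫⁻ y in Ioi t, ENNReal.ofReal y ∂μ) ≠ ∞ :=
    fun t => ne_top_of_le_ne_top hμint (setLIntegral_le_lintegral _ _)
  have hw : ∀ t, ENNReal.ofReal (w t) = ∫⁻ y in Ioi t, ENNReal.ofReal y ∂μ :=
    fun t => ENNReal.ofReal_toReal (hWfin t)
  have hw0 : ∀ t, 0 ≤ w t := fun t => ENNReal.toReal_nonneg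
  have hwB : ∀ t, w t ≤ B := by
    intro t
    rw [hBdef, hwdef]
    have h1 : (∫⁻ y in Ioi t, ENNReal.ofReal y ∂μ).toReal
        ≤ (∫⁻ x, ENNReal.ofReal x ∂μ).toReal :=
      ENNReal.toReal_mono hμint (setLIntegral_le_lintegral _ _)
    have h2 : (0:ℝ) ≤ (∫⁻ x, ENNReal.ofReal x ∂κ).toReal := ENNReal.toReal_nonneg
    simp only
    linarith
  have hwanti : Antitone w := by
    intro t u htu
    exact ENNReal.toReal_mono (hWfin t) (lintegral_mono_set (Ioi_subset_Ioi htu))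
  have hwmeas : Measurable w := hwanti.measurable
  have hB : 0 ≤ B := by
    rw [hBdef]
    have h1 : (0:ℝ) ≤ (∫⁻ x, ENNReal.ofReal x ∂μ).toReal := ENNReal.toReal_nonneg
    have h2 : (0:ℝ) ≤ (∫⁻ x, ENNReal.ofReal x ∂κ).toReal := ENNReal.toReal_nonneg
    linarith
  -- the key growth property
  have hgrow : ∀ (r v σ : ℝ), 1 ≤ r → 0 < σ → σ ≤ 1 →
      r < grow w r v σ ∧
      (∫ t in Ioc r (grow w r v σ), σ * Real.exp (v + σ * (t - r)) * w t) = 1 := by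
    intro r v σ hr hσ0 hσ1
    have hex : ∃ b, r < b ∧ (∫ t in Ioc r b, σ * Real.exp (v + σ * (t - r)) * w t) = 1 := by
      set g : ℝ → ℝ := fun t => σ * Real.exp (v + σ * (t - r)) * w t with hgdef
      have hgmeas : Measurable g := by
        apply Measurable.mul
        apply Measurable.mul measurable_const
        · exact (Real.continuous_exp.measurable).comp
            ((measurable_const.add ((measurable_id.sub_const _).const_mul _)).comp measurable_id)
        · exact hwmeas
      have hgnn : ∀ t, 0 ≤ g t := fun t => by
        have := hw0 t
        have := Real.exp_pos (v + σ * (t - r))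
        rw [hgdef]
        positivity
      -- divergence of the upper lintegral
      have hdiv : ∫⁻ t in Ioi r, ENNReal.ofReal (g t) ∂volume = ∞ := by
        have hbase := heavy_tail_lintegral μ hμ0 hσ0 (hμheavy σ hσ0) r
        rw [eq_top_iff, ← ENNReal.mul_top (a := ENNReal.ofReal (σ * Real.exp (v - σ * r)))
          (by
            simp only [ne_eq, ENNReal.ofReal_eq_zero, not_le]
            have := Real.exp_pos (v - σ * r)
            positivity), ← hbase]
        rw [← lintegral_const_mul _ (by
          apply Measurable.mul
          · exact ENNReal.measurable_ofReal.comp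
              (Real.continuous_exp.measurable.comp (measurable_const.mul measurable_id))
          · exact Antitone.measurable (fun a b hab => measure_mono (Ioi_subset_Ioi hab)))]
        apply setLIntegral_mono (ENNReal.measurable_ofReal.comp hgmeas)
        intro t htr
        have ht1 : 1 ≤ t := le_trans hr (le_of_lt htr)
        calc ENNReal.ofReal (σ * Real.exp (v - σ * r))
              * (ENNReal.ofReal (Real.exp (σ * t)) * μ (Ioi t))
            = ENNReal.ofReal (σ * Real.exp (v - σ * r) * Real.exp (σ * t)) * μ (Ioi t) := by
              rw [ENNReal.ofReal_mul (p := σ * Real.exp (v - σ * r))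
                (mul_nonneg hσ0.le (Real.exp_pos _).le), mul_assoc]
          _ = ENNReal.ofReal (σ * Real.exp (v + σ * (t - r))) * μ (Ioi t) := by
              congr 2
              rw [mul_assoc, ← Real.exp_add]
              congr 2
              ring
          _ ≤ ENNReal.ofReal (σ * Real.exp (v + σ * (t - r))) * (ENNReal.ofReal t * μ (Ioi t)) := by
              apply mul_le_mul_right
              conv_lhs => rw [← one_mul (μ (Ioi t))]
              apply mul_le_mul_left
              rw [show (1:ℝ≥0∞) = ENNReal.ofReal 1 by simp]
              exact ENNReal.ofReal_le_ofReal ht1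
          _ ≤ ENNReal.ofReal (g t) := by
              have htail : ENNReal.ofReal t * μ (Ioi t)
                  ≤ ∫⁻ y in Ioi t, ENNReal.ofReal y ∂μ := by
                rw [← setLIntegral_const]
                apply setLIntegral_mono ENNReal.measurable_ofReal
                intro y hy
                exact ENNReal.ofReal_le_ofReal (le_of_lt hy)
              rw [hgdef]
              calc ENNReal.ofReal (σ * Real.exp (v + σ * (t - r)))
                    * (ENNReal.ofReal t * μ (Ioi t))
                  ≤ ENNReal.ofReal (σ * Real.exp (v + σ * (t - r)))
                    * ENNReal.ofReal (w t) := by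
                    rw [hw t]
                    exact mul_le_mul_right htail _
                _ = ENNReal.ofReal (σ * Real.exp (v + σ * (t - r)) * w t) := by
                    rw [← ENNReal.ofReal_mul (by
                      have := Real.exp_pos (v + σ * (t - r)); positivity)]
      -- find a large piece
      obtain ⟨M, hMr, hM2⟩ := exists_Ioc_big (ENNReal.measurable_ofReal.comp hgmeas) r hdiv
      -- convert to a real integral
      have hbd : ∀ b : ℝ, ∃ C : ℝ, 0 ≤ C ∧ ∀ x ∈ Ioc r b, g x ≤ C := by
        intro b
        refine ⟨σ * Real.exp (v + σ * (b - r)) * B, by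
          have := Real.exp_pos (v + σ * (b - r)); positivity, ?_⟩
        intro x hx
        have h1 : Real.exp (v + σ * (x - r)) ≤ Real.exp (v + σ * (b - r)) := by
          apply Real.exp_le_exp.mpr
          have := hx.2
          nlinarith
        have h2 := hw0 x
        have h3 := hwB x
        rw [hgdef]
        have e1 : σ * Real.exp (v + σ * (x - r)) * w x
            ≤ σ * Real.exp (v + σ * (x - r)) * B :=
          mul_le_mul_of_nonneg_left h3 (by
            have := Real.exp_pos (v + σ * (x - r)); positivity)
        have e2 : σ * Real.exp (v + σ * (x - r)) * B ≤ σ * Real.exp (v + σ * (b - r)) * B :=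
          mul_le_mul_of_nonneg_right (mul_le_mul_of_nonneg_left h1 hσ0.le) hB
        exact le_trans e1 e2
      have hintM : IntegrableOn g (Ioc r M) volume := by
        obtain ⟨C, hC0, hC⟩ := hbd M
        apply integrableOn_of_bounded'' measurableSet_Ioc
          (by rw [Real.volume_Ioc]; exact ENNReal.ofReal_lt_top) hgmeas (C := C)
        intro x hx
        rw [abs_of_nonneg (hgnn x)]
        exact hC x hx
      have hreal2 : (2:ℝ) ≤ ∫ t in Ioc r M, g t := by
        have hconv : ENNReal.ofReal (∫ t in Ioc r M, g t)
            = ∫⁻ t in Ioc r M, ENNReal.ofReal (g t) ∂volume :=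
          MeasureTheory.ofReal_integral_eq_lintegral_ofReal hintM
            (ae_of_all _ (fun t => hgnn t))
        have := le_trans hM2 (le_of_eq hconv.symm)
        rwa [ENNReal.ofReal_le_ofReal_iff (integral_nonneg (fun t => hgnn t))] at this
      obtain ⟨b, hb1, _, hb3⟩ := exists_integral_one hgmeas hgnn r hbd hMr hreal2
      exact ⟨b, hb1, hb3⟩
    constructor
    · unfold grow
      rw [dif_pos hex]
      exact hex.choose_spec.1
    · unfold grow
      rw [dif_pos hex]
      exact hex.choose_spec.2
  -- the function
  refine ⟨ff w B R, ff_strictMonoOn w B R hB hgrow, ff_concave w B R hB hgrow,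
    ff_continuous w B R hB hgrow, ?_, ?_⟩
  · -- divergence
    rw [main_identity w B R hB hgrow μ hμ0,
      divergence_lintegral w B R hB hgrow μ hw hw0 hwB hwmeas]
    simp
  · -- convergence
    rw [main_identity w B R hB hgrow κ hκ0]
    have hJ : ∫⁻ t in Ioi 0, ENNReal.ofReal (sl w B R t * Real.exp (ff w B R t))
        * (∫⁻ y in Ioi t, ENNReal.ofReal y ∂κ) ∂volume
        ≤ ∑' (k : ℕ), ENNReal.ofReal ((1/2:ℝ)^(k/2)) := by
      calc ∫⁻ t in Ioi 0, ENNReal.ofReal (sl w B R t * Real.exp (ff w B R t))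
            * (∫⁻ y in Ioi t, ENNReal.ofReal y ∂κ) ∂volume
          ≤ ∫⁻ t in ⋃ k, Ioc (Pt w B R k) (Pt w B R (k+1)),
              ENNReal.ofReal (sl w B R t * Real.exp (ff w B R t))
                * (∫⁻ y in Ioi t, ENNReal.ofReal y ∂κ) ∂volume :=
            lintegral_mono_set (cover_Ioi w B R hB hgrow)
        _ ≤ ∑' (k : ℕ), ∫⁻ t in Ioc (Pt w B R k) (Pt w B R (k+1)),
              ENNReal.ofReal (sl w B R t * Real.exp (ff w B R t))
                * (∫⁻ y in Ioi t, ENNReal.ofReal y ∂κ) ∂volume :=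
            lintegral_iUnion_le _ _
        _ ≤ ∑' (k : ℕ), ENNReal.ofReal ((1/2:ℝ)^(k/2)) := by
            apply ENNReal.tsum_le_tsum
            intro k
            rcases Nat.even_or_odd k with ⟨n, hn⟩ | ⟨n, hn⟩
            · -- travel piece
              subst hn
              have hk : n + n = 2*n := by ring
              rw [hk, Pt_even, Pt_odd, show (2*n)/2 = n by omega]
              apply travel_piece_bound w B R hB hgrow κ
              intro t
              calc ∫⁻ y in Ioi t, ENNReal.ofReal y ∂κ
                  ≤ ∫⁻ x, ENNReal.ofReal x ∂κ := setLIntegral_le_lintegral _ _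
                _ = ENNReal.ofReal ((∫⁻ x, ENNReal.ofReal x ∂κ).toReal) :=
                    (ENNReal.ofReal_toReal hκint).symm
                _ ≤ ENNReal.ofReal B := ENNReal.ofReal_le_ofReal (by
                    rw [hBdef]
                    have : (0:ℝ) ≤ (∫⁻ x, ENNReal.ofReal x ∂μ).toReal :=
                      ENNReal.toReal_nonneg
                    linarith)
            · -- growth piece
              subst hn
              have h1 : Pt w B R (2*n+1) = rr w B R n := Pt_odd w B R n
              have h2 : Pt w B R (2*n+1+1) = pos w B R (n+1) := by
                rw [show 2*n+1+1 = 2*(n+1) by ring, Pt_even]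
              rw [h1, h2, show (2*n+1)/2 = n by omega]
              -- comparison on the growth piece
              have hcomp : ∀ t ∈ Ioc (rr w B R n) (pos w B R (n+1)),
                  ENNReal.ofReal (sl w B R t * Real.exp (ff w B R t))
                    * (∫⁻ y in Ioi t, ENNReal.ofReal y ∂κ)
                  ≤ ENNReal.ofReal ((1/2)^n)
                    * (ENNReal.ofReal (sl w B R t * Real.exp (ff w B R t))
                      * (∫⁻ y in Ioi t, ENNReal.ofReal y ∂μ)) := by
                intro t ht
                have htR : R n ≤ t := by
                  have h3 : R n + 1 ≤ rr w B R n := le_max_right _ _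
                  have := ht.1
                  linarith
                have ht0 : (0:ℝ) ≤ t := by
                  have := rr_one_le w B R hB hgrow n
                  have := ht.1
                  linarith
                have hWcomp : (∫⁻ y in Ioi t, ENNReal.ofReal y ∂κ)
                    ≤ ENNReal.ofReal ((1/2)^n) * (∫⁻ y in Ioi t, ENNReal.ofReal y ∂μ) := by
                  rw [tail_formula κ ht0, tail_formula μ ht0, mul_add]
                  apply add_le_add
                  · rw [← mul_assoc, mul_comm (ENNReal.ofReal ((1/2:ℝ)^n)) (ENNReal.ofReal t),
                      mul_assoc]
                    exact mul_le_mul_right (hRspec n t htR) _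
                  · rw [← lintegral_const_mul _
                      (Antitone.measurable (fun a b hab => measure_mono (Ioi_subset_Ioi hab)))]
                    apply setLIntegral_mono (by
                      apply Measurable.const_mul
                      exact Antitone.measurable (fun a b hab => measure_mono (Ioi_subset_Ioi hab)))
                    intro u hu
                    exact hRspec n u (le_trans htR (le_of_lt hu))
                calc ENNReal.ofReal (sl w B R t * Real.exp (ff w B R t))
                      * (∫⁻ y in Ioi t, ENNReal.ofReal y ∂κ)
                    ≤ ENNReal.ofReal (sl w B R t * Real.exp (ff w B R t))
                      * (ENNReal.ofReal ((1/2)^n) * (∫⁻ y in Ioi t, ENNReal.ofReal y ∂μ)) :=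
                      mul_le_mul_right hWcomp _
                  _ = ENNReal.ofReal ((1/2)^n)
                      * (ENNReal.ofReal (sl w B R t * Real.exp (ff w B R t))
                        * (∫⁻ y in Ioi t, ENNReal.ofReal y ∂μ)) := by ring
              calc ∫⁻ t in Ioc (rr w B R n) (pos w B R (n+1)),
                    ENNReal.ofReal (sl w B R t * Real.exp (ff w B R t))
                      * (∫⁻ y in Ioi t, ENNReal.ofReal y ∂κ) ∂volume
                  ≤ ∫⁻ t in Ioc (rr w B R n) (pos w B R (n+1)),
                      ENNReal.ofReal ((1/2)^n)
                        * (ENNReal.ofReal (sl w B R t * Real.exp (ff w B R t))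
                          * (∫⁻ y in Ioi t, ENNReal.ofReal y ∂μ)) ∂volume := by
                    apply setLIntegral_mono ?_ hcomp
                    apply Measurable.const_mul
                    apply Measurable.mul
                    · exact ENNReal.measurable_ofReal.comp (slff_measurable w B R hB hgrow)
                    · exact Antitone.measurable (fun a b hab =>
                        lintegral_mono_set (Ioi_subset_Ioi hab))
                _ = ENNReal.ofReal ((1/2)^n) * ∫⁻ t in Ioc (rr w B R n) (pos w B R (n+1)),
                      ENNReal.ofReal (sl w B R t * Real.exp (ff w B R t))
                        * (∫⁻ y in Ioi t, ENNReal.ofReal y ∂μ) ∂volume := by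
                    rw [lintegral_const_mul]
                    apply Measurable.mul
                    · exact ENNReal.measurable_ofReal.comp (slff_measurable w B R hB hgrow)
                    · exact Antitone.measurable (fun a b hab =>
                        lintegral_mono_set (Ioi_subset_Ioi hab))
                _ = ENNReal.ofReal ((1/2)^n) := by
                    rw [growth_piece_lintegral w B R hB hgrow μ hw hw0 hwB hwmeas n, mul_one]
    have hsum : ∑' (k : ℕ), ENNReal.ofReal ((1/2:ℝ)^(k/2)) < ∞ := by
      have := tsum_even_add_odd (f := fun k => ENNReal.ofReal ((1/2:ℝ)^(k/2)))
        ENNReal.summable ENNReal.summable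
      rw [← this]
      have hgeo : ∑' (n : ℕ), ENNReal.ofReal ((1/2:ℝ)^n) < ∞ := by
        have : ∀ n : ℕ, ENNReal.ofReal ((1/2:ℝ)^n) = (ENNReal.ofReal (1/2))^n :=
          fun n => ENNReal.ofReal_pow (by norm_num) n
        rw [tsum_congr this, ENNReal.tsum_geometric]
        apply ENNReal.inv_lt_top.mpr
        rw [tsub_pos_iff_lt]
        exact ENNReal.ofReal_lt_one.mpr (by norm_num)
      have he : ∀ n : ℕ, ENNReal.ofReal ((1/2:ℝ)^((2*n)/2)) = ENNReal.ofReal ((1/2:ℝ)^n) := by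
        intro n; rw [show (2*n)/2 = n by omega]
      have ho : ∀ n : ℕ, ENNReal.ofReal ((1/2:ℝ)^((2*n+1)/2)) = ENNReal.ofReal ((1/2:ℝ)^n) := by
        intro n; rw [show (2*n+1)/2 = n by omega]
      rw [tsum_congr he, tsum_congr ho]
      exact ENNReal.add_lt_top.mpr ⟨hgeo, hgeo⟩
    calc (∫⁻ x, ENNReal.ofReal x ∂κ) + ∫⁻ t in Ioi 0,
          ENNReal.ofReal (sl w B R t * Real.exp (ff w B R t))
            * (∫⁻ y in Ioi t, ENNReal.ofReal y ∂κ) ∂volume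
        ≤ (∫⁻ x, ENNReal.ofReal x ∂κ) + ∑' (k : ℕ), ENNReal.ofReal ((1/2:ℝ)^(k/2)) :=
          add_le_add_right hJ _
      _ < ∞ := ENNReal.add_lt_top.mpr ⟨lt_top_iff_ne_top.mpr hκint, hsum⟩


end SepAux


/-- **Key construction in the proof of Theorem 1.** If `ξ ≥ 0` is heavy-tailed with finite
mean, `τ` is a counting random variable with `E τ < ∞`, and for some `c > E ξ` the tail of
`cτ` is `o(P(ξ > x))` while `cτ` is heavy-tailed, then there is an increasing concave `f`
with `E[ξ e^{f(ξ)}] = ∞` and `E[τ e^{f(cτ)}] < ∞`. -/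
theorem exists_increasing_concave_separating_function
    {Ω : Type*} [MeasurableSpace Ω] (P : Measure Ω) [IsProbabilityMeasure P]
    (ξ : Ω → ℝ) (τ : Ω → ℕ)
    (hξmeas : Measurable ξ) (hτmeas : Measurable τ)
    (hξnonneg : ∀ ω, 0 ≤ ξ ω)
    (hheavy : ∀ ε > (0 : ℝ), ∫⁻ ω, ENNReal.ofReal (Real.exp (ε * ξ ω)) ∂P = ∞)
    (hξint : Integrable ξ P)
    (hτint : Integrable (fun ω => (τ ω : ℝ)) P)
    (c : ℝ) (hc : ∫ ω, ξ ω ∂P < c)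
    (hlittleo : (fun x => (P {ω | c * (τ ω : ℝ) > x}).toReal)
        =o[atTop] (fun x => (P {ω | ξ ω > x}).toReal))
    (hτheavy : ∀ ε > (0 : ℝ),
        ∫⁻ ω, ENNReal.ofReal (Real.exp (ε * (c * (τ ω : ℝ)))) ∂P = ∞) :
    ∃ f : ℝ → ℝ, StrictMonoOn f (Set.Ici (0 : ℝ)) ∧
      ConcaveOn ℝ (Set.Ici (0 : ℝ)) f ∧
      (∫⁻ ω, ENNReal.ofReal (ξ ω * Real.exp (f (ξ ω))) ∂P = ∞) ∧
      (∫⁻ ω, ENNReal.ofReal ((τ ω : ℝ) * Real.exp (f (c * (τ ω : ℝ)))) ∂P < ∞) := by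
  classical
  have hc0 : (0:ℝ) < c := lt_of_le_of_lt (integral_nonneg hξnonneg) hc
  have hcast : Measurable (fun n : ℕ => (n : ℝ)) := measurable_from_top
  have hηmeas : Measurable (fun ω => c * (τ ω : ℝ)) :=
    measurable_const.mul (hcast.comp hτmeas)
  have hηnonneg : ∀ ω, 0 ≤ c * (τ ω : ℝ) := fun ω => by positivity
  set μ : Measure ℝ := P.map ξ with hμdef
  set κ : Measure ℝ := P.map (fun ω => c * (τ ω : ℝ)) with hκdef
  haveI : IsProbabilityMeasure μ := Measure.isProbabilityMeasure_map hξmeas.aemeasurable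
  haveI : IsProbabilityMeasure κ := Measure.isProbabilityMeasure_map hηmeas.aemeasurable
  have hμIoi : ∀ x : ℝ, μ (Ioi x) = P {ω | ξ ω > x} := by
    intro x
    rw [hμdef, Measure.map_apply hξmeas measurableSet_Ioi]
    rfl
  have hκIoi : ∀ x : ℝ, κ (Ioi x) = P {ω | c * (τ ω : ℝ) > x} := by
    intro x
    rw [hκdef, Measure.map_apply hηmeas measurableSet_Ioi]
    rfl
  have hμ0 : μ (Iio 0) = 0 := by
    rw [hμdef, Measure.map_apply hξmeas measurableSet_Iio]
    have : ξ ⁻¹' (Iio 0) = ∅ := by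
      ext ω
      simp only [mem_preimage, mem_Iio, mem_empty_iff_false, iff_false, not_lt]
      exact hξnonneg ω
    rw [this, measure_empty]
  have hκ0 : κ (Iio 0) = 0 := by
    rw [hκdef, Measure.map_apply hηmeas measurableSet_Iio]
    have : (fun ω => c * (τ ω : ℝ)) ⁻¹' (Iio 0) = ∅ := by
      ext ω
      simp only [mem_preimage, mem_Iio, mem_empty_iff_false, iff_false, not_lt]
      exact hηnonneg ω
    rw [this, measure_empty]
  have hμint : ∫⁻ x, ENNReal.ofReal x ∂μ ≠ ∞ := by
    rw [hμdef, lintegral_map ENNReal.measurable_ofReal hξmeas]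
    have heq : ∀ ω, ENNReal.ofReal (ξ ω) = (‖ξ ω‖₊ : ℝ≥0∞) := by
      intro ω
      rw [← enorm_eq_nnnorm, ← ofReal_norm_eq_enorm, Real.norm_eq_abs, abs_of_nonneg (hξnonneg ω)]
    rw [lintegral_congr heq]
    exact hξint.hasFiniteIntegral.ne
  have hτlint : ∫⁻ ω, ENNReal.ofReal ((τ ω : ℝ)) ∂P ≠ ∞ := by
    have heq : ∀ ω, ENNReal.ofReal ((τ ω : ℝ)) = (‖(τ ω : ℝ)‖₊ : ℝ≥0∞) := by
      intro ω
      rw [← enorm_eq_nnnorm, ← ofReal_norm_eq_enorm, Real.norm_eq_abs, abs_of_nonneg (Nat.cast_nonneg _)]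
    rw [lintegral_congr heq]
    exact hτint.hasFiniteIntegral.ne
  have hκint : ∫⁻ x, ENNReal.ofReal x ∂κ ≠ ∞ := by
    rw [hκdef, lintegral_map ENNReal.measurable_ofReal hηmeas]
    have heq : ∀ ω, ENNReal.ofReal (c * (τ ω : ℝ))
        = ENNReal.ofReal c * ENNReal.ofReal ((τ ω : ℝ)) :=
      fun ω => ENNReal.ofReal_mul hc0.le
    rw [lintegral_congr heq, lintegral_const_mul _ (by
      exact ENNReal.measurable_ofReal.comp (hcast.comp hτmeas))]
    exact ENNReal.mul_ne_top ENNReal.ofReal_ne_top hτlint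
  have hμheavy : ∀ σ > (0:ℝ), ∫⁻ x, ENNReal.ofReal (Real.exp (σ * x)) ∂μ = ∞ := by
    intro σ hσ
    rw [hμdef, lintegral_map (by fun_prop) hξmeas]
    exact hheavy σ hσ
  have hoo : ∀ ε > (0:ℝ), ∃ Rp : ℝ, ∀ x ≥ Rp, κ (Ioi x) ≤ ENNReal.ofReal ε * μ (Ioi x) := by
    intro ε hε
    have hev := hlittleo.def hε
    rw [Filter.eventually_atTop] at hev
    obtain ⟨a, ha⟩ := hev
    refine ⟨a, fun x hx => ?_⟩
    have h1 := ha x hx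
    rw [Real.norm_eq_abs, Real.norm_eq_abs, abs_of_nonneg ENNReal.toReal_nonneg,
      abs_of_nonneg ENNReal.toReal_nonneg] at h1
    have hfin1 : κ (Ioi x) ≠ ∞ := measure_ne_top κ _
    have hfin2 : μ (Ioi x) ≠ ∞ := measure_ne_top μ _
    rw [hκIoi x, hμIoi x] at *
    calc P {ω | c * (τ ω : ℝ) > x}
        = ENNReal.ofReal ((P {ω | c * (τ ω : ℝ) > x}).toReal) := by
          rw [ENNReal.ofReal_toReal (measure_ne_top P _)]
      _ ≤ ENNReal.ofReal (ε * (P {ω | ξ ω > x}).toReal) := ENNReal.ofReal_le_ofReal h1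
      _ = ENNReal.ofReal ε * ENNReal.ofReal ((P {ω | ξ ω > x}).toReal) :=
          ENNReal.ofReal_mul hε.le
      _ = ENNReal.ofReal ε * P {ω | ξ ω > x} := by
          rw [ENNReal.ofReal_toReal (measure_ne_top P _)]
  obtain ⟨f, hf1, hf2, hfc, hfdiv, hfconv⟩ :=
    SepAux.abstract_main μ κ hμ0 hκ0 hμint hκint hμheavy hoo
  refine ⟨f, hf1, hf2, ?_, ?_⟩
  · rw [← hfdiv, hμdef, lintegral_map ?_ hξmeas]
    exact Measurable.ennreal_ofReal (measurable_id.mul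
      ((Real.continuous_exp.comp hfc).measurable))
  · have hmeasf : Measurable (fun x : ℝ => ENNReal.ofReal (x * Real.exp (f x))) :=
      Measurable.ennreal_ofReal (measurable_id.mul
        ((Real.continuous_exp.comp hfc).measurable))
    have hrw : ∀ ω, ENNReal.ofReal ((τ ω : ℝ) * Real.exp (f (c * (τ ω : ℝ))))
        = ENNReal.ofReal c⁻¹
          * ENNReal.ofReal ((c * (τ ω : ℝ)) * Real.exp (f (c * (τ ω : ℝ)))) := by
      intro ω
      rw [← ENNReal.ofReal_mul (by positivity)]
      congr 1
      field_simp [hc0.ne']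
    calc ∫⁻ ω, ENNReal.ofReal ((τ ω : ℝ) * Real.exp (f (c * (τ ω : ℝ)))) ∂P
        = ∫⁻ ω, ENNReal.ofReal c⁻¹
            * ENNReal.ofReal ((c * (τ ω : ℝ)) * Real.exp (f (c * (τ ω : ℝ)))) ∂P := by
          exact lintegral_congr hrw
      _ = ENNReal.ofReal c⁻¹ * ∫⁻ ω,
            ENNReal.ofReal ((c * (τ ω : ℝ)) * Real.exp (f (c * (τ ω : ℝ)))) ∂P := by
          exact lintegral_const_mul _ (hmeasf.comp hηmeas)
      _ = ENNReal.ofReal c⁻¹ * ∫⁻ x, ENNReal.ofReal (x * Real.exp (f x)) ∂κ := by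
          rw [hκdef, lintegral_map hmeasf hηmeas]
      _ < ∞ := ENNReal.mul_lt_top ENNReal.ofReal_lt_top hfconv
end

section
/- Let F_* and G_* be two heavy-tailed probability distributions on [0,∞) with tails satisfying \bar G_*(x) = o(\bar F_*(x)) as x → ∞. Then there exists an increasing convex function h : [0,∞) → [0,∞) such that ∫_0^∞ e^x \bar F_*(h(x)) dx = ∞ and ∫_0^∞ e^x \bar G_*(h(x)) dx < ∞. -/
open MeasureTheory ProbabilityTheory Filter Real Set
open scoped ENNReal

namespace SepTails

noncomputable def tailR (μ : Measure ℝ) (t : ℝ) : ℝ := (μ (Set.Ioi t)).toReal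

variable {μ : Measure ℝ} [IsProbabilityMeasure μ]

omit [IsProbabilityMeasure μ] in
lemma tailR_nonneg (t : ℝ) : 0 ≤ tailR μ t := ENNReal.toReal_nonneg

lemma ofReal_tailR (t : ℝ) : ENNReal.ofReal (tailR μ t) = μ (Set.Ioi t) :=
  ENNReal.ofReal_toReal (measure_ne_top μ _)

lemma tailR_le_one (t : ℝ) : tailR μ t ≤ 1 := by
  rw [show (1:ℝ) = (1:ℝ≥0∞).toReal by simp]
  exact ENNReal.toReal_mono ENNReal.one_ne_top prob_le_one

lemma tailR_anti : Antitone (tailR (μ := μ)) := by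
  intro a b hab
  exact ENNReal.toReal_mono (measure_ne_top μ _) (measure_mono (Set.Ioi_subset_Ioi hab))

lemma measurable_tailR : Measurable (tailR (μ := μ)) := tailR_anti.measurable

/-- key consequence of heavy-tailedness: the tail beats any exponential, infinitely often -/
lemma exists_tail_gt
    (hheavy : ∀ ε > (0:ℝ), ∫⁻ x, ENNReal.ofReal (Real.exp (ε * x)) ∂μ = ∞)
    {δ : ℝ} (hδ : 0 < δ) (C M : ℝ) :
    ∃ t, M ≤ t ∧ C * Real.exp (-δ * t) < tailR μ t := by
  by_contra hcon
  push_neg at hcon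
  set C' : ℝ := max C 1 with hC'
  have hC'pos : 0 < C' := lt_of_lt_of_le one_pos (le_max_right _ _)
  have hcon' : ∀ t, M ≤ t → tailR μ t ≤ C' * Real.exp (-δ * t) := fun t ht =>
    (hcon t ht).trans (mul_le_mul_of_nonneg_right (le_max_left _ _) (exp_nonneg _))
  have key : (∫⁻ x, ENNReal.ofReal (Real.exp (δ/2 * x)) ∂μ) ≠ ∞ := by
    set f : ℝ → ℝ≥0∞ := fun x => ENNReal.ofReal (Real.exp (δ/2 * x)) with hf
    have hsplit := lintegral_add_compl f (measurableSet_Iic (a := M)) (μ := μ)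
    have hA : (∫⁻ x in Set.Iic M, f x ∂μ) ≤ ENNReal.ofReal (Real.exp (δ/2 * M)) := by
      calc (∫⁻ x in Set.Iic M, f x ∂μ)
          ≤ ∫⁻ _ in Set.Iic M, ENNReal.ofReal (Real.exp (δ/2 * M)) ∂μ := by
            refine setLIntegral_mono' measurableSet_Iic (fun x hx => ?_)
            exact ENNReal.ofReal_le_ofReal
              (exp_le_exp.2 (mul_le_mul_of_nonneg_left hx (by positivity)))
        _ = ENNReal.ofReal (Real.exp (δ/2 * M)) * μ (Set.Iic M) := setLIntegral_const _ _
        _ ≤ ENNReal.ofReal (Real.exp (δ/2 * M)) * 1 := mul_le_mul_right prob_le_one _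
        _ = _ := mul_one _
    have hunion : Set.Ioi M = ⋃ k : ℕ, Set.Ioc (M + k) (M + (k+1)) := by
      ext x
      simp only [Set.mem_Ioi, Set.mem_iUnion, Set.mem_Ioc]
      constructor
      · intro hx
        have hex : ∃ k : ℕ, x ≤ M + ((k:ℝ)+1) := by
          obtain ⟨n, hn⟩ := exists_nat_ge (x - M)
          exact ⟨n, by linarith⟩
        classical
        set k := Nat.find hex with hkdef
        have hk : x ≤ M + ((k:ℝ)+1) := Nat.find_spec hex
        refine ⟨k, ?_, hk⟩
        rcases Nat.eq_zero_or_pos k with hk0 | hkpos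
        · rw [hk0]; simpa using hx
        · have hmin := Nat.find_min hex (m := k-1) (Nat.sub_lt hkpos one_pos)
          push_neg at hmin
          have hcast : ((k-1:ℕ):ℝ) = (k:ℝ) - 1 := by
            rw [Nat.cast_sub hkpos]; norm_num
          rw [hcast] at hmin
          linarith
      · rintro ⟨k, hk1, _⟩
        have hge : (0:ℝ) ≤ (k:ℝ) := Nat.cast_nonneg k
        linarith
    have hdisj : Pairwise (Function.onFun Disjoint
        (fun k : ℕ => Set.Ioc (M + (k:ℝ)) (M + ((k:ℝ)+1)))) := by
      intro i j hij
      rcases hij.lt_or_gt with h | h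
      · refine Set.disjoint_left.2 (fun x hx hx' => ?_)
        have h1 : x ≤ M + ((i:ℝ)+1) := hx.2
        have h2 : M + (j:ℝ) < x := hx'.1
        have : ((i:ℝ)+1) ≤ (j:ℝ) := by exact_mod_cast h
        linarith
      · refine Set.disjoint_left.2 (fun x hx hx' => ?_)
        have h1 : x ≤ M + ((j:ℝ)+1) := hx'.2
        have h2 : M + (i:ℝ) < x := hx.1
        have : ((j:ℝ)+1) ≤ (i:ℝ) := by exact_mod_cast h
        linarith
    set D : ℝ := C' * Real.exp (δ/2 - δ/2 * M) with hD
    set r : ℝ := Real.exp (-(δ/2)) with hr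
    have hterm : ∀ k : ℕ, (∫⁻ x in Set.Ioc (M + (k:ℝ)) (M + ((k:ℝ)+1)), f x ∂μ)
        ≤ ENNReal.ofReal D * (ENNReal.ofReal r) ^ k := by
      intro k
      have hMk : M ≤ M + (k:ℝ) := by
        have : (0:ℝ) ≤ (k:ℝ) := Nat.cast_nonneg k
        linarith
      calc (∫⁻ x in Set.Ioc (M + (k:ℝ)) (M + ((k:ℝ)+1)), f x ∂μ)
          ≤ ∫⁻ _ in Set.Ioc (M + (k:ℝ)) (M + ((k:ℝ)+1)),
              ENNReal.ofReal (Real.exp (δ/2 * (M + ((k:ℝ)+1)))) ∂μ := by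
            refine setLIntegral_mono' measurableSet_Ioc (fun x hx => ?_)
            exact ENNReal.ofReal_le_ofReal
              (exp_le_exp.2 (mul_le_mul_of_nonneg_left hx.2 (by positivity)))
        _ = ENNReal.ofReal (Real.exp (δ/2 * (M + ((k:ℝ)+1)))) *
              μ (Set.Ioc (M + (k:ℝ)) (M + ((k:ℝ)+1))) := setLIntegral_const _ _
        _ ≤ ENNReal.ofReal (Real.exp (δ/2 * (M + ((k:ℝ)+1)))) * μ (Set.Ioi (M + (k:ℝ))) :=
            mul_le_mul_right (measure_mono Set.Ioc_subset_Ioi_self) _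
        _ = ENNReal.ofReal (Real.exp (δ/2 * (M + ((k:ℝ)+1)))) *
              ENNReal.ofReal (tailR μ (M + (k:ℝ))) := by rw [ofReal_tailR]
        _ ≤ ENNReal.ofReal (Real.exp (δ/2 * (M + ((k:ℝ)+1)))) *
              ENNReal.ofReal (C' * Real.exp (-δ * (M + (k:ℝ)))) :=
            mul_le_mul_right (ENNReal.ofReal_le_ofReal (hcon' _ hMk)) _
        _ = ENNReal.ofReal D * (ENNReal.ofReal r) ^ k := by
            rw [← ENNReal.ofReal_pow (exp_nonneg _), ← ENNReal.ofReal_mul (exp_nonneg _),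
              ← ENNReal.ofReal_mul (by positivity)]
            congr 1
            rw [← Real.exp_nat_mul]
            rw [show Real.exp (δ/2 * (M + ((k:ℝ)+1))) * (C' * Real.exp (-δ * (M + (k:ℝ))))
                = C' * Real.exp (δ/2 * (M + ((k:ℝ)+1)) + (-δ * (M + (k:ℝ)))) by
              rw [Real.exp_add]; ring]
            rw [hD, mul_assoc, ← Real.exp_add]
            congr 1
            ring
    have hB : (∫⁻ x in (Set.Iic M)ᶜ, f x ∂μ) ≠ ∞ := by
      rw [Set.compl_Iic, hunion, lintegral_iUnion (fun _ => measurableSet_Ioc) hdisj]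
      have hle : (∑' k : ℕ, ∫⁻ x in Set.Ioc (M + (k:ℝ)) (M + ((k:ℝ)+1)), f x ∂μ)
          ≤ ∑' k : ℕ, ENNReal.ofReal D * (ENNReal.ofReal r) ^ k :=
        ENNReal.tsum_le_tsum hterm
      have hgeo : (∑' k : ℕ, ENNReal.ofReal D * (ENNReal.ofReal r) ^ k)
          = ENNReal.ofReal D * (1 - ENNReal.ofReal r)⁻¹ := by
        rw [ENNReal.tsum_mul_left, ENNReal.tsum_geometric]
      have hrlt : ENNReal.ofReal r < 1 := by
        rw [hr]
        exact ENNReal.ofReal_lt_one.2 (Real.exp_lt_one_iff.2 (by linarith))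
      have hne : (1 - ENNReal.ofReal r) ≠ 0 := by
        rw [ne_eq, tsub_eq_zero_iff_le]
        exact fun h => absurd hrlt (not_lt.2 h)
      refine ne_top_of_le_ne_top ?_ (hle.trans hgeo.le)
      exact ENNReal.mul_ne_top ENNReal.ofReal_ne_top (ENNReal.inv_ne_top.2 hne)
    rw [← hsplit]
    exact ENNReal.add_ne_top.2 ⟨ne_top_of_le_ne_top ENNReal.ofReal_ne_top hA, hB⟩
  exact key (hheavy (δ/2) (half_pos hδ))



noncomputable def phi (μ : Measure ℝ) (T v c : ℝ) (x : ℝ) : ℝ :=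
  Real.exp x * tailR μ (v + c * (x - T))

omit [IsProbabilityMeasure μ] in
lemma phi_nonneg (T v c x : ℝ) : 0 ≤ phi μ T v c x :=
  mul_nonneg (exp_nonneg _) (tailR_nonneg _)

lemma phi_le_exp (T v c x : ℝ) : phi μ T v c x ≤ Real.exp x := by
  have := tailR_le_one (μ := μ) (v + c * (x - T))
  calc phi μ T v c x ≤ Real.exp x * 1 :=
        mul_le_mul_of_nonneg_left this (exp_nonneg _)
    _ = Real.exp x := mul_one _

lemma phi_intervalIntegrable (T v : ℝ) {c : ℝ} (hc : 0 ≤ c) (a b : ℝ) :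
    IntervalIntegrable (phi μ T v c) volume a b := by
  have hmono : Monotone fun x : ℝ => v + c * (x - T) := fun x y hxy => by
    have := mul_le_mul_of_nonneg_left (sub_le_sub_right hxy T) hc
    simp only []
    linarith
  have hanti : Antitone fun x : ℝ => tailR μ (v + c * (x - T)) :=
    tailR_anti.comp_monotone hmono
  exact hanti.intervalIntegrable.continuousOn_mul continuous_exp.continuousOn

lemma J_le (T v : ℝ) {c : ℝ} (hc : 0 ≤ c) {a b : ℝ} (hab : a ≤ b) :
    (∫ x in a..b, phi μ T v c x) ≤ Real.exp b - Real.exp a := by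
  rw [← integral_exp (a := a) (b := b)]
  exact intervalIntegral.integral_mono_on hab (phi_intervalIntegrable T v hc a b)
    (continuous_exp.intervalIntegrable a b) (fun x _ => phi_le_exp T v c x)

lemma exists_J_gt_one
    (hheavy : ∀ ε > (0:ℝ), ∫⁻ x, ENNReal.ofReal (Real.exp (ε * x)) ∂μ = ∞)
    (T v : ℝ) {c : ℝ} (hc : 0 < c) :
    ∃ L, 0 < L ∧ 1 < ∫ x in T..(T+L), phi μ T v c x := by
  obtain ⟨t, ht1, ht2⟩ := exists_tail_gt hheavy (δ := 1/c) (by positivity)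
    (Real.exp (1 - T + v/c)) (v + c)
  set L : ℝ := (t - v)/c with hL
  have hL1 : 1 ≤ L := by
    rw [hL, le_div_iff₀ hc]
    linarith
  have hxt : v + c * ((T + L) - T) = t := by
    rw [hL]; field_simp
    ring
  refine ⟨L, by linarith, ?_⟩
  have hTL : T ≤ T + L - 1 := by linarith
  have hsplit : (∫ x in T..(T+L-1), phi μ T v c x) + (∫ x in (T+L-1)..(T+L), phi μ T v c x)
      = ∫ x in T..(T+L), phi μ T v c x :=
    intervalIntegral.integral_add_adjacent_intervals
      (phi_intervalIntegrable T v hc.le _ _) (phi_intervalIntegrable T v hc.le _ _)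
  have h1 : (0:ℝ) ≤ ∫ x in T..(T+L-1), phi μ T v c x :=
    intervalIntegral.integral_nonneg hTL (fun u _ => phi_nonneg T v c u)
  have h2 : Real.exp (T+L-1) * tailR μ t ≤ ∫ x in (T+L-1)..(T+L), phi μ T v c x := by
    have hconst : (∫ _x in (T+L-1)..(T+L), Real.exp (T+L-1) * tailR μ t)
        = Real.exp (T+L-1) * tailR μ t := by
      rw [intervalIntegral.integral_const]
      have : (T+L) - (T+L-1) = 1 := by ring
      rw [this, one_smul]
    rw [← hconst]
    refine intervalIntegral.integral_mono_on (by linarith)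
      (intervalIntegrable_const) (phi_intervalIntegrable T v hc.le _ _) (fun x hx => ?_)
    have hx1 : T + L - 1 ≤ x := hx.1
    have hx2 : x ≤ T + L := hx.2
    have harg : v + c * (x - T) ≤ t := by
      rw [← hxt]
      have : x - T ≤ T + L - T := by linarith
      nlinarith
    exact mul_le_mul (exp_le_exp.2 hx1) (tailR_anti harg) (tailR_nonneg _) (exp_nonneg _)
  have hval : 1 < Real.exp (T+L-1) * tailR μ t := by
    have hmul := mul_lt_mul_of_pos_left ht2 (exp_pos (T+L-1))
    have : Real.exp (T+L-1) * (Real.exp (1 - T + v/c) * Real.exp (-(1/c) * t)) = 1 := by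
      rw [← Real.exp_add, ← Real.exp_add, ← Real.exp_zero]
      congr 1
      rw [hL]; simp only [Real.exp_zero]; field_simp
      ring
    linarith [hmul, this.ge.trans hmul.le]
  linarith [hsplit, h1, h2]

lemma step_exists
    (hheavy : ∀ ε > (0:ℝ), ∫⁻ x, ENNReal.ofReal (Real.exp (ε * x)) ∂μ = ∞)
    (zz T v p : ℝ) :
    ∃ r : ℝ × ℝ, p < r.1 ∧ 0 < r.1 ∧ 0 < r.2 ∧
      (∫ x in T..(T + r.2), phi μ T v r.1 x) = 1 ∧ zz ≤ v + r.1 * r.2 := by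
  set lg : ℝ := Real.log (1 + Real.exp (-T)) with hlg
  have hlgpos : 0 < lg := Real.log_pos (by linarith [Real.exp_pos (-T)])
  obtain ⟨c, hcdef⟩ : ∃ c : ℝ, c = max p 0 + max (zz - v) 0 / lg + 1 := ⟨_, rfl⟩
  have hcp : p < c := by
    have h1 : p ≤ max p 0 := le_max_left _ _
    have h2 : 0 ≤ max (zz - v) 0 / lg := div_nonneg (le_max_right _ _) hlgpos.le
    linarith
  have hcpos : 0 < c := by
    have h1 : 0 ≤ max p 0 := le_max_right _ _
    have h2 : 0 ≤ max (zz - v) 0 / lg := div_nonneg (le_max_right _ _) hlgpos.le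
    linarith
  have hckey : zz - v < c * lg := by
    have h2 : max (zz - v) 0 / lg * lg = max (zz - v) 0 := by field_simp
    have h3 : zz - v ≤ max (zz - v) 0 := le_max_left _ _
    have h4 : max (zz - v) 0 / lg < c := by
      have h1 : 0 ≤ max p 0 := le_max_right _ _
      linarith
    calc zz - v ≤ max (zz - v) 0 := h3
      _ = max (zz - v) 0 / lg * lg := h2.symm
      _ < c * lg := by exact mul_lt_mul_of_pos_right h4 hlgpos
  obtain ⟨L0, hL0pos, hJ0⟩ := exists_J_gt_one hheavy T v hcpos
  set J : ℝ → ℝ := fun L => ∫ x in T..(T+L), phi μ T v c x with hJdef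
  have hJcont : Continuous J := by
    have := intervalIntegral.continuous_primitive
      (fun a b => phi_intervalIntegrable (μ := μ) T v hcpos.le a b) T
    exact this.comp (continuous_const.add continuous_id)
  have hJ00 : J 0 = 0 := by
    simp only [hJdef, add_zero, intervalIntegral.integral_same]
  have hIVT := intermediate_value_Icc hL0pos.le hJcont.continuousOn
  have h1mem : (1:ℝ) ∈ Set.Icc (J 0) (J L0) := ⟨by rw [hJ00]; norm_num, hJ0.le⟩
  obtain ⟨L, hLmem, hJL⟩ := hIVT h1mem
  have hLpos : 0 < L := by
    rcases lt_or_eq_of_le hLmem.1 with h | h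
    · exact h
    · exfalso; rw [← h] at hJL; rw [hJ00] at hJL; norm_num at hJL
  refine ⟨(c, L), hcp, hcpos, hLpos, hJL, ?_⟩
  by_contra hcon
  push_neg at hcon
  have hLlt : L < lg := by
    have : c * L < zz - v := by linarith
    have := this.trans hckey
    exact lt_of_mul_lt_mul_left (by linarith [this]) hcpos.le
  have hJle : J L ≤ Real.exp (T + L) - Real.exp T := J_le T v hcpos.le (by linarith)
  have hexpL : Real.exp L < 1 + Real.exp (-T) := by
    calc Real.exp L < Real.exp lg := exp_lt_exp.2 hLlt
      _ = 1 + Real.exp (-T) := Real.exp_log (by linarith [Real.exp_pos (-T)])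
  have : Real.exp (T + L) - Real.exp T < 1 := by
    rw [Real.exp_add]
    have h0 : Real.exp T * Real.exp L < Real.exp T * (1 + Real.exp (-T)) :=
      mul_lt_mul_of_pos_left hexpL (exp_pos T)
    have : Real.exp T * (1 + Real.exp (-T)) = Real.exp T + 1 := by
      rw [mul_add, mul_one, ← Real.exp_add]
      simp
    linarith
  rw [hJL] at hJle
  linarith

end SepTails

open SepTails

/-- **Separation of two heavy-tailed distributions.** If `F⋆` and `G⋆` are heavy-tailed
probability distributions on `[0,∞)` with `Ḡ⋆(x) = o(F̄⋆(x))`, then there is an increasing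
convex `h : [0,∞) → [0,∞)` with `∫_0^∞ eˣ F̄⋆(h(x)) dx = ∞` and `∫_0^∞ eˣ Ḡ⋆(h(x)) dx < ∞`. -/
theorem exists_increasing_convex_separating_tails
    (Fstar Gstar : Measure ℝ)
    [IsProbabilityMeasure Fstar] [IsProbabilityMeasure Gstar]
    (hFsupp : Fstar (Set.Iio (0 : ℝ)) = 0) (hGsupp : Gstar (Set.Iio (0 : ℝ)) = 0)
    (hFheavy : ∀ ε > (0 : ℝ), ∫⁻ x, ENNReal.ofReal (Real.exp (ε * x)) ∂Fstar = ∞)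
    (hGheavy : ∀ ε > (0 : ℝ), ∫⁻ x, ENNReal.ofReal (Real.exp (ε * x)) ∂Gstar = ∞)
    (hlittleo : (fun x => (Gstar (Set.Ioi x)).toReal)
        =o[atTop] (fun x => (Fstar (Set.Ioi x)).toReal)) :
    ∃ h : ℝ → ℝ, StrictMonoOn h (Set.Ici (0 : ℝ)) ∧
      ConvexOn ℝ (Set.Ici (0 : ℝ)) h ∧
      (∀ x ∈ Set.Ici (0 : ℝ), 0 ≤ h x) ∧
      (∫⁻ x in Set.Ioi (0 : ℝ),
          ENNReal.ofReal (Real.exp x) * Fstar (Set.Ioi (h x)) = ∞) ∧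
      (∫⁻ x in Set.Ioi (0 : ℝ),
          ENNReal.ofReal (Real.exp x) * Gstar (Set.Ioi (h x)) < ∞) := by

  classical
  -- littleo thresholds
  have hzex : ∀ n : ℕ, ∃ zn : ℝ, ∀ t, zn ≤ t →
      tailR Gstar t ≤ (1/2)^n * tailR Fstar t := by
    intro n
    have hev := hlittleo.def (c := (1/2)^n) (by positivity)
    rw [Filter.eventually_atTop] at hev
    obtain ⟨a, ha⟩ := hev
    refine ⟨a, fun t ht => ?_⟩
    have := ha t ht
    rwa [Real.norm_eq_abs, Real.norm_eq_abs, abs_of_nonneg ENNReal.toReal_nonneg,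
      abs_of_nonneg ENNReal.toReal_nonneg] at this
  choose z hzspec using hzex
  -- the recursive construction
  set nxt : ℕ → ℝ × ℝ × ℝ → ℝ × ℝ × ℝ := fun k q =>
    (q.1 + (step_exists hFheavy (z (k+1)) q.1 q.2.1 q.2.2).choose.2,
     q.2.1 + (step_exists hFheavy (z (k+1)) q.1 q.2.1 q.2.2).choose.1 *
       (step_exists hFheavy (z (k+1)) q.1 q.2.1 q.2.2).choose.2,
     (step_exists hFheavy (z (k+1)) q.1 q.2.1 q.2.2).choose.1) with hnxt
  set st : ℕ → ℝ × ℝ × ℝ := fun n => Nat.rec ((0:ℝ), max (z 0) 0, (1:ℝ)) nxt n with hst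
  set T : ℕ → ℝ := fun n => (st n).1 with hT
  set v : ℕ → ℝ := fun n => (st n).2.1 with hv
  set sl : ℕ → ℝ := fun n => (st (n+1)).2.2 with hsl
  have hspec : ∀ n : ℕ, (st n).2.2 < sl n ∧ 0 < sl n ∧ T n < T (n+1) ∧
      v (n+1) = v n + sl n * (T (n+1) - T n) ∧
      (∫ x in T n..T (n+1), phi Fstar (T n) (v n) (sl n) x) = 1 ∧
      z (n+1) ≤ v (n+1) := by
    intro n
    obtain ⟨h1, h2, h3, h4, h5⟩ :=
      (step_exists (μ := Fstar) hFheavy (z (n+1)) (st n).1 (st n).2.1 (st n).2.2).choose_spec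
    have hTeq : T (n+1) = T n +
        (step_exists (μ := Fstar) hFheavy (z (n+1)) (st n).1 (st n).2.1 (st n).2.2).choose.2 := rfl
    have hveq : v (n+1) = v n +
        (step_exists (μ := Fstar) hFheavy (z (n+1)) (st n).1 (st n).2.1 (st n).2.2).choose.1 *
        (step_exists (μ := Fstar) hFheavy (z (n+1)) (st n).1 (st n).2.1 (st n).2.2).choose.2 := rfl
    have hsleq : sl n =
        (step_exists (μ := Fstar) hFheavy (z (n+1)) (st n).1 (st n).2.1 (st n).2.2).choose.1 := rfl
    refine ⟨h1, h2, by rw [hTeq]; linarith, by rw [hveq, hsleq, hTeq]; ring, ?_, by simpa using h5⟩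
    rw [hTeq, hsleq]
    exact h4
  have hT0 : T 0 = 0 := rfl
  have hv0 : v 0 = max (z 0) 0 := rfl
  have hslpos : ∀ n, 0 < sl n := fun n => (hspec n).2.1
  have hslmono : ∀ n, sl n < sl (n+1) := fun n => (hspec (n+1)).1
  have hTlt : ∀ n, T n < T (n+1) := fun n => (hspec n).2.2.1
  have hTmono : StrictMono T := strictMono_nat_of_lt_succ hTlt
  have hvrec : ∀ n, v (n+1) = v n + sl n * (T (n+1) - T n) := fun n => (hspec n).2.2.2.1
  have hint : ∀ n, (∫ x in T n..T (n+1), phi Fstar (T n) (v n) (sl n) x) = 1 :=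
    fun n => (hspec n).2.2.2.2.1
  have hzv : ∀ n, z n ≤ v n := by
    intro n
    cases n with
    | zero => rw [hv0]; exact le_max_left _ _
    | succ k => exact (hspec k).2.2.2.2.2
  -- T n tends to infinity
  have hexpT : ∀ n : ℕ, (n:ℝ) + 1 ≤ Real.exp (T n) := by
    intro n
    induction n with
    | zero => simp [hT0]
    | succ k ih =>
      have h1 := hint k
      have h2 : (1:ℝ) ≤ Real.exp (T (k+1)) - Real.exp (T k) := by
        rw [← h1]
        exact J_le (T k) (v k) (hslpos k).le (hTlt k).le
      push_cast
      linarith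
  have hTtop : ∀ x : ℝ, ∃ n : ℕ, x < T (n+1) := by
    intro x
    refine ⟨⌈Real.exp x⌉₊, ?_⟩
    have h1 : Real.exp x ≤ (⌈Real.exp x⌉₊ : ℝ) := Nat.le_ceil _
    have h2 := hexpT (⌈Real.exp x⌉₊ + 1)
    have : Real.exp x < Real.exp (T (⌈Real.exp x⌉₊ + 1)) := by push_cast at h2; linarith
    exact exp_lt_exp.1 this
  -- the function h
  set idx : ℝ → ℕ := fun x => Nat.find (hTtop x) with hidx
  have hidx1 : ∀ x, x < T (idx x + 1) := fun x => Nat.find_spec (hTtop x)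
  have hidx2 : ∀ x, idx x ≠ 0 → T (idx x) ≤ x := by
    intro x hne
    have := Nat.find_min (hTtop x) (m := idx x - 1) (Nat.sub_lt (Nat.pos_of_ne_zero hne) one_pos)
    push_neg at this
    have heq : idx x - 1 + 1 = idx x := by omega
    rwa [heq] at this
  set line : ℕ → ℝ → ℝ := fun n x => v n + sl n * (x - T n) with hline
  set h : ℝ → ℝ := fun x => line (idx x) x with hh
  have hlineSucc : ∀ n x, line (n+1) x - line n x = (sl (n+1) - sl n) * (x - T (n+1)) := by
    intro n x
    simp only [hline]
    rw [hvrec n]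
    ring
  have haux_up : ∀ n k x, n ≤ k → T k ≤ x → line n x ≤ line k x := by
    intro n k
    induction k with
    | zero => intro x hnk _; interval_cases n; exact le_refl _
    | succ m ih =>
      intro x hnk hTx
      rcases Nat.lt_or_ge n (m+1) with hlt | hge
      · have hnm : n ≤ m := Nat.lt_succ_iff.1 hlt
        have hTm : T m ≤ x := ((hTmono.monotone (Nat.le_succ m)).trans hTx)
        refine (ih x hnm hTm).trans ?_
        have := hlineSucc m x
        nlinarith [hslmono m, sub_nonneg.2 hTx]
      · have : n = m+1 := le_antisymm hnk hge
        rw [this]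
  have haux_down : ∀ n m x, m ≤ n → x ≤ T (m+1) → line n x ≤ line m x := by
    intro n
    induction n with
    | zero => intro m x hmn _; interval_cases m; exact le_refl _
    | succ k ih =>
      intro m x hmn hTx
      rcases Nat.lt_or_ge m (k+1) with hlt | hge
      · have hmk : m ≤ k := Nat.lt_succ_iff.1 hlt
        have hTx' : x ≤ T (k+1) := hTx.trans (hTmono.monotone (Nat.succ_le_succ hmk))
        refine le_trans ?_ (ih m x hmk hTx)
        have := hlineSucc k x
        nlinarith [hslmono k, sub_nonneg.2 hTx']
      · have : m = k+1 := le_antisymm (by omega) hge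
        rw [this]
  have hLle : ∀ n x, line n x ≤ h x := by
    intro n x
    rcases Nat.lt_or_ge (idx x) n with hlt | hge
    · exact haux_down n (idx x) x hlt.le (hidx1 x).le
    · rcases Nat.eq_zero_or_pos (idx x) with h0 | hpos
      · have hn0 : n = 0 := by omega
        exact le_of_eq (by rw [hn0, ← h0])
      · exact haux_up n (idx x) x hge (hidx2 x (Nat.pos_iff_ne_zero.1 hpos))
  have hblock : ∀ n x, T n < x → x ≤ T (n+1) → h x = line n x := by
    intro n x hx1 hx2
    refine le_antisymm ?_ (hLle n x)
    rcases Nat.lt_or_ge (idx x) n with hlt | hge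
    · exact haux_up (idx x) n x hlt.le hx1.le
    · rcases Nat.lt_or_ge n (idx x) with hlt' | hge'
      · exact haux_down (idx x) n x hlt'.le hx2
      · have hxn : idx x = n := by omega
        exact le_of_eq (by rw [← hxn])
  -- the cover of (0, ∞) by the blocks
  have hcover : Set.Ioi (0:ℝ) = ⋃ n : ℕ, Set.Ioc (T n) (T (n+1)) := by
    ext x
    simp only [Set.mem_Ioi, Set.mem_iUnion, Set.mem_Ioc]
    constructor
    · intro hx
      have hex : ∃ n : ℕ, x ≤ T (n+1) := (hTtop x).imp (fun n hn => hn.le)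
      refine ⟨Nat.find hex, ?_, Nat.find_spec hex⟩
      rcases Nat.eq_zero_or_pos (Nat.find hex) with h0 | hpos
      · rw [h0, hT0]; exact hx
      · have hmin := Nat.find_min hex (m := Nat.find hex - 1) (Nat.sub_lt hpos one_pos)
        push_neg at hmin
        have heq : Nat.find hex - 1 + 1 = Nat.find hex := by omega
        rwa [heq] at hmin
    · rintro ⟨n, hn1, _⟩
      have : T 0 ≤ T n := hTmono.monotone (Nat.zero_le n)
      rw [hT0] at this
      linarith
  have hdisj : Pairwise (Function.onFun Disjoint (fun n : ℕ => Set.Ioc (T n) (T (n+1)))) := by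
    have key : ∀ i j : ℕ, i < j →
        Disjoint (Set.Ioc (T i) (T (i+1))) (Set.Ioc (T j) (T (j+1))) := by
      intro i j hij
      refine Set.disjoint_left.2 (fun x hx hx' => ?_)
      have h1 : T (i+1) ≤ T j := hTmono.monotone hij
      linarith [hx.2, hx'.1]
    intro i j hij
    rcases hij.lt_or_gt with hlt | hlt
    · exact key i j hlt
    · exact (key j i hlt).symm
  -- block value of the F-integral
  have hFb : ∀ n : ℕ, (∫⁻ x in Set.Ioc (T n) (T (n+1)),
      ENNReal.ofReal (Real.exp x) * Fstar (Set.Ioi (h x))) = 1 := by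
    intro n
    have e1 : ∀ x ∈ Set.Ioc (T n) (T (n+1)),
        ENNReal.ofReal (Real.exp x) * Fstar (Set.Ioi (h x))
          = ENNReal.ofReal (phi Fstar (T n) (v n) (sl n) x) := by
      intro x hx
      rw [hblock n x hx.1 hx.2]
      rw [show phi Fstar (T n) (v n) (sl n) x
          = Real.exp x * tailR Fstar (line n x) from rfl]
      rw [ENNReal.ofReal_mul (exp_nonneg x), ofReal_tailR]
    rw [setLIntegral_congr_fun measurableSet_Ioc e1]
    have hInt : IntegrableOn (phi Fstar (T n) (v n) (sl n)) (Set.Ioc (T n) (T (n+1))) volume :=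
      (phi_intervalIntegrable (T n) (v n) (hslpos n).le (T n) (T (n+1))).1
    rw [← MeasureTheory.ofReal_integral_eq_lintegral_ofReal hInt
      (Filter.Eventually.of_forall (fun x => phi_nonneg _ _ _ x))]
    rw [show (∫ x in Set.Ioc (T n) (T (n+1)), phi Fstar (T n) (v n) (sl n) x)
        = ∫ x in T n..T (n+1), phi Fstar (T n) (v n) (sl n) x from
      (intervalIntegral.integral_of_le (hTlt n).le).symm]
    rw [hint n, ENNReal.ofReal_one]
  refine ⟨h, ?_, ?_, ?_, ?_, ?_⟩
  · -- strict monotonicity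
    intro x _ y _ hxy
    calc h x = line (idx x) x := rfl
      _ < line (idx x) y := by
          simp only [hline]
          have := hslpos (idx x)
          nlinarith
      _ ≤ h y := hLle _ _
  · -- convexity
    refine ⟨convex_Ici 0, fun x _ y _ a b ha hb hab => ?_⟩
    set m : ℕ := idx (a • x + b • y) with hm
    have hval : h (a • x + b • y) = line m (a • x + b • y) := rfl
    rw [hval]
    have hexp : line m (a • x + b • y) = a * line m x + b * line m y := by
      simp only [hline, smul_eq_mul]
      linear_combination (sl m * T m - v m) * hab
    rw [hexp]
    have h1 := mul_le_mul_of_nonneg_left (hLle m x) ha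
    have h2 := mul_le_mul_of_nonneg_left (hLle m y) hb
    simp only [smul_eq_mul]
    linarith
  · -- nonnegativity
    intro x hx
    have hx0 : (0:ℝ) ≤ x := hx
    have hl : 0 ≤ line 0 x := by
      simp only [hline]
      rw [hT0, hv0]
      have : 0 ≤ sl 0 * (x - 0) := mul_nonneg (hslpos 0).le (by linarith)
      have h0 : (0:ℝ) ≤ max (z 0) 0 := le_max_right _ _
      linarith
    exact hl.trans (hLle 0 x)
  · -- F integral diverges
    rw [hcover, lintegral_iUnion (fun n => measurableSet_Ioc) hdisj]
    simp only [hFb]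
    exact ENNReal.tsum_const_eq_top_of_ne_zero one_ne_zero
  · -- G integral converges
    have hGb : ∀ n : ℕ, (∫⁻ x in Set.Ioc (T n) (T (n+1)),
        ENNReal.ofReal (Real.exp x) * Gstar (Set.Ioi (h x)))
          ≤ ENNReal.ofReal ((1/2)^n) := by
      intro n
      have hpt : ∀ x ∈ Set.Ioc (T n) (T (n+1)),
          ENNReal.ofReal (Real.exp x) * Gstar (Set.Ioi (h x))
            ≤ ENNReal.ofReal ((1/2)^n) * (ENNReal.ofReal (Real.exp x) * Fstar (Set.Ioi (h x))) := by
        intro x hx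
        have hhx : z n ≤ h x := by
          rw [hblock n x hx.1 hx.2]
          have h1 : 0 ≤ sl n * (x - T n) := mul_nonneg (hslpos n).le (by linarith [hx.1])
          have h2 := hzv n
          simp only [hline]
          linarith
        have hG := hzspec n (h x) hhx
        have hGF : Gstar (Set.Ioi (h x)) ≤ ENNReal.ofReal ((1/2)^n) * Fstar (Set.Ioi (h x)) := by
          rw [← ofReal_tailR (μ := Gstar) (h x), ← ofReal_tailR (μ := Fstar) (h x),
            ← ENNReal.ofReal_mul (by positivity)]
          exact ENNReal.ofReal_le_ofReal hG
        calc ENNReal.ofReal (Real.exp x) * Gstar (Set.Ioi (h x))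
            ≤ ENNReal.ofReal (Real.exp x)
                * (ENNReal.ofReal ((1/2)^n) * Fstar (Set.Ioi (h x))) :=
              mul_le_mul_right hGF _
          _ = ENNReal.ofReal ((1/2)^n)
                * (ENNReal.ofReal (Real.exp x) * Fstar (Set.Ioi (h x))) := by ring
      calc (∫⁻ x in Set.Ioc (T n) (T (n+1)),
            ENNReal.ofReal (Real.exp x) * Gstar (Set.Ioi (h x)))
          ≤ ∫⁻ x in Set.Ioc (T n) (T (n+1)), ENNReal.ofReal ((1/2)^n)
              * (ENNReal.ofReal (Real.exp x) * Fstar (Set.Ioi (h x))) :=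
            setLIntegral_mono' measurableSet_Ioc hpt
        _ = ENNReal.ofReal ((1/2)^n) * ∫⁻ x in Set.Ioc (T n) (T (n+1)),
              ENNReal.ofReal (Real.exp x) * Fstar (Set.Ioi (h x)) :=
            lintegral_const_mul' _ _ ENNReal.ofReal_ne_top
        _ = ENNReal.ofReal ((1/2)^n) * 1 := by rw [hFb n]
        _ = ENNReal.ofReal ((1/2)^n) := mul_one _
    rw [hcover, lintegral_iUnion (fun n => measurableSet_Ioc) hdisj]
    have hle := ENNReal.tsum_le_tsum hGb
    have hgeo : (∑' n : ℕ, ENNReal.ofReal ((1/2)^n))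
        = (1 - ENNReal.ofReal (1/2))⁻¹ := by
      rw [show (fun n : ℕ => ENNReal.ofReal ((1/2)^n))
          = fun n : ℕ => (ENNReal.ofReal (1/2))^n from
        funext (fun n => ENNReal.ofReal_pow (by norm_num) n)]
      exact ENNReal.tsum_geometric _
    have hlt : (1 - ENNReal.ofReal (1/2))⁻¹ < ⊤ := by
      rw [ENNReal.inv_lt_top]
      have : ENNReal.ofReal (1/2) < 1 := ENNReal.ofReal_lt_one.2 (by norm_num)
      exact tsub_pos_of_lt this
    exact lt_of_le_of_lt (hle.trans_eq hgeo) hlt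
end
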